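/- arXiv:2410.12039 — 8 statements merged into one kernel-verified Lean document; each statement's English description precedes it below -/
import Mathlib

section
/- In the two-vertex multigraph G consisting of vertices a and b, one heavy edge of weight α between a and b, q light self-loops of weight β at a, and q light self-loops of weight β at b, with α > qβ ≥ 0 and symmetric additive utilities (an agent values an edge at its weight if incident, else 0), no orientation of G (i.e., no allocation in which every edge is assigned to one of its endvertices) is EFX: in every orientation some agent strongly envies the other. -/
/-- Bundle of an agent under a (total) orientation/allocation. -/
def bundleT {V E : Type*} [Fintype E] [DecidableEq V] [DecidableEq E]
    (π : E → V) (i : V) : Finset E :=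
  Finset.univ.filter (fun e => π e = i)

/-- Additive utility: an agent values an edge at its weight iff incident. -/
def util {V E : Type*} [DecidableEq V] (ends : E → V × V) (w : E → ℝ)
    (i : V) (S : Finset E) : ℝ :=
  ∑ e ∈ S, if (ends e).1 = i ∨ (ends e).2 = i then w e else 0

/-- Agent `i` strongly envies agent `j`. -/
def strongEnvyT {V E : Type*} [Fintype E] [DecidableEq V] [DecidableEq E]
    (ends : E → V × V) (w : E → ℝ) (π : E → V) (i j : V) : Prop :=
  ∃ e ∈ bundleT π j, util ends w i (bundleT π i) < util ends w i (bundleT π j \ {e})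

/-- Edges of the two-vertex instance: one heavy edge plus `q` light loops at
each of the two vertices. -/
abbrev E0 (q : ℕ) := Unit ⊕ (Bool × Fin q)

def ends0 {q : ℕ} : E0 q → Bool × Bool
  | Sum.inl _ => (false, true)
  | Sum.inr (v, _) => (v, v)

def w0 {q : ℕ} (α β : ℝ) : E0 q → ℝ
  | Sum.inl _ => α
  | Sum.inr _ => β

/-- the two-vertex multigraph with one heavy edge of weight `α`
between the vertices and `q` light self-loops of weight `β` at each vertex,
with `α > qβ ≥ 0`, admits no EFX orientation: in every orientation some agent
strongly envies the other. -/
theorem stmt0 (q : ℕ) (hq : 1 ≤ q) (α β : ℝ) (hβ : 0 ≤ β) (hαβ : (q : ℝ) * β < α)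
    (π : E0 q → Bool)
    (horient : ∀ e, π e = (ends0 e).1 ∨ π e = (ends0 e).2)
    (hloops : ∀ v k, π (Sum.inr (v, k)) = v) :
    ∃ i j : Bool, i ≠ j ∧ strongEnvyT ends0 (w0 α β) π i j := by
  obtain ⟨v, hv⟩ : ∃ v, π (Sum.inl ()) = v := ⟨_, rfl⟩
  refine ⟨!v, v, by simp, Sum.inr (v, ⟨0, hq⟩), ?_, ?_⟩
  · simp [bundleT, hloops]
  · have he : (Sum.inr (v, ⟨0, hq⟩) : E0 q) ∈ bundleT π v := by
      simp [bundleT, hloops]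
    have h1 : util ends0 (w0 α β) (!v) (bundleT π (!v)) = q * β := by
      simp only [util, bundleT, Finset.sum_filter, Fintype.sum_sum_type,
        Fintype.sum_prod_type, hloops, ends0, w0]
      cases v <;> simp [hv]
    have h2 : util ends0 (w0 α β) (!v) (bundleT π v \ {Sum.inr (v, ⟨0, hq⟩)}) = α := by
      rw [util, Finset.sum_sdiff_eq_sub (Finset.singleton_subset_iff.mpr he)]
      simp only [bundleT, Finset.sum_filter, Fintype.sum_sum_type,
        Fintype.sum_prod_type, hloops, ends0, w0, Finset.sum_singleton]
      cases v <;> simp [hv]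
    rw [h1, h2]; exact hαβ
end

section
/- For two agents with additive utility functions over a finite set of goods, there exists an EFX allocation of all goods to the two agents in which agent i does not envy agent j (i.e., u_i of i's bundle is at least u_i of j's bundle), and in which neither agent strongly envies the other. -/
open Finset

/-- Key lemma: for any nonnegative weight function there is a partition `(A, Aᶜ)`
where `A` is the (weakly) heavier side and removing any single element of `A`
makes it no heavier than `Aᶜ` (an EFX partition for this weight). -/
lemma exists_efx_cut {E : Type*} [Fintype E] [DecidableEq E] (w : E → ℝ)
    (hw : ∀ e, 0 ≤ w e) :
    ∃ A : Finset E, (∑ e ∈ Aᶜ, w e) ≤ (∑ e ∈ A, w e) ∧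
      ∀ e ∈ A, (∑ f ∈ A.erase e, w f) ≤ ∑ f ∈ Aᶜ, w f := by
  classical
  set v : Finset E → ℝ := fun A => ∑ e ∈ A, w e with hv
  have hvnonneg : ∀ A : Finset E, 0 ≤ v A := fun A => Finset.sum_nonneg fun e _ => hw e
  set S : Finset (Finset E) := Finset.univ.filter (fun A : Finset E => v Aᶜ ≤ v A) with hS
  have hSne : S.Nonempty := by
    refine ⟨Finset.univ, ?_⟩
    simp only [hS, Finset.mem_filter, Finset.mem_univ, true_and]
    simpa [hv] using hvnonneg Finset.univ
  obtain ⟨A₀, hA₀, h₀⟩ := S.exists_min_image v hSne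
  set T : Finset (Finset E) := S.filter (fun A => v A ≤ v A₀) with hT
  have hTne : T.Nonempty := ⟨A₀, by simp [hT, hA₀]⟩
  obtain ⟨A, hAT, hmin⟩ := T.exists_min_image Finset.card hTne
  rw [hT, Finset.mem_filter] at hAT
  obtain ⟨hAS, hAle⟩ := hAT
  have hAeq : v A = v A₀ := le_antisymm hAle (h₀ A hAS)
  have hAcle : v Aᶜ ≤ v A := by
    have := hAS; rw [hS, Finset.mem_filter] at this; exact this.2
  refine ⟨A, hAcle, ?_⟩
  intro e he
  by_contra hcon
  push_neg at hcon
  -- hcon : v Aᶜ < v (A.erase e)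
  have herase : v (A.erase e) = v A - w e := Finset.sum_erase_eq_sub he
  have hcompl : ((A.erase e)ᶜ : Finset E) = insert e Aᶜ := Finset.compl_erase
  have henotc : e ∉ (Aᶜ : Finset E) := by simp [he]
  have hvins : v ((A.erase e)ᶜ) = w e + v Aᶜ := by
    rw [hcompl]; exact Finset.sum_insert henotc
  by_cases hc : v ((A.erase e)ᶜ) ≤ v (A.erase e)
  · -- erasing gives a feasible set of no larger weight
    have hmem : A.erase e ∈ S := by
      rw [hS, Finset.mem_filter]; exact ⟨Finset.mem_univ _, hc⟩
    have h1 : v A₀ ≤ v (A.erase e) := h₀ _ hmem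
    have hwe0 : w e = 0 := by
      have : v A₀ ≤ v A - w e := by rwa [herase] at h1
      rw [hAeq] at this; nlinarith [hw e]
    have hTmem : A.erase e ∈ T := by
      rw [hT, Finset.mem_filter]
      exact ⟨hmem, by rw [herase, hwe0, hAeq]; linarith⟩
    have := hmin _ hTmem
    have hlt : (A.erase e).card < A.card := Finset.card_erase_lt_of_mem he
    omega
  · -- the complement of the erased set is feasible with strictly smaller weight
    push_neg at hc
    have hmem : (A.erase e)ᶜ ∈ S := by
      rw [hS, Finset.mem_filter]
      refine ⟨Finset.mem_univ _, ?_⟩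
      rw [compl_compl]
      exact le_of_lt hc
    have h1 : v A₀ ≤ v ((A.erase e)ᶜ) := h₀ _ hmem
    rw [hvins] at h1
    have hcon' : v Aᶜ < v (A.erase e) := hcon
    rw [herase, hAeq] at hcon'
    linarith

/-- Plaut–Roughgarden: for two agents with additive nonnegative
utilities (given by weights `wi`, `wj`) over a finite set of goods, there is an
EFX allocation `(Xi, Xiᶜ)` of all the goods in which agent `i` does not envy
agent `j`, and neither agent strongly envies the other. -/
theorem stmt2 {E : Type*} [Fintype E] [DecidableEq E] (wi wj : E → ℝ)
    (hwi : ∀ e, 0 ≤ wi e) (hwj : ∀ e, 0 ≤ wj e) :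
    ∃ Xi : Finset E,
      (∑ e ∈ Xiᶜ, wi e) ≤ (∑ e ∈ Xi, wi e) ∧
      (¬ ∃ e ∈ Xiᶜ, (∑ f ∈ Xi, wi f) < (∑ f ∈ Xiᶜ \ {e}, wi f)) ∧
      (¬ ∃ e ∈ Xi, (∑ f ∈ Xiᶜ, wj f) < (∑ f ∈ Xi \ {e}, wj f)) := by
  classical
  obtain ⟨A, hj1, hj2⟩ := exists_efx_cut wj hwj
  have hsub : ∀ (X : Finset E) (w : E → ℝ), (∀ e, 0 ≤ w e) → ∀ e,
      (∑ f ∈ X \ {e}, w f) ≤ ∑ f ∈ X, w f := by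
    intro X w hw e
    exact Finset.sum_le_sum_of_subset_of_nonneg (Finset.sdiff_subset) (fun x _ _ => hw x)
  by_cases h : (∑ e ∈ Aᶜ, wi e) ≤ ∑ e ∈ A, wi e
  · refine ⟨A, h, ?_, ?_⟩
    · rintro ⟨e, he, hlt⟩
      have := hsub Aᶜ wi hwi e
      linarith
    · rintro ⟨e, he, hlt⟩
      have := hj2 e he
      rw [← Finset.sdiff_singleton_eq_erase] at this
      linarith
  · push_neg at h
    refine ⟨Aᶜ, ?_, ?_, ?_⟩
    · rw [compl_compl]; exact le_of_lt h
    · rintro ⟨e, he, hlt⟩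
      rw [compl_compl] at he hlt
      have h1 := hsub A wi hwi e
      linarith
    · rintro ⟨e, he, hlt⟩
      rw [compl_compl] at hlt
      have h1 := hsub Aᶜ wj hwj e
      linarith
end

section
/- Let G be a bi-valued symmetric multigraph with edge weights α > β ≥ 0, and let K be a heavy component of G that is non-trivial and whose heavy edges induce a multigraph containing either a heavy self-loop or a cycle (i.e., the heavy edges do not induce a multitree). Then there exists a partial envy-free orientation π of K, orienting only heavy edges, such that every vertex i of K satisfies u_i(π_i) ≥ α and at most one oriented edge lies between each pair of vertices. -/
/-- Bundle of an agent under a partial orientation. -/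
def bundleP {V E : Type*} [Fintype E] [DecidableEq V] [DecidableEq E]
    (π : E → Option V) (i : V) : Finset E :=
  Finset.univ.filter (fun e => π e = some i)

/-- Reachability by paths of heavy edges. -/
def heavyReach {V E : Type*} (ends : E → V × V) (heavy : E → Bool) : V → V → Prop :=
  Relation.ReflTransGen (fun a b => ∃ e, heavy e = true ∧ (ends e = (a, b) ∨ ends e = (b, a)))

/-- The simple graph obtained by condensing the heavy edges. -/
def heavyGraph {V E : Type*} (ends : E → V × V) (heavy : E → Bool) : SimpleGraph V where
  Adj a b := a ≠ b ∧ ∃ e, heavy e = true ∧ (ends e = (a, b) ∨ ends e = (b, a))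
  symm := by
    constructor
    rintro a b ⟨hab, e, he, h⟩
    exact ⟨hab.symm, e, he, h.symm⟩
  loopless := by constructor; rintro a ⟨ha, -⟩; exact ha rfl

/-- Two edges join the same pair of vertices (are parallel). -/
def samePair {V E : Type*} (ends : E → V × V) (e e' : E) : Prop :=
  ends e = ends e' ∨ ends e = (ends e').swap

open SimpleGraph

lemma heavyReach_reachable {V E : Type*} (ends : E → V × V) (heavy : E → Bool) {a b : V}
    (h : heavyReach ends heavy a b) : (heavyGraph ends heavy).Reachable a b := by
  induction h with
  | refl => exact Reachable.refl a
  | tail _ step ih =>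
    rename_i x y _
    obtain ⟨e, he, hee⟩ := step
    by_cases hxy : x = y
    · exact hxy ▸ ih
    · exact ih.trans (Adj.reachable ⟨hxy, e, he, hee⟩)

lemma reachable_deleteEdges {V : Type*} {G : SimpleGraph V} {a b : V}
    (hab : (G.deleteEdges {s(a, b)}).Reachable a b) :
    ∀ {x y : V}, G.Reachable x y → (G.deleteEdges {s(a, b)}).Reachable x y := by
  intro x y hxy
  obtain ⟨p⟩ := hxy
  induction p with
  | nil => exact Reachable.refl _
  | cons h q ih =>
    rename_i u u' w'
    refine Reachable.trans ?_ ih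
    by_cases hc : s(u, u') = s(a, b)
    · rw [Sym2.eq_iff] at hc
      rcases hc with ⟨rfl, rfl⟩ | ⟨rfl, rfl⟩
      · exact hab
      · exact hab.symm
    · exact Adj.reachable (SimpleGraph.deleteEdges_adj.mpr ⟨h, by simpa using hc⟩)


lemma samePair_symm {V E : Type*} (ends : E → V × V) {e e' : E}
    (h : samePair ends e e') : samePair ends e' e := by
  rcases h with h | h
  · exact Or.inl h.symm
  · exact Or.inr (by rw [h, Prod.swap_swap])

lemma construct {V E : Type*} [Fintype E] [DecidableEq V] [DecidableEq E]
    (ends : E → V × V) (heavy : E → Bool) (α β : ℝ) (hβ : 0 ≤ β) (hαβ : β < α)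
    (w : E → ℝ) (hw : ∀ e, w e = if heavy e then α else β)
    (K : Finset V) (H' : SimpleGraph V)
    (hsub : ∀ x y, H'.Adj x y → ∃ e, heavy e = true ∧ (ends e = (x, y) ∨ ends e = (y, x)))
    (r : V) (hr : r ∈ K) (e0 : E) (he0 : heavy e0 = true)
    (hre0 : r = (ends e0).1 ∨ r = (ends e0).2)
    (he0K : (ends e0).1 ∈ K ∧ (ends e0).2 ∈ K)
    (he0pair : ∀ x y, H'.Adj x y → ends e0 ≠ (x, y) ∧ ends e0 ≠ (y, x))
    (hreach : ∀ i ∈ K, H'.Reachable i r)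
    (hKcl : ∀ x y, x ∈ K → H'.Adj x y → y ∈ K) :
    ∃ π : E → Option V,
      (∀ e v, π e = some v → v = (ends e).1 ∨ v = (ends e).2) ∧
      (∀ e, π e ≠ none → heavy e = true ∧ (ends e).1 ∈ K ∧ (ends e).2 ∈ K) ∧
      (∀ i j : V, util ends w i (bundleP π j) ≤ util ends w i (bundleP π i)) ∧
      (∀ i ∈ K, α ≤ util ends w i (bundleP π i)) ∧
      (∀ e e', π e ≠ none → π e' ≠ none → samePair ends e e' → e = e') := by
  classical
  have hα : 0 < α := hβ.trans_lt hαβ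
  -- select a "parent edge" for every non-root vertex of K
  have hsel : ∀ i, i ∈ K → i ≠ r → ∃ q : E × V,
      heavy q.1 = true ∧ (ends q.1 = (i, q.2) ∨ ends q.1 = (q.2, i)) ∧
      H'.Adj i q.2 ∧ H'.dist q.2 r < H'.dist i r := by
    intro i hi hir
    obtain ⟨p, hp⟩ := (hreach i hi).exists_walk_length_eq_dist
    revert hp
    cases p with
    | nil => exact fun _ => absurd rfl hir
    | cons h q =>
      intro hp
      rename_i j
      obtain ⟨e, he, hee⟩ := hsub i j h
      refine ⟨(e, j), he, hee, h, ?_⟩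
      show H'.dist j r < H'.dist i r
      have h1 : H'.dist j r ≤ q.length := SimpleGraph.dist_le q
      have h2 : q.length + 1 = H'.dist i r := by
        rw [← hp, SimpleGraph.Walk.length_cons]
      omega
  obtain ⟨f, hf⟩ : ∃ f : V → E × V, ∀ i, i ∈ K → i ≠ r →
      heavy (f i).1 = true ∧ (ends (f i).1 = (i, (f i).2) ∨ ends (f i).1 = ((f i).2, i)) ∧
      H'.Adj i (f i).2 ∧ H'.dist (f i).2 r < H'.dist i r := by
    refine ⟨fun i => if h : i ∈ K ∧ i ≠ r then (hsel i h.1 h.2).choose else (e0, r),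
      fun i h1 h2 => ?_⟩
    simp only [dif_pos (And.intro h1 h2)]
    exact (hsel i h1 h2).choose_spec
  have f_ne_e0 : ∀ i, i ∈ K → i ≠ r → (f i).1 ≠ e0 := by
    intro i h1 h2 hcon
    obtain ⟨-, h4, h3, -⟩ := hf i h1 h2
    obtain ⟨ha, hb⟩ := he0pair i (f i).2 h3
    rw [hcon] at h4
    rcases h4 with h4 | h4
    · exact ha h4
    · exact hb h4
  have e0_not_f : ∀ i, i ∈ K → i ≠ r → ¬ samePair ends e0 (f i).1 := by
    intro i h1 h2 hsp
    obtain ⟨-, h4, h3, -⟩ := hf i h1 h2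
    obtain ⟨ha, hb⟩ := he0pair i (f i).2 h3
    rcases hsp with h | h <;> rcases h4 with h4 | h4
    · rw [h4] at h; exact ha h
    · rw [h4] at h; exact hb h
    · rw [h4, Prod.swap_prod_mk] at h; exact hb h
    · rw [h4, Prod.swap_prod_mk] at h; exact ha h
  have pair_distinct : ∀ i i', i ∈ K → i ≠ r → i' ∈ K → i' ≠ r →
      samePair ends (f i).1 (f i').1 → i = i' := by
    intro i i' h1 h2 h1' h2' hsp
    obtain ⟨-, h4, h3, h5⟩ := hf i h1 h2
    obtain ⟨-, h4', h3', h5'⟩ := hf i' h1' h2'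
    have key : (i = i' ∧ (f i).2 = (f i').2) ∨ (i = (f i').2 ∧ (f i).2 = i') := by
      rcases hsp with h | h <;> rcases h4 with h4 | h4 <;> rcases h4' with h4' | h4' <;>
        rw [h4, h4'] at h <;> simp only [Prod.swap_prod_mk, Prod.mk.injEq] at h <;> tauto
    rcases key with ⟨h, -⟩ | ⟨ha, hb⟩
    · exact h
    · rw [← ha] at h5'
      rw [hb] at h5
      omega
  -- the orientation
  obtain ⟨π, hchar⟩ : ∃ π : E → Option V, ∀ e v, π e = some v ↔
      ((e = e0 ∧ v = r) ∨ (v ∈ K ∧ v ≠ r ∧ (f v).1 = e)) := by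
    refine ⟨fun e => if e = e0 then some r
      else if h : ∃ i, i ∈ K ∧ i ≠ r ∧ (f i).1 = e then some h.choose else none,
      fun e v => ?_⟩
    show (if e = e0 then some r
      else if h : ∃ i, i ∈ K ∧ i ≠ r ∧ (f i).1 = e then some h.choose else none) = some v ↔ _
    by_cases he : e = e0
    · rw [if_pos he]
      simp only [Option.some.injEq]
      constructor
      · intro h; exact Or.inl ⟨he, h.symm⟩
      · rintro (⟨-, rfl⟩ | ⟨h1, h2, h3⟩)
        · rfl
        · rw [he] at h3
          exact absurd h3 (f_ne_e0 v h1 h2)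
    · rw [if_neg he]
      by_cases hex : ∃ i, i ∈ K ∧ i ≠ r ∧ (f i).1 = e
      · rw [dif_pos hex]
        obtain ⟨i0mem, i0ne, i0eq⟩ := hex.choose_spec
        simp only [Option.some.injEq]
        constructor
        · rintro rfl; exact Or.inr ⟨i0mem, i0ne, i0eq⟩
        · rintro (⟨rfl, -⟩ | ⟨h1, h2, h3⟩)
          · exact absurd rfl he
          · exact pair_distinct _ _ i0mem i0ne h1 h2 (by rw [i0eq, h3]; exact Or.inl rfl)
      · rw [dif_neg hex]
        constructor
        · intro h; exact absurd h (by simp)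
        · rintro (⟨rfl, -⟩ | ⟨h1, h2, h3⟩)
          · exact absurd rfl he
          · exact absurd ⟨v, h1, h2, h3⟩ hex
  have hprops : ∀ e, π e ≠ none → heavy e = true ∧ (ends e).1 ∈ K ∧ (ends e).2 ∈ K := by
    intro e hne
    obtain ⟨v, hv⟩ := Option.ne_none_iff_exists'.mp hne
    rcases (hchar e v).mp hv with ⟨rfl, -⟩ | ⟨h1, h2, h3⟩
    · exact ⟨he0, he0K.1, he0K.2⟩
    · obtain ⟨hh, h4, h3', -⟩ := hf v h1 h2
      subst h3
      have hj : (f v).2 ∈ K := hKcl v _ h1 h3'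
      rcases h4 with h4 | h4 <;> rw [h4]
      · exact ⟨hh, h1, hj⟩
      · exact ⟨hh, hj, h1⟩
  -- bundles
  have hbr : bundleP π r = {e0} := by
    ext e
    simp only [bundleP, Finset.mem_filter, Finset.mem_univ, true_and, Finset.mem_singleton]
    rw [hchar]
    constructor
    · rintro (⟨rfl, -⟩ | ⟨-, hne, -⟩)
      · rfl
      · exact absurd rfl hne
    · rintro rfl; exact Or.inl ⟨rfl, rfl⟩
  have hbi : ∀ i, i ∈ K → i ≠ r → bundleP π i = {(f i).1} := by
    intro i h1 h2
    ext e
    simp only [bundleP, Finset.mem_filter, Finset.mem_univ, true_and, Finset.mem_singleton]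
    rw [hchar]
    constructor
    · rintro (⟨-, rfl⟩ | ⟨-, -, h3⟩)
      · exact absurd rfl h2
      · exact h3.symm
    · rintro rfl; exact Or.inr ⟨h1, h2, rfl⟩
  have hbo : ∀ i, i ∉ K → bundleP π i = ∅ := by
    intro i hi
    ext e
    simp only [bundleP, Finset.mem_filter, Finset.mem_univ, true_and,
      Finset.notMem_empty, iff_false]
    rw [hchar]
    rintro (⟨-, rfl⟩ | ⟨h1, -, -⟩)
    · exact hi hr
    · exact hi h1
  -- utility facts
  have util_single : ∀ (i : V) (e : E),
      util ends w i {e} = if (ends e).1 = i ∨ (ends e).2 = i then w e else 0 := by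
    intro i e; simp [util]
  have util_empty : ∀ i : V, util ends w i (∅ : Finset E) = 0 := by
    intro i; simp [util]
  have hone : ∀ (i : V) (e : E), heavy e = true → ((ends e).1 = i ∨ (ends e).2 = i) →
      util ends w i {e} = α := by
    intro i e hh hinc
    rw [util_single, if_pos hinc, hw, hh]
    simp
  have hle : ∀ (i : V) (e : E), heavy e = true → util ends w i {e} ≤ α := by
    intro i e hh
    rw [util_single, hw, hh]
    simp only [if_true]
    split_ifs
    · exact le_refl α
    · exact le_of_lt hα
  have hzero : ∀ (i : V) (e : E), i ∉ K → (ends e).1 ∈ K → (ends e).2 ∈ K →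
      util ends w i {e} = 0 := by
    intro i e hi h1 h2
    rw [util_single, if_neg]
    rintro (h | h)
    · exact hi (h ▸ h1)
    · exact hi (h ▸ h2)
  have ui_self : ∀ i ∈ K, util ends w i (bundleP π i) = α := by
    intro i hi
    by_cases hir : i = r
    · subst hir
      rw [hbr]
      refine hone i e0 he0 ?_
      rcases hre0 with h | h
      · exact Or.inl h.symm
      · exact Or.inr h.symm
    · rw [hbi i hi hir]
      obtain ⟨hh, h4, -, -⟩ := hf i hi hir
      refine hone i _ hh ?_
      rcases h4 with h4 | h4 <;> rw [h4]
      · exact Or.inl rfl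
      · exact Or.inr rfl
  have ub_any : ∀ i j : V, util ends w i (bundleP π j) ≤ α := by
    intro i j
    by_cases hj : j ∈ K
    · by_cases hjr : j = r
      · subst hjr; rw [hbr]; exact hle i e0 he0
      · rw [hbi j hj hjr]
        exact hle i _ (hf j hj hjr).1
    · rw [hbo j hj, util_empty]
      exact le_of_lt hα
  have ub_out : ∀ i : V, i ∉ K → ∀ j : V, util ends w i (bundleP π j) ≤ 0 := by
    intro i hi j
    by_cases hj : j ∈ K
    · by_cases hjr : j = r
      · subst hjr; rw [hbr, hzero i e0 hi he0K.1 he0K.2]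
      · rw [hbi j hj hjr]
        have hne : π (f j).1 ≠ none := by
          rw [(hchar (f j).1 j).mpr (Or.inr ⟨hj, hjr, rfl⟩)]
          simp
        obtain ⟨-, ha, hb⟩ := hprops _ hne
        rw [hzero i _ hi ha hb]
    · rw [hbo j hj, util_empty]
  refine ⟨π, ?_, hprops, ?_, ?_, ?_⟩
  · -- endpoints
    intro e v hv
    rcases (hchar e v).mp hv with ⟨rfl, rfl⟩ | ⟨h1, h2, h3⟩
    · exact hre0
    · obtain ⟨-, h4, -, -⟩ := hf v h1 h2
      subst h3
      rcases h4 with h4 | h4 <;> rw [h4]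
      · exact Or.inl rfl
      · exact Or.inr rfl
  · -- envy-freeness
    intro i j
    by_cases hi : i ∈ K
    · rw [ui_self i hi]; exact ub_any i j
    · rw [hbo i hi, util_empty]; exact ub_out i hi j
  · -- utility at least α
    intro i hi
    rw [ui_self i hi]
  · -- at most one edge per pair
    have form : ∀ e, π e ≠ none → e = e0 ∨ ∃ i, i ∈ K ∧ i ≠ r ∧ (f i).1 = e := by
      intro e h
      obtain ⟨v, hv⟩ := Option.ne_none_iff_exists'.mp h
      rcases (hchar e v).mp hv with ⟨h, -⟩ | ⟨a, b, c⟩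
      · exact Or.inl h
      · exact Or.inr ⟨v, a, b, c⟩
    intro e e' hne hne' hsp
    rcases form e hne with rfl | ⟨i, h1, h2, rfl⟩ <;>
      rcases form e' hne' with rfl | ⟨i', h1', h2', rfl⟩
    · rfl
    · exact absurd hsp (e0_not_f i' h1' h2')
    · exact absurd (samePair_symm ends hsp) (e0_not_f i h1 h2)
    · rw [pair_distinct i i' h1 h2 h1' h2' hsp]

/-- let `K` be a non-trivial heavy component of a bi-valued
symmetric multigraph whose heavy edges contain a heavy self-loop or a cycle
(so they do not induce a multitree). Then there is a partial envy-free
orientation of `K`, orienting only heavy edges (with both ends in `K`), giving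
every vertex of `K` utility at least `α`, and orienting at most one edge
between each pair of vertices. -/
theorem stmt7 {V E : Type*} [Fintype E] [DecidableEq V] [DecidableEq E]
    (ends : E → V × V) (heavy : E → Bool) (α β : ℝ) (hβ : 0 ≤ β) (hαβ : β < α)
    (w : E → ℝ) (hw : ∀ e, w e = if heavy e then α else β)
    (K : Finset V)
    -- K is a heavy component:
    (hconn : ∀ a ∈ K, ∀ b ∈ K, heavyReach ends heavy a b)
    (hmax : ∀ a ∈ K, ∀ b, heavyReach ends heavy a b → b ∈ K)
    -- K is non-trivial:
    (hnontriv : ∃ a ∈ K, ∃ b ∈ K, a ≠ b)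
    -- the heavy edges of K contain a heavy self-loop or a cycle:
    (hnotree : (∃ e, ∃ v ∈ K, heavy e = true ∧ ends e = (v, v)) ∨
        (∃ v ∈ K, ∃ p : (heavyGraph ends heavy).Walk v v, p.IsCycle)) :
    ∃ π : E → Option V,
      (∀ e v, π e = some v → v = (ends e).1 ∨ v = (ends e).2) ∧
      (∀ e, π e ≠ none → heavy e = true ∧ (ends e).1 ∈ K ∧ (ends e).2 ∈ K) ∧
      (∀ i j : V, util ends w i (bundleP π j) ≤ util ends w i (bundleP π i)) ∧
      (∀ i ∈ K, α ≤ util ends w i (bundleP π i)) ∧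
      (∀ e e', π e ≠ none → π e' ≠ none → samePair ends e e' → e = e') := by
  classical
  rcases hnotree with ⟨e0, v, hv, he0, hloop⟩ | ⟨v, hv, p, hcyc⟩
  · -- self-loop case
    refine construct ends heavy α β hβ hαβ w hw K (heavyGraph ends heavy)
      (fun x y h => h.2) v hv e0 he0 ?_ ?_ ?_ ?_ ?_
    · left; rw [hloop]
    · rw [hloop]; exact ⟨hv, hv⟩
    · intro x y hxy
      constructor <;> intro hcon <;> rw [hloop] at hcon
      · obtain ⟨h1, h2⟩ := Prod.mk.injEq .. ▸ hcon
        exact hxy.ne (h1.symm.trans h2)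
      · obtain ⟨h1, h2⟩ := Prod.mk.injEq .. ▸ hcon
        exact hxy.ne (h2.symm.trans h1)
    · exact fun i hi => heavyReach_reachable ends heavy (hconn i hi v hv)
    · exact fun x y hx hxy => hmax x hx y (Relation.ReflTransGen.single hxy.2)
  · -- cycle case
    revert hcyc
    cases p with
    | nil => exact fun hcyc => absurd hcyc SimpleGraph.Walk.IsCycle.not_of_nil
    | cons hadj q =>
      intro hcyc
      rename_i b
      have hs : s(v, b) ∉ q.edges := by
        have hnd := hcyc.edges_nodup
        rw [SimpleGraph.Walk.edges_cons] at hnd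
        exact (List.nodup_cons.mp hnd).1
      have hvb' : ((heavyGraph ends heavy).deleteEdges {s(v, b)}).Reachable v b :=
        Reachable.symm ⟨q.toDeleteEdge s(v, b) hs⟩
      obtain ⟨e0, he0, hee⟩ := hadj.2
      have hb : b ∈ K := hmax v hv b (Relation.ReflTransGen.single hadj.2)
      refine construct ends heavy α β hβ hαβ w hw K
        ((heavyGraph ends heavy).deleteEdges {s(v, b)})
        (fun x y h => ((SimpleGraph.deleteEdges_adj.mp h).1).2) v hv e0 he0 ?_ ?_ ?_ ?_ ?_
      · rcases hee with h | h <;> rw [h]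
        · exact Or.inl rfl
        · exact Or.inr rfl
      · rcases hee with h | h <;> rw [h]
        · exact ⟨hv, hb⟩
        · exact ⟨hb, hv⟩
      · intro x y hxy
        have hnotin := (SimpleGraph.deleteEdges_adj.mp hxy).2
        constructor <;> intro hcon <;> apply hnotin <;>
          rw [Set.mem_singleton_iff, Sym2.eq_iff] <;>
          rcases hee with h | h <;> rw [h] at hcon <;>
          obtain ⟨h1, h2⟩ := Prod.mk.injEq .. ▸ hcon
        · exact Or.inl ⟨h1.symm, h2.symm⟩
        · exact Or.inr ⟨h1.symm, h2.symm⟩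
        · exact Or.inr ⟨h2.symm, h1.symm⟩
        · exact Or.inl ⟨h2.symm, h1.symm⟩
      · exact fun i hi => reachable_deleteEdges hvb'
          (heavyReach_reachable ends heavy (hconn i hi v hv))
      · exact fun x y hx hxy =>
          hmax x hx y (Relation.ReflTransGen.single ((SimpleGraph.deleteEdges_adj.mp hxy).1).2)
end

section
/- Let G be a bi-valued symmetric multigraph with weights α > β ≥ 0 and let π' be a partial envy-free orientation of G. Let i ≠ j be vertices such that π' orients at most one edge between i and j, and suppose either (1) u_i(π'_i) ≥ α and u_j(π'_j) ≥ α, or (2) u_i(π'_i) ≥ β, u_j(π'_j) ≥ β, and all edges between i and j are light. Then there exists an envy-free extension π of π' in which all edges between i and j, and all self-loops at i and at j, are oriented. -/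
/-- The set of (non-loop) edges between two distinct vertices. -/
def edgesBetween {V E : Type*} [Fintype E] [DecidableEq V] [DecidableEq E]
    (ends : E → V × V) (i j : V) : Finset E :=
  Finset.univ.filter (fun e => ends e = (i, j) ∨ ends e = (j, i))

/-- extension lemma. Given a partial envy-free orientation `π'`
of a bi-valued symmetric multigraph that orients at most one edge between
distinct vertices `i` and `j`, if (1) both `i` and `j` already receive utility
at least `α`, or (2) both receive at least `β` and all edges between `i` and
`j` are light, then `π'` extends to an envy-free partial orientation that
orients all edges between `i` and `j` and all self-loops at `i` and `j`. -/
theorem stmt9 {V E : Type*} [Fintype E] [DecidableEq V] [DecidableEq E]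
    (ends : E → V × V) (heavy : E → Bool) (α β : ℝ) (hβ : 0 ≤ β) (hαβ : β < α)
    (w : E → ℝ) (hw : ∀ e, w e = if heavy e then α else β)
    (π' : E → Option V)
    (horient : ∀ e v, π' e = some v → v = (ends e).1 ∨ v = (ends e).2)
    (hEF : ∀ i j : V, util ends w i (bundleP π' j) ≤ util ends w i (bundleP π' i))
    (i j : V) (hij : i ≠ j)
    (hone : (((edgesBetween ends i j).filter (fun e => π' e ≠ none)).card ≤ 1))
    (hcond :
      (α ≤ util ends w i (bundleP π' i) ∧ α ≤ util ends w j (bundleP π' j)) ∨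
      (β ≤ util ends w i (bundleP π' i) ∧ β ≤ util ends w j (bundleP π' j) ∧
        ∀ e ∈ edgesBetween ends i j, heavy e = false)) :
    ∃ π : E → Option V,
      -- π is a partial orientation extending π':
      (∀ e v, π e = some v → v = (ends e).1 ∨ v = (ends e).2) ∧
      (∀ e v, π' e = some v → π e = some v) ∧
      -- π is envy-free:
      (∀ a b : V, util ends w a (bundleP π b) ≤ util ends w a (bundleP π a)) ∧
      -- all edges between i and j are oriented:
      (∀ e ∈ edgesBetween ends i j, π e ≠ none) ∧
      -- all self-loops at i and at j are oriented:
      (∀ e, ends e = (i, i) ∨ ends e = (j, j) → π e ≠ none) := by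
  classical
  have hα0 : (0:ℝ) < α := lt_of_le_of_lt hβ hαβ
  have hw0 : ∀ e, 0 ≤ w e := by
    intro e; rw [hw]; split
    · exact le_of_lt hα0
    · exact hβ
  have hutil : ∀ (p : E → Option V) (a b : V),
      util ends w a (bundleP p b)
        = ∑ e : E, if p e = some b then
            (if (ends e).1 = a ∨ (ends e).2 = a then w e else 0) else 0 := by
    intro p a b
    rw [util, bundleP, Finset.sum_filter]
  have htnn : ∀ (a : V) (e : E),
      (0:ℝ) ≤ (if (ends e).1 = a ∨ (ends e).2 = a then w e else 0) := by
    intro a e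
    split
    · exact hw0 e
    · exact le_rfl
  have hite0 : ∀ (P : Prop) [inst : Decidable P] (x : ℝ), 0 ≤ x → (0:ℝ) ≤ if P then x else 0 := by
    intro P inst x hx
    split
    · exact hx
    · exact le_rfl
  have hunn : ∀ (p : E → Option V) (a b : V),
      0 ≤ util ends w a (bundleP p b) := by
    intro p a b
    rw [hutil]
    refine Finset.sum_nonneg fun e _ => ?_
    split
    · exact htnn a e
    · exact le_rfl
  -- the unoriented edges between i and j
  set U : Finset E := (edgesBetween ends i j).filter (fun e => π' e = none) with hUdef
  have hUmem : ∀ e, e ∈ U ↔ ((ends e = (i, j) ∨ ends e = (j, i)) ∧ π' e = none) := by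
    intro e
    rw [hUdef]
    simp [edgesBetween]
  set Hs : Finset E := U.filter (fun e => heavy e = true) with hHdef
  set Ls : Finset E := U.filter (fun e => ¬ heavy e = true) with hLdef
  set ui := util ends w i (bundleP π' i) with huidef
  set uj := util ends w j (bundleP π' j) with hujdef
  set ci := util ends w i (bundleP π' j) with hcidef
  set cj := util ends w j (bundleP π' i) with hcjdef
  have hciui : ci ≤ ui := hEF i j
  have hcjuj : cj ≤ uj := hEF j i
  have hcinn : 0 ≤ ci := hunn π' i j
  have hcjnn : 0 ≤ cj := hunn π' j i
  set h : ℕ := Hs.card with hhdef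
  set l : ℕ := Ls.card with hldef
  -- Case hypotheses in usable form
  have hcase : (α ≤ ui ∧ α ≤ uj) ∨ (β ≤ ui ∧ β ≤ uj ∧ h = 0) := by
    rcases hcond with h1 | h2
    · exact Or.inl h1
    · refine Or.inr ⟨h2.1, h2.2.1, ?_⟩
      rw [hhdef, Finset.card_eq_zero, hHdef]
      rw [Finset.eq_empty_iff_forall_notMem]
      intro e he
      rw [Finset.mem_filter] at he
      have heU := (hUmem e).1 he.1
      have : heavy e = false := by
        refine h2.2.2 e ?_
        rw [edgesBetween, Finset.mem_filter]
        exact ⟨Finset.mem_univ e, heU.1⟩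
      rw [this] at he
      exact absurd he.2 (by simp)
  -- ci and cj as sums over already-oriented between-edges
  set Oi : Finset E := (edgesBetween ends i j).filter (fun e => π' e = some i) with hOidef
  set Oj : Finset E := (edgesBetween ends i j).filter (fun e => π' e = some j) with hOjdef
  have hbtw_inc : ∀ e, e ∈ edgesBetween ends i j ↔
      (ends e = (i, j) ∨ ends e = (j, i)) := by
    intro e; rw [edgesBetween]; simp
  have hcross : ∀ (a b : V), a ≠ b →
      util ends w a (bundleP π' b)
        = ∑ e ∈ (edgesBetween ends a b).filter (fun e => π' e = some b), w e := by
    intro a b hab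
    rw [hutil]
    rw [← Finset.univ_inter ((edgesBetween ends a b).filter (fun e => π' e = some b)),
      ← Finset.sum_ite_mem]
    refine Finset.sum_congr rfl fun e _ => ?_
    by_cases hp : π' e = some b
    · rw [if_pos hp]
      by_cases hinc : (ends e).1 = a ∨ (ends e).2 = a
      · rw [if_pos hinc, if_pos]
        rw [Finset.mem_filter, edgesBetween, Finset.mem_filter]
        refine ⟨⟨Finset.mem_univ e, ?_⟩, hp⟩
        rcases horient e b hp with hb | hb <;> rcases hinc with ha | ha
        · exact absurd (ha.symm.trans hb.symm) hab
        · right; rw [Prod.ext_iff]; exact ⟨hb.symm, ha⟩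
        · left; rw [Prod.ext_iff]; exact ⟨ha, hb.symm⟩
        · exact absurd (ha.symm.trans hb.symm) hab
      · rw [if_neg hinc, if_neg]
        rw [Finset.mem_filter, edgesBetween, Finset.mem_filter]
        rintro ⟨⟨-, hc | hc⟩, -⟩
        · exact hinc (Or.inl (by rw [hc]))
        · exact hinc (Or.inr (by rw [hc]))
    · rw [if_neg hp, if_neg]
      rw [Finset.mem_filter]
      rintro ⟨-, hc⟩
      exact hp hc
  have hciOj : ci = ∑ e ∈ Oj, w e := by
    rw [hcidef, hcross i j hij, hOjdef]
  have hsymmB : edgesBetween ends j i = edgesBetween ends i j := by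
    ext e
    rw [edgesBetween, edgesBetween, Finset.mem_filter, Finset.mem_filter]
    constructor
    · rintro ⟨h1, hc | hc⟩
      · exact ⟨h1, Or.inr hc⟩
      · exact ⟨h1, Or.inl hc⟩
    · rintro ⟨h1, hc | hc⟩
      · exact ⟨h1, Or.inr hc⟩
      · exact ⟨h1, Or.inl hc⟩
  have hcjOi : cj = ∑ e ∈ Oi, w e := by
    rw [hcjdef, hcross j i hij.symm, hsymmB, hOidef]
  have hOidisj : Disjoint Oi Oj := by
    rw [Finset.disjoint_left]
    intro e hei hej
    rw [hOidef, Finset.mem_filter] at hei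
    rw [hOjdef, Finset.mem_filter] at hej
    rw [hei.2] at hej
    exact hij (Option.some_injective V hej.2)
  have hOsub : Oi ∪ Oj ⊆ (edgesBetween ends i j).filter (fun e => π' e ≠ none) := by
    intro e he
    rw [Finset.mem_union] at he
    rw [Finset.mem_filter]
    rcases he with he | he
    · rw [hOidef, Finset.mem_filter] at he
      exact ⟨he.1, by rw [he.2]; simp⟩
    · rw [hOjdef, Finset.mem_filter] at he
      exact ⟨he.1, by rw [he.2]; simp⟩
  have hOcard : (Oi ∪ Oj).card ≤ 1 := le_trans (Finset.card_le_card hOsub) hone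
  have hci0 : cj ≠ 0 → ci = 0 := by
    intro hcj
    have hOine : Oi.Nonempty := by
      rw [Finset.nonempty_iff_ne_empty]
      intro hc
      rw [hcjOi, hc, Finset.sum_empty] at hcj
      exact hcj rfl
    have : Oj = ∅ := by
      rw [Finset.eq_empty_iff_forall_notMem]
      intro y hy
      obtain ⟨x, hx⟩ := hOine
      have hxy : x ≠ y := by
        intro hc
        exact Finset.disjoint_left.1 hOidisj hx (hc ▸ hy)
      have : ({x, y} : Finset E) ⊆ Oi ∪ Oj := by
        intro z hz
        rw [Finset.mem_insert, Finset.mem_singleton] at hz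
        rcases hz with hz | hz
        · exact Finset.mem_union_left _ (hz ▸ hx)
        · exact Finset.mem_union_right _ (hz ▸ hy)
      have := le_trans (Finset.card_le_card this) hOcard
      rw [Finset.card_insert_of_notMem (by simp [hxy]), Finset.card_singleton] at this
      omega
    rw [hciOj, this, Finset.sum_empty]
  -- choose the split of the unoriented edges
  set aH : ℕ := if cj = 0 then (h+1)/2 else h/2 with haHdef
  set aL : ℕ := if cj = 0 then (if h % 2 = 1 then l/2 else (l+1)/2)
                else (if h % 2 = 1 then (l+1)/2 else l/2) with haLdef
  have haHle : aH ≤ h := by rw [haHdef]; split <;> omega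
  have haLle : aL ≤ l := by rw [haLdef]; split <;> split <;> omega
  obtain ⟨AH, hAHsub, hAHcard⟩ := Finset.exists_subset_card_eq haHle
  obtain ⟨AL, hALsub, hALcard⟩ := Finset.exists_subset_card_eq haLle
  set A : Finset E := AH ∪ AL with hAdef
  have hHU : Hs ⊆ U := by rw [hHdef]; exact Finset.filter_subset _ _
  have hLU : Ls ⊆ U := by rw [hLdef]; exact Finset.filter_subset _ _
  have hAU : A ⊆ U := by
    rw [hAdef]
    exact Finset.union_subset (hAHsub.trans hHU) (hALsub.trans hLU)
  set B : Finset E := U \ A with hBdef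
  -- weights of the pieces
  have hsumH : ∀ (S : Finset E), S ⊆ Hs → ∑ e ∈ S, w e = α * S.card := by
    intro S hS
    rw [Finset.sum_congr rfl (fun e he => ?_), Finset.sum_const, nsmul_eq_mul, mul_comm]
    have := hS he
    rw [hHdef, Finset.mem_filter] at this
    rw [hw, if_pos this.2]
  have hsumL : ∀ (S : Finset E), S ⊆ Ls → ∑ e ∈ S, w e = β * S.card := by
    intro S hS
    rw [Finset.sum_congr rfl (fun e he => ?_), Finset.sum_const, nsmul_eq_mul, mul_comm]
    have := hS he
    rw [hLdef, Finset.mem_filter] at this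
    rw [hw, if_neg this.2]
  have hHLdisj : Disjoint Hs Ls := by
    rw [Finset.disjoint_left]
    intro e he1 he2
    rw [hHdef, Finset.mem_filter] at he1
    rw [hLdef, Finset.mem_filter] at he2
    exact he2.2 he1.2
  have hwA : ∑ e ∈ A, w e = α * aH + β * aL := by
    rw [hAdef, Finset.sum_union (Finset.disjoint_left.2 (fun e he1 he2 =>
      Finset.disjoint_left.1 hHLdisj (hAHsub he1) (hALsub he2)))]
    rw [hsumH AH hAHsub, hsumL AL hALsub, hAHcard, hALcard]
  have hwU : ∑ e ∈ U, w e = α * h + β * l := by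
    have : Hs ∪ Ls = U := by
      rw [hHdef, hLdef]
      exact Finset.filter_union_filter_not_eq _ _
    rw [← this, Finset.sum_union hHLdisj, hsumH Hs le_rfl, hsumL Ls le_rfl]
  have hwB : ∑ e ∈ B, w e = (α * h + β * l) - (α * aH + β * aL) := by
    rw [hBdef, eq_sub_iff_add_eq, ← hwA, ← hwU]
    exact Finset.sum_sdiff hAU
  -- the key arithmetic inequalities
  have hmain : ci + ((α * h + β * l) - (α * aH + β * aL)) ≤ ui + (α * aH + β * aL)
      ∧ cj + (α * aH + β * aL) ≤ uj + ((α * h + β * l) - (α * aH + β * aL)) := by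
    by_cases hcj : cj = 0
    · by_cases hh2 : h % 2 = 1
      · have e1 : 2 * aH = h + 1 := by rw [haHdef, if_pos hcj]; omega
        have e2 : 2 * aL = l ∨ 2 * aL + 1 = l := by
          rw [haLdef, if_pos hcj, if_pos hh2]; omega
        have e1' : (h:ℝ) = 2 * (aH:ℝ) - 1 := by
          have h2 : ((2 * aH : ℕ) : ℝ) = ((h + 1 : ℕ) : ℝ) := congrArg Nat.cast e1
          push_cast at h2; linarith
        have hα_ui : α ≤ ui ∧ α ≤ uj := by
          rcases hcase with hc | hc
          · exact hc
          · exact absurd hc.2.2 (by omega)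
        rcases e2 with e2 | e2 <;>
          [(have e2' : (l:ℝ) = 2 * (aL:ℝ) := by exact_mod_cast e2.symm);
           (have e2' : (l:ℝ) = 2 * (aL:ℝ) + 1 := by exact_mod_cast e2.symm)] <;>
          rw [e1', e2'] <;> constructor <;> linarith [hα_ui.1, hα_ui.2]
      · have e1 : 2 * aH = h := by rw [haHdef, if_pos hcj]; omega
        have e2 : 2 * aL = l ∨ 2 * aL = l + 1 := by
          rw [haLdef, if_pos hcj, if_neg hh2]; omega
        have e1' : (h:ℝ) = 2 * (aH:ℝ) := by exact_mod_cast e1.symm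
        have huj0 : β ≤ uj ∧ 0 ≤ ui := by
          rcases hcase with hc | hc
          · exact ⟨le_of_lt (lt_of_lt_of_le hαβ hc.2), le_trans (le_of_lt hα0) hc.1⟩
          · exact ⟨hc.2.1, le_trans hβ hc.1⟩
        rcases e2 with e2 | e2 <;>
          [(have e2' : (l:ℝ) = 2 * (aL:ℝ) := by exact_mod_cast e2.symm);
           (have e2' : (l:ℝ) = 2 * (aL:ℝ) - 1 := by
              have h2 : ((2 * aL : ℕ) : ℝ) = ((l + 1 : ℕ) : ℝ) := congrArg Nat.cast e2
              push_cast at h2; linarith)] <;>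
          rw [e1', e2'] <;> constructor <;> linarith [huj0.1, huj0.2]
    · have hci := hci0 hcj
      by_cases hh2 : h % 2 = 1
      · have e1 : 2 * aH + 1 = h := by rw [haHdef, if_neg hcj]; omega
        have e2 : 2 * aL = l ∨ 2 * aL = l + 1 := by
          rw [haLdef, if_neg hcj, if_pos hh2]; omega
        have e1' : (h:ℝ) = 2 * (aH:ℝ) + 1 := by exact_mod_cast e1.symm
        have hα_ui : α ≤ ui := by
          rcases hcase with hc | hc
          · exact hc.1
          · exact absurd hc.2.2 (by omega)
        rcases e2 with e2 | e2 <;>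
          [(have e2' : (l:ℝ) = 2 * (aL:ℝ) := by exact_mod_cast e2.symm);
           (have e2' : (l:ℝ) = 2 * (aL:ℝ) - 1 := by
              have h2 : ((2 * aL : ℕ) : ℝ) = ((l + 1 : ℕ) : ℝ) := congrArg Nat.cast e2
              push_cast at h2; linarith)] <;>
          rw [e1', e2', hci] <;> constructor <;> linarith [hα_ui, hcjuj, hcjnn]
      · have e1 : 2 * aH = h := by rw [haHdef, if_neg hcj]; omega
        have e2 : 2 * aL = l ∨ 2 * aL + 1 = l := by
          rw [haLdef, if_neg hcj, if_neg hh2]; omega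
        have e1' : (h:ℝ) = 2 * (aH:ℝ) := by exact_mod_cast e1.symm
        have hβ_ui : β ≤ ui := by
          rcases hcase with hc | hc
          · exact le_of_lt (lt_of_lt_of_le hαβ hc.1)
          · exact hc.1
        rcases e2 with e2 | e2 <;>
          [(have e2' : (l:ℝ) = 2 * (aL:ℝ) := by exact_mod_cast e2.symm);
           (have e2' : (l:ℝ) = 2 * (aL:ℝ) + 1 := by exact_mod_cast e2.symm)] <;>
          rw [e1', e2', hci] <;> constructor <;> linarith [hβ_ui, hcjuj, hcjnn]
  -- define the extension
  set π : E → Option V := fun e =>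
    if e ∈ A then some i
    else if e ∈ U then some j
    else if ends e = (i, i) then some i
    else if ends e = (j, j) then some j
    else π' e with hπdef
  have hLoopNotU : ∀ e, (ends e = (i, i) ∨ ends e = (j, j)) → e ∉ U := by
    rintro e (he | he) hU <;> rcases ((hUmem e).1 hU).1 with hc | hc <;>
      rw [he, Prod.ext_iff] at hc <;>
      apply hij <;>
      first
        | exact hc.1
        | exact hc.2
        | exact hc.1.symm
        | exact hc.2.symm
  have hπA : ∀ e, e ∈ A → π e = some i := by
    intro e he; rw [hπdef]; simp only [he, if_pos]
  have hπB : ∀ e, e ∈ U → e ∉ A → π e = some j := by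
    intro e h1 h2; rw [hπdef]; simp only [h1, h2, if_neg, if_pos, if_false, if_true]
  have hπli : ∀ e, ends e = (i, i) → π e = some i := by
    intro e he
    have h1 : e ∉ U := hLoopNotU e (Or.inl he)
    have h2 : e ∉ A := fun hc => h1 (hAU hc)
    rw [hπdef]; simp only [h1, h2, he, if_neg, if_pos, if_false, if_true]
  have hπlj : ∀ e, ends e = (j, j) → π e = some j := by
    intro e he
    have h1 : e ∉ U := hLoopNotU e (Or.inr he)
    have h2 : e ∉ A := fun hc => h1 (hAU hc)
    have h3 : ends e ≠ (i, i) := by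
      rw [he]; intro hc; rw [Prod.ext_iff] at hc; exact hij hc.1.symm
    rw [hπdef]
    dsimp only
    rw [if_neg h2, if_neg h1, if_neg h3, if_pos he]
  have hext : ∀ e v, π' e = some v → π e = some v := by
    intro e v hv
    have h1 : e ∉ U := by
      intro hc
      rw [((hUmem e).1 hc).2] at hv
      exact Option.some_ne_none v hv.symm
    have h2 : e ∉ A := fun hc => h1 (hAU hc)
    by_cases h3 : ends e = (i, i)
    · have : v = i := by
        rcases horient e v hv with hc | hc <;> rw [h3] at hc <;> exact hc
      rw [this] at hv ⊢
      exact hπli e h3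
    · by_cases h4 : ends e = (j, j)
      · have : v = j := by
          rcases horient e v hv with hc | hc <;> rw [h4] at hc <;> exact hc
        rw [this] at hv ⊢
        exact hπlj e h4
      · rw [hπdef]; simp only [h1, h2, h3, h4, if_neg, if_false]; exact hv
  have hchar : ∀ e v, π e = some v →
      π' e = some v ∨ (v = i ∧ (e ∈ A ∨ ends e = (i, i)))
        ∨ (v = j ∧ ((e ∈ U ∧ e ∉ A) ∨ ends e = (j, j))) := by
    intro e v
    rw [hπdef]
    dsimp only
    split_ifs with h1 h2 h3 h4 <;> intro hv
    · exact Or.inr (Or.inl ⟨(Option.some_injective V hv).symm, Or.inl h1⟩)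
    · exact Or.inr (Or.inr ⟨(Option.some_injective V hv).symm, Or.inl ⟨h2, h1⟩⟩)
    · exact Or.inr (Or.inl ⟨(Option.some_injective V hv).symm, Or.inr h3⟩)
    · exact Or.inr (Or.inr ⟨(Option.some_injective V hv).symm, Or.inr h4⟩)
    · exact Or.inl hv
  have hbtwEnds : ∀ e, e ∈ U →
      ((ends e).1 = i ∨ (ends e).2 = i) ∧ ((ends e).1 = j ∨ (ends e).2 = j) := by
    intro e he
    rcases ((hUmem e).1 he).1 with hc | hc <;> rw [hc] <;> simp
  -- monotonicity: everyone's own utility only grows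
  have hmono : ∀ a, util ends w a (bundleP π' a) ≤ util ends w a (bundleP π a) := by
    intro a
    rw [hutil, hutil]
    refine Finset.sum_le_sum fun e _ => ?_
    by_cases hp : π' e = some a
    · rw [if_pos hp, if_pos (hext e a hp)]
    · rw [if_neg hp]
      exact hite0 _ _ (htnn a e)
  -- bundles of third parties don't change
  have hsame : ∀ a b, b ≠ i → b ≠ j →
      util ends w a (bundleP π b) = util ends w a (bundleP π' b) := by
    intro a b hbi hbj
    rw [hutil, hutil]
    refine Finset.sum_congr rfl fun e _ => ?_
    congr 1
    simp only [eq_iff_iff]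
    constructor
    · intro hp
      rcases hchar e b hp with hc | ⟨hc, -⟩ | ⟨hc, -⟩
      · exact hc
      · exact absurd hc hbi
      · exact absurd hc hbj
    · exact hext e b
  -- third parties don't value i's or j's new edges
  have hthird_i : ∀ a, a ≠ i → a ≠ j →
      util ends w a (bundleP π i) ≤ util ends w a (bundleP π' i) := by
    intro a hai haj
    rw [hutil, hutil]
    refine Finset.sum_le_sum fun e _ => ?_
    by_cases hp : π e = some i
    · rw [if_pos hp]
      by_cases hinc : (ends e).1 = a ∨ (ends e).2 = a
      · rcases hchar e i hp with hc | ⟨-, hc | hc⟩ | ⟨hc, -⟩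
        · rw [if_pos hc]
        · rcases (hbtwEnds e (hAU hc)) with ⟨h1, h2⟩
          exfalso
          rcases hinc with ha | ha <;> rcases h1 with hi1 | hi1 <;>
            rcases h2 with hj1 | hj1 <;>
            first
              | exact hai (ha.symm.trans hi1)
              | exact haj (ha.symm.trans hj1)
              | exact hij (hi1.symm.trans hj1)
        · exfalso
          rcases hinc with ha | ha <;> rw [hc] at ha <;> exact hai ha.symm
        · exact absurd hc hij
      · rw [if_neg hinc]
        exact hite0 _ _ le_rfl
    · rw [if_neg hp]
      exact hite0 _ _ (htnn a e)
  have hthird_j : ∀ a, a ≠ i → a ≠ j →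
      util ends w a (bundleP π j) ≤ util ends w a (bundleP π' j) := by
    intro a hai haj
    rw [hutil, hutil]
    refine Finset.sum_le_sum fun e _ => ?_
    by_cases hp : π e = some j
    · rw [if_pos hp]
      by_cases hinc : (ends e).1 = a ∨ (ends e).2 = a
      · rcases hchar e j hp with hc | ⟨hc, -⟩ | ⟨-, hc | hc⟩
        · rw [if_pos hc]
        · exact absurd hc hij.symm
        · rcases (hbtwEnds e hc.1) with ⟨h1, h2⟩
          exfalso
          rcases hinc with ha | ha <;> rcases h1 with hi1 | hi1 <;>
            rcases h2 with hj1 | hj1 <;>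
            first
              | exact hai (ha.symm.trans hi1)
              | exact haj (ha.symm.trans hj1)
              | exact hij (hi1.symm.trans hj1)
        · exfalso
          rcases hinc with ha | ha <;> rw [hc] at ha <;> exact haj ha.symm
      · rw [if_neg hinc]
        exact hite0 _ _ le_rfl
    · rw [if_neg hp]
      exact hite0 _ _ (htnn a e)
  -- i's and j's new utilities
  have hAmem : ∀ e, e ∈ A → (π e = some i ∧ ((ends e).1 = i ∨ (ends e).2 = i)
      ∧ ((ends e).1 = j ∨ (ends e).2 = j) ∧ π' e = none) := by
    intro e he
    have hU := hAU he
    exact ⟨hπA e he, (hbtwEnds e hU).1, (hbtwEnds e hU).2, ((hUmem e).1 hU).2⟩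
  have hBmem : ∀ e, e ∈ B → (π e = some j ∧ ((ends e).1 = i ∨ (ends e).2 = i)
      ∧ ((ends e).1 = j ∨ (ends e).2 = j) ∧ π' e = none) := by
    intro e he
    rw [hBdef, Finset.mem_sdiff] at he
    exact ⟨hπB e he.1 he.2, (hbtwEnds e he.1).1, (hbtwEnds e he.1).2,
      ((hUmem e).1 he.1).2⟩
  have hsumA : ∑ e ∈ A, w e = ∑ e : E, (if e ∈ A then w e else 0) := by
    rw [← Finset.univ_inter A, ← Finset.sum_ite_mem, Finset.univ_inter]
  have hsumB : ∑ e ∈ B, w e = ∑ e : E, (if e ∈ B then w e else 0) := by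
    rw [← Finset.univ_inter B, ← Finset.sum_ite_mem, Finset.univ_inter]
  have hlow_i : ui + ∑ e ∈ A, w e ≤ util ends w i (bundleP π i) := by
    rw [huidef, hutil, hutil, hsumA, ← Finset.sum_add_distrib]
    refine Finset.sum_le_sum fun e _ => ?_
    by_cases hp : π' e = some i
    · have hnA : e ∉ A := by
        intro hc
        rw [(hAmem e hc).2.2.2] at hp
        exact Option.some_ne_none i hp.symm
      rw [if_pos hp, if_neg hnA, if_pos (hext e i hp), add_zero]
    · rw [if_neg hp, zero_add]
      by_cases hA : e ∈ A
      · obtain ⟨hπe, hinc, -, -⟩ := hAmem e hA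
        rw [if_pos hA, if_pos hπe, if_pos hinc]
      · rw [if_neg hA]
        exact hite0 _ _ (htnn i e)
  have hlow_j : uj + ∑ e ∈ B, w e ≤ util ends w j (bundleP π j) := by
    rw [hujdef, hutil, hutil, hsumB, ← Finset.sum_add_distrib]
    refine Finset.sum_le_sum fun e _ => ?_
    by_cases hp : π' e = some j
    · have hnB : e ∉ B := by
        intro hc
        rw [(hBmem e hc).2.2.2] at hp
        exact Option.some_ne_none j hp.symm
      rw [if_pos hp, if_neg hnB, if_pos (hext e j hp), add_zero]
    · rw [if_neg hp, zero_add]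
      by_cases hB : e ∈ B
      · obtain ⟨hπe, -, hinc, -⟩ := hBmem e hB
        rw [if_pos hB, if_pos hπe, if_pos hinc]
      · rw [if_neg hB]
        exact hite0 _ _ (htnn j e)
  have hup_ij : util ends w i (bundleP π j) ≤ ci + ∑ e ∈ B, w e := by
    rw [hcidef, hutil, hutil, hsumB, ← Finset.sum_add_distrib]
    refine Finset.sum_le_sum fun e _ => ?_
    by_cases hp : π e = some j
    · rw [if_pos hp]
      by_cases hinc : (ends e).1 = i ∨ (ends e).2 = i
      · rw [if_pos hinc]
        rcases hchar e j hp with hc | ⟨hc, -⟩ | ⟨-, hc | hc⟩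
        · rw [if_pos hc]
          have h2 : (0:ℝ) ≤ if e ∈ B then w e else 0 := hite0 _ _ (hw0 e)
          linarith
        · exact absurd hc hij.symm
        · have heB : e ∈ B := by rw [hBdef, Finset.mem_sdiff]; exact hc
          rw [if_pos heB]
          have h2 : (0:ℝ) ≤ if π' e = some j then w e else 0 := hite0 _ _ (hw0 e)
          linarith
        · exfalso
          rcases hinc with ha | ha <;> rw [hc] at ha <;> exact hij ha.symm
      · rw [if_neg hinc]
        exact add_nonneg (hite0 _ _ le_rfl) (hite0 _ _ (hw0 e))
    · rw [if_neg hp]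
      exact add_nonneg (hite0 _ _ (htnn i e)) (hite0 _ _ (hw0 e))
  have hup_ji : util ends w j (bundleP π i) ≤ cj + ∑ e ∈ A, w e := by
    rw [hcjdef, hutil, hutil, hsumA, ← Finset.sum_add_distrib]
    refine Finset.sum_le_sum fun e _ => ?_
    by_cases hp : π e = some i
    · rw [if_pos hp]
      by_cases hinc : (ends e).1 = j ∨ (ends e).2 = j
      · rw [if_pos hinc]
        rcases hchar e i hp with hc | ⟨-, hc | hc⟩ | ⟨hc, -⟩
        · rw [if_pos hc]
          have h2 : (0:ℝ) ≤ if e ∈ A then w e else 0 := hite0 _ _ (hw0 e)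
          linarith
        · rw [if_pos hc]
          have h2 : (0:ℝ) ≤ if π' e = some i then w e else 0 := hite0 _ _ (hw0 e)
          linarith
        · exfalso
          rcases hinc with ha | ha <;> rw [hc] at ha <;> exact hij ha
        · exact absurd hc hij
      · rw [if_neg hinc]
        exact add_nonneg (hite0 _ _ le_rfl) (hite0 _ _ (hw0 e))
    · rw [if_neg hp]
      exact add_nonneg (hite0 _ _ (htnn j e)) (hite0 _ _ (hw0 e))
  -- assemble
  refine ⟨π, ?_, hext, ?_, ?_, ?_⟩
  · -- orientation respects endpoints
    intro e v hv
    rcases hchar e v hv with hc | ⟨hv', hc | hc⟩ | ⟨hv', hc | hc⟩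
    · exact horient e v hc
    · rcases (hbtwEnds e (hAU hc)).1 with h1 | h1
      · exact Or.inl (hv'.trans h1.symm)
      · exact Or.inr (hv'.trans h1.symm)
    · left; rw [hv', hc]
    · rcases (hbtwEnds e hc.1).2 with h1 | h1
      · exact Or.inl (hv'.trans h1.symm)
      · exact Or.inr (hv'.trans h1.symm)
    · left; rw [hv', hc]
  · -- envy-freeness
    intro a b
    by_cases hbi : b = i
    · subst hbi
      by_cases hai : a = b
      · subst hai; exact le_rfl
      · by_cases haj : a = j
        · subst haj
          calc util ends w a (bundleP π b) ≤ cj + ∑ e ∈ A, w e := hup_ji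
            _ ≤ uj + ∑ e ∈ B, w e := by rw [hwA, hwB]; exact hmain.2
            _ ≤ util ends w a (bundleP π a) := hlow_j
        · calc util ends w a (bundleP π b) ≤ util ends w a (bundleP π' b) :=
              hthird_i a hai haj
            _ ≤ util ends w a (bundleP π' a) := hEF a b
            _ ≤ util ends w a (bundleP π a) := hmono a
    · by_cases hbj : b = j
      · subst hbj
        by_cases haj : a = b
        · subst haj; exact le_rfl
        · by_cases hai : a = i
          · subst hai
            calc util ends w a (bundleP π b) ≤ ci + ∑ e ∈ B, w e := hup_ij
              _ ≤ ui + ∑ e ∈ A, w e := by rw [hwA, hwB]; exact hmain.1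
              _ ≤ util ends w a (bundleP π a) := hlow_i
          · calc util ends w a (bundleP π b) ≤ util ends w a (bundleP π' b) :=
                hthird_j a hai haj
              _ ≤ util ends w a (bundleP π' a) := hEF a b
              _ ≤ util ends w a (bundleP π a) := hmono a
      · calc util ends w a (bundleP π b) = util ends w a (bundleP π' b) :=
            hsame a b hbi hbj
          _ ≤ util ends w a (bundleP π' a) := hEF a b
          _ ≤ util ends w a (bundleP π a) := hmono a
  · -- all between edges oriented
    intro e he
    rcases Option.eq_none_or_eq_some (π' e) with hp | ⟨v, hp⟩
    · have heU : e ∈ U := by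
        rw [hUmem]
        exact ⟨(hbtw_inc e).1 he, hp⟩
      by_cases hA : e ∈ A
      · rw [hπA e hA]; exact Option.some_ne_none _
      · rw [hπB e heU hA]; exact Option.some_ne_none _
    · rw [hext e v hp]; exact Option.some_ne_none _
  · -- all loops at i, j oriented
    rintro e (he | he)
    · rw [hπli e he]; exact Option.some_ne_none _
    · rw [hπlj e he]; exact Option.some_ne_none _
end

section
/- Let G be a bi-valued symmetric multigraph with weights α > β ≥ 0 and let π' be a partial envy-free orientation of G that orients no edge between distinct vertices i and j, and suppose u_i(π'_i) ≥ α. Then there exists an envy-free extension π of π' in which all edges between i and j and all self-loops at i and j are oriented. -/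
lemma split_lemma {E : Type*} [DecidableEq E] (α : ℝ) (hα : 0 ≤ α) (w : E → ℝ)
    (hw0 : ∀ e, 0 ≤ w e) (hwα : ∀ e, w e ≤ α) (S : Finset E) :
    ∃ T ⊆ S, ∑ e ∈ T, w e ≤ ∑ e ∈ S \ T, w e ∧
      ∑ e ∈ S \ T, w e ≤ ∑ e ∈ T, w e + α := by
  induction S using Finset.induction_on with
  | empty => exact ⟨∅, Finset.Subset.refl _, by simp, by simpa using hα⟩
  | @insert e S' he ih =>
    obtain ⟨T, hTS, h1, h2⟩ := ih
    have hsd : (insert e S') \ T = insert e (S' \ T) := by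
      ext a
      simp only [Finset.mem_sdiff, Finset.mem_insert]
      constructor
      · rintro ⟨h | h, hn⟩
        · exact Or.inl h
        · exact Or.inr ⟨h, hn⟩
      · rintro (rfl | ⟨h, hn⟩)
        · exact ⟨Or.inl rfl, fun hc => he (hTS hc)⟩
        · exact ⟨Or.inr h, hn⟩
    have heT : e ∉ T := fun hc => he (hTS hc)
    have heST : e ∉ S' \ T := fun hc => he (Finset.mem_sdiff.mp hc).1
    by_cases hc : w e + ∑ x ∈ T, w x ≤ ∑ x ∈ S' \ T, w x
    · -- give e to the T side
      refine ⟨insert e T, ?_, ?_, ?_⟩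
      · exact Finset.insert_subset_insert _ hTS
      · have : (insert e S') \ (insert e T) = S' \ T := by
          ext a
          simp only [Finset.mem_sdiff, Finset.mem_insert, not_or]
          constructor
          · rintro ⟨h | h, hn1, hn2⟩
            · exact absurd h hn1
            · exact ⟨h, hn2⟩
          · rintro ⟨h, hn⟩
            exact ⟨Or.inr h, fun hc => he (hc ▸ h), hn⟩
        rw [this, Finset.sum_insert heT]
        exact hc
      · have : (insert e S') \ (insert e T) = S' \ T := by
          ext a
          simp only [Finset.mem_sdiff, Finset.mem_insert, not_or]
          constructor
          · rintro ⟨h | h, hn1, hn2⟩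
            · exact absurd h hn1
            · exact ⟨h, hn2⟩
          · rintro ⟨h, hn⟩
            exact ⟨Or.inr h, fun hc => he (hc ▸ h), hn⟩
        rw [this, Finset.sum_insert heT]
        have := hw0 e
        linarith
    · -- swap sides: new T = S' \ T, e joins old-T side
      push_neg at hc
      have hkey : (insert e S') \ (S' \ T) = insert e T := by
        ext a
        simp only [Finset.mem_sdiff, Finset.mem_insert, not_and, not_not]
        constructor
        · rintro ⟨h | h, hn⟩
          · exact Or.inl h
          · exact Or.inr (hn h)
        · rintro (rfl | h)
          · exact ⟨Or.inl rfl, fun hc => absurd hc he⟩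
          · exact ⟨Or.inr (hTS h), fun _ => h⟩
      refine ⟨S' \ T, (Finset.sdiff_subset).trans (Finset.subset_insert _ _), ?_, ?_⟩
      · rw [hkey, Finset.sum_insert heT]
        linarith
      · rw [hkey, Finset.sum_insert heT]
        have := hwα e
        linarith

/-- extension lemma, second form. If a partial envy-free
orientation `π'` of a bi-valued symmetric multigraph orients no edge between
distinct vertices `i` and `j`, and `i` already receives utility at least `α`,
then `π'` extends to an envy-free partial orientation orienting all edges
between `i` and `j` and all self-loops at `i` and `j`. -/
theorem stmt10 {V E : Type*} [Fintype E] [DecidableEq V] [DecidableEq E]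
    (ends : E → V × V) (heavy : E → Bool) (α β : ℝ) (hβ : 0 ≤ β) (hαβ : β < α)
    (w : E → ℝ) (hw : ∀ e, w e = if heavy e then α else β)
    (π' : E → Option V)
    (horient : ∀ e v, π' e = some v → v = (ends e).1 ∨ v = (ends e).2)
    (hEF : ∀ i j : V, util ends w i (bundleP π' j) ≤ util ends w i (bundleP π' i))
    (i j : V) (hij : i ≠ j)
    (hnone : ∀ e ∈ edgesBetween ends i j, π' e = none)
    (hα : α ≤ util ends w i (bundleP π' i)) :
    ∃ π : E → Option V,
      (∀ e v, π e = some v → v = (ends e).1 ∨ v = (ends e).2) ∧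
      (∀ e v, π' e = some v → π e = some v) ∧
      (∀ a b : V, util ends w a (bundleP π b) ≤ util ends w a (bundleP π a)) ∧
      (∀ e ∈ edgesBetween ends i j, π e ≠ none) ∧
      (∀ e, ends e = (i, i) ∨ ends e = (j, j) → π e ≠ none) := by
  classical
  have hw0 : ∀ e, 0 ≤ w e := by
    intro e; rw [hw]; split <;> linarith
  have hwα : ∀ e, w e ≤ α := by
    intro e; rw [hw]; split <;> linarith
  set SB := edgesBetween ends i j with hSBdef
  have hmemSB : ∀ e, e ∈ SB ↔ (ends e = (i, j) ∨ ends e = (j, i)) := by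
    intro e; simp [hSBdef, edgesBetween]
  obtain ⟨T, hTS, h1, h2⟩ := split_lemma α (by linarith) w hw0 hwα SB
  obtain ⟨π, hπdef⟩ : ∃ π : E → Option V, π = fun e =>
      if ends e = (i, i) then some i
      else if ends e = (j, j) then some j
      else if e ∈ T then some i
      else if e ∈ SB then some j
      else π' e := ⟨_, rfl⟩
  -- basic facts about membership
  have hloopiSB : ∀ e, ends e = (i, i) → e ∉ SB := by
    intro e h hmem
    rw [hmemSB, h] at hmem
    simp [Prod.ext_iff, hij] at hmem
  have hloopjSB : ∀ e, ends e = (j, j) → e ∉ SB := by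
    intro e h hmem
    rw [hmemSB, h] at hmem
    simp [Prod.ext_iff, hij.symm] at hmem
  -- value of π in each case
  have hπA : ∀ e, ends e = (i, i) → π e = some i := by
    intro e h; rw [hπdef]; simp [h]
  have hπB : ∀ e, ends e = (j, j) → π e = some j := by
    intro e h; rw [hπdef]
    have hne : ends e ≠ (i, i) := by rw [h]; simp [Prod.ext_iff, hij.symm]
    simp [h, hne]
    exact fun h => h.symm
  have hπT : ∀ e ∈ T, π e = some i := by
    intro e he
    have heSB := hTS he
    rcases (hmemSB e).mp heSB with h | h <;>
    · rw [hπdef]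
      have h1' : ends e ≠ (i, i) := by
        rw [h]; simp [Prod.ext_iff, hij, hij.symm]
      have h2' : ends e ≠ (j, j) := by
        rw [h]; simp [Prod.ext_iff, hij, hij.symm]
      simp [h1', h2', he]
  have hπSBT : ∀ e ∈ SB, e ∉ T → π e = some j := by
    intro e heSB heT
    rcases (hmemSB e).mp heSB with h | h <;>
    · rw [hπdef]
      have h1' : ends e ≠ (i, i) := by
        rw [h]; simp [Prod.ext_iff, hij, hij.symm]
      have h2' : ends e ≠ (j, j) := by
        rw [h]; simp [Prod.ext_iff, hij, hij.symm]
      simp [h1', h2', heT, heSB]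
  have hπD : ∀ e, ends e ≠ (i, i) → ends e ≠ (j, j) → e ∉ SB → π e = π' e := by
    intro e ha hb hc
    have heT : e ∉ T := fun h => hc (hTS h)
    rw [hπdef]; simp [ha, hb, hc, heT]
  set Li := Finset.univ.filter (fun e => ends e = (i, i) ∧ π' e = none) with hLidef
  set Lj := Finset.univ.filter (fun e => ends e = (j, j) ∧ π' e = none) with hLjdef
  have hmemLi : ∀ e, e ∈ Li ↔ ends e = (i, i) ∧ π' e = none := by
    intro e; simp [hLidef]
  have hmemLj : ∀ e, e ∈ Lj ↔ ends e = (j, j) ∧ π' e = none := by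
    intro e; simp [hLjdef]
  have hsum_mem : ∀ (B : Finset E) (f : E → ℝ),
      ∑ e ∈ B, f e = ∑ e ∈ Finset.univ, if e ∈ B then f e else 0 := by
    intro B f
    rw [Finset.sum_ite_mem, Finset.univ_inter]
  -- decomposition of i's bundle
  have keyi : ∀ a : V, util ends w a (bundleP π i)
      = util ends w a (bundleP π' i)
        + (∑ e ∈ T, if (ends e).1 = a ∨ (ends e).2 = a then w e else 0)
        + (∑ e ∈ Li, if (ends e).1 = a ∨ (ends e).2 = a then w e else 0) := by
    intro a
    unfold util bundleP
    rw [Finset.sum_filter, Finset.sum_filter, hsum_mem T _, hsum_mem Li _,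
      ← Finset.sum_add_distrib, ← Finset.sum_add_distrib]
    refine Finset.sum_congr rfl fun e _ => ?_
    by_cases hA : ends e = (i, i)
    · have hnSB := hloopiSB e hA
      have hnT : e ∉ T := fun h => hnSB (hTS h)
      rw [hπA e hA]
      rcases hpe : π' e with _ | v
      · simp [hnT, hmemLi, hA, hpe]
      · have hv : v = i := by
          rcases horient e v hpe with h | h <;> rw [hA] at h <;> exact h
        subst hv
        simp [hnT, hmemLi, hA, hpe]
    · by_cases hB : ends e = (j, j)
      · have hnSB := hloopjSB e hB
        have hnT : e ∉ T := fun h => hnSB (hTS h)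
        have hpi : π' e ≠ some i := by
          intro hpe
          rcases horient e i hpe with h | h <;> rw [hB] at h <;> exact hij h
        rw [hπB e hB]
        simp [hnT, hmemLi, hA, hij.symm, hpi]
      · by_cases hSBe : e ∈ SB
        · have hp0 := hnone e hSBe
          by_cases hTe : e ∈ T
          · rw [hπT e hTe]; simp [hTe, hmemLi, hA, hp0]
          · rw [hπSBT e hSBe hTe]
            simp [hTe, hmemLi, hA, hp0, hij.symm]
        · rw [hπD e hA hB hSBe]
          have hnT : e ∉ T := fun h => hSBe (hTS h)
          simp [hnT, hmemLi, hA]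
  -- decomposition of j's bundle
  have keyj : ∀ a : V, util ends w a (bundleP π j)
      = util ends w a (bundleP π' j)
        + (∑ e ∈ SB \ T, if (ends e).1 = a ∨ (ends e).2 = a then w e else 0)
        + (∑ e ∈ Lj, if (ends e).1 = a ∨ (ends e).2 = a then w e else 0) := by
    intro a
    unfold util bundleP
    rw [Finset.sum_filter, Finset.sum_filter, hsum_mem (SB \ T) _, hsum_mem Lj _,
      ← Finset.sum_add_distrib, ← Finset.sum_add_distrib]
    refine Finset.sum_congr rfl fun e _ => ?_
    by_cases hB : ends e = (j, j)
    · have hnSB := hloopjSB e hB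
      have hnT : e ∉ SB \ T := fun h => hnSB (Finset.mem_sdiff.mp h).1
      rw [hπB e hB]
      rcases hpe : π' e with _ | v
      · simp [hnT, hmemLj, hB, hpe]
      · have hv : v = j := by
          rcases horient e v hpe with h | h <;> rw [hB] at h <;> exact h
        subst hv
        simp [hnT, hmemLj, hB, hpe]
    · by_cases hA : ends e = (i, i)
      · have hnSB := hloopiSB e hA
        have hnT : e ∉ SB \ T := fun h => hnSB (Finset.mem_sdiff.mp h).1
        have hpj : π' e ≠ some j := by
          intro hpe
          rcases horient e j hpe with h | h <;> rw [hA] at h <;> exact hij h.symm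
        rw [hπA e hA]
        simp [hnT, hmemLj, hB, hij, hpj]
      · by_cases hSBe : e ∈ SB
        · have hp0 := hnone e hSBe
          by_cases hTe : e ∈ T
          · rw [hπT e hTe]
            have hnT : e ∉ SB \ T := fun h => (Finset.mem_sdiff.mp h).2 hTe
            simp [hnT, hmemLj, hB, hp0, hij]
          · rw [hπSBT e hSBe hTe]
            have hmT : e ∈ SB \ T := Finset.mem_sdiff.mpr ⟨hSBe, hTe⟩
            simp [hmT, hmemLj, hB, hp0]
        · rw [hπD e hA hB hSBe]
          have hnT : e ∉ SB \ T := fun h => hSBe (Finset.mem_sdiff.mp h).1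
          simp [hnT, hmemLj, hB]
  -- bundles of other agents unchanged
  have hbundle_other : ∀ v, v ≠ i → v ≠ j → bundleP π v = bundleP π' v := by
    intro v hvi hvj
    ext e
    simp only [bundleP, Finset.mem_filter, Finset.mem_univ, true_and]
    constructor
    · intro h
      by_cases hA : ends e = (i, i)
      · rw [hπA e hA] at h
        exact absurd (Option.some.inj h).symm hvi
      by_cases hB : ends e = (j, j)
      · rw [hπB e hB] at h
        exact absurd (Option.some.inj h).symm hvj
      by_cases hSBe : e ∈ SB
      · by_cases hTe : e ∈ T
        · rw [hπT e hTe] at h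
          exact absurd (Option.some.inj h).symm hvi
        · rw [hπSBT e hSBe hTe] at h
          exact absurd (Option.some.inj h).symm hvj
      · rw [hπD e hA hB hSBe] at h
        exact h
    · intro h
      have hA : ends e ≠ (i, i) := by
        intro hc
        rcases horient e v h with h' | h' <;> rw [hc] at h' <;> exact hvi h'
      have hB : ends e ≠ (j, j) := by
        intro hc
        rcases horient e v h with h' | h' <;> rw [hc] at h' <;> exact hvj h'
      have hSBe : e ∉ SB := fun hc => by rw [hnone e hc] at h; exact nomatch h
      rw [hπD e hA hB hSBe]
      exact h
  -- value computations
  have hval_nonneg : ∀ (a : V) (B : Finset E),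
      0 ≤ ∑ e ∈ B, (if (ends e).1 = a ∨ (ends e).2 = a then w e else 0) := by
    intro a B
    refine Finset.sum_nonneg fun e _ => ?_
    split
    · exact hw0 e
    · exact le_refl 0
  have hutil_nonneg : ∀ (a : V) (B : Finset E), 0 ≤ util ends w a B := by
    intro a B; exact hval_nonneg a B
  have hvalSB : ∀ (B : Finset E), B ⊆ SB → ∀ a, a = i ∨ a = j →
      (∑ e ∈ B, if (ends e).1 = a ∨ (ends e).2 = a then w e else 0) = ∑ e ∈ B, w e := by
    intro B hB a ha
    refine Finset.sum_congr rfl fun e he => ?_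
    rcases (hmemSB e).mp (hB he) with h | h <;> rcases ha with rfl | rfl <;> simp [h]
  have hval0SB : ∀ (B : Finset E), B ⊆ SB → ∀ a, a ≠ i → a ≠ j →
      (∑ e ∈ B, if (ends e).1 = a ∨ (ends e).2 = a then w e else 0) = 0 := by
    intro B hB a hai haj
    refine Finset.sum_eq_zero fun e he => ?_
    rcases (hmemSB e).mp (hB he) with h | h <;> simp [h, Ne.symm hai, Ne.symm haj]
  have hLi0 : ∀ a, a ≠ i →
      (∑ e ∈ Li, if (ends e).1 = a ∨ (ends e).2 = a then w e else 0) = 0 := by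
    intro a ha
    refine Finset.sum_eq_zero fun e he => ?_
    have h := ((hmemLi e).mp he).1
    simp [h, Ne.symm ha]
  have hLj0 : ∀ a, a ≠ j →
      (∑ e ∈ Lj, if (ends e).1 = a ∨ (ends e).2 = a then w e else 0) = 0 := by
    intro a ha
    refine Finset.sum_eq_zero fun e he => ?_
    have h := ((hmemLj e).mp he).1
    simp [h, Ne.symm ha]
  -- cross-valuation zero
  have hin : ∀ (e : E) (a b : V), a ≠ b → π' e = some b →
      ((ends e).1 = a ∨ (ends e).2 = a) → e ∈ edgesBetween ends a b ∨ e ∈ edgesBetween ends b a := by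
    intro e a b hab hpe hinc
    rcases horient e b hpe with h | h <;> rcases hinc with h' | h'
    · exact absurd (h.trans h').symm hab
    · left
      simp only [edgesBetween, Finset.mem_filter, Finset.mem_univ, true_and]
      right
      rw [Prod.ext_iff]
      exact ⟨h.symm, h'⟩
    · left
      simp only [edgesBetween, Finset.mem_filter, Finset.mem_univ, true_and]
      left
      rw [Prod.ext_iff]
      exact ⟨h', h.symm⟩
    · exact absurd (h.trans h').symm hab
  have hcrossi : util ends w i (bundleP π' j) = 0 := by
    refine Finset.sum_eq_zero fun e he => ?_
    simp only [bundleP, Finset.mem_filter, Finset.mem_univ, true_and] at he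
    by_cases hinc : (ends e).1 = i ∨ (ends e).2 = i
    · exfalso
      rcases hin e i j hij he hinc with h | h
      · rw [hnone e h] at he; exact nomatch he
      · have : e ∈ SB := by
          rw [hmemSB]
          simp only [edgesBetween, Finset.mem_filter, Finset.mem_univ, true_and] at h
          tauto
        rw [hnone e this] at he; exact nomatch he
    · simp [hinc]
  have hcrossj : util ends w j (bundleP π' i) = 0 := by
    refine Finset.sum_eq_zero fun e he => ?_
    simp only [bundleP, Finset.mem_filter, Finset.mem_univ, true_and] at he
    by_cases hinc : (ends e).1 = j ∨ (ends e).2 = j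
    · exfalso
      rcases hin e j i hij.symm he hinc with h | h
      · have : e ∈ SB := by
          rw [hmemSB]
          simp only [edgesBetween, Finset.mem_filter, Finset.mem_univ, true_and] at h
          tauto
        rw [hnone e this] at he; exact nomatch he
      · rw [hnone e h] at he; exact nomatch he
    · simp [hinc]
  -- own utility only grows
  have hself : ∀ a, util ends w a (bundleP π' a) ≤ util ends w a (bundleP π a) := by
    intro a
    by_cases hai : a = i
    · subst hai
      rw [keyi a]
      linarith [hval_nonneg a T, hval_nonneg a Li]
    by_cases haj : a = j
    · subst haj
      rw [keyj a]
      linarith [hval_nonneg a (SB \ T), hval_nonneg a Lj]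
    · rw [hbundle_other a hai haj]
  refine ⟨π, ?_, ?_, ?_, ?_, ?_⟩
  · -- orientation validity
    intro e v h
    by_cases hA : ends e = (i, i)
    · rw [hπA e hA] at h
      left; rw [hA]; exact (Option.some.inj h).symm
    by_cases hB : ends e = (j, j)
    · rw [hπB e hB] at h
      left; rw [hB]; exact (Option.some.inj h).symm
    by_cases hSBe : e ∈ SB
    · rcases (hmemSB e).mp hSBe with hh | hh <;> by_cases hTe : e ∈ T
      · rw [hπT e hTe] at h; left; rw [hh]; exact (Option.some.inj h).symm
      · rw [hπSBT e hSBe hTe] at h; right; rw [hh]; exact (Option.some.inj h).symm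
      · rw [hπT e hTe] at h; right; rw [hh]; exact (Option.some.inj h).symm
      · rw [hπSBT e hSBe hTe] at h; left; rw [hh]; exact (Option.some.inj h).symm
    · rw [hπD e hA hB hSBe] at h
      exact horient e v h
  · -- extension
    intro e v h
    by_cases hA : ends e = (i, i)
    · have hv : v = i := by
        rcases horient e v h with h' | h' <;> rw [hA] at h' <;> exact h'
      rw [hπA e hA, hv]
    by_cases hB : ends e = (j, j)
    · have hv : v = j := by
        rcases horient e v h with h' | h' <;> rw [hB] at h' <;> exact h'
      rw [hπB e hB, hv]
    by_cases hSBe : e ∈ SB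
    · rw [hnone e hSBe] at h; exact nomatch h
    · rw [hπD e hA hB hSBe]; exact h
  · -- envy-freeness
    intro a b
    by_cases hbi : b = i
    · subst hbi
      by_cases hai : a = b
      · subst hai; exact le_refl _
      by_cases haj : a = j
      · subst haj
        rw [keyi a, keyj a, hcrossj, hvalSB T hTS a (Or.inr rfl),
          hvalSB (SB \ T) Finset.sdiff_subset a (Or.inr rfl), hLi0 a hij.symm]
        linarith [hutil_nonneg a (bundleP π' a), hval_nonneg a Lj]
      · rw [keyi a, hval0SB T hTS a hai haj, hLi0 a hai, hbundle_other a hai haj]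
        have := hEF a b
        simpa using this
    by_cases hbj : b = j
    · subst hbj
      by_cases haj : a = b
      · subst haj; exact le_refl _
      by_cases hai : a = i
      · subst hai
        rw [keyj a, keyi a, hcrossi, hvalSB T hTS a (Or.inl rfl),
          hvalSB (SB \ T) Finset.sdiff_subset a (Or.inl rfl), hLj0 a hij]
        linarith [hval_nonneg a Li]
      · rw [keyj a, hval0SB (SB \ T) Finset.sdiff_subset a hai haj, hLj0 a haj,
          hbundle_other a hai haj]
        have := hEF a b
        simpa using this
    · rw [hbundle_other b hbi hbj]
      exact le_trans (hEF a b) (hself a)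
  · -- all i–j edges oriented
    intro e he
    by_cases hTe : e ∈ T
    · rw [hπT e hTe]; simp
    · rw [hπSBT e he hTe]; simp
  · -- all loops oriented
    intro e h
    rcases h with h | h
    · rw [hπA e h]; simp
    · rw [hπB e h]; simp
end

section
/- Let π^G be a partial envy-free orientation of a bi-valued symmetric multigraph G (weights α > β ≥ 0) such that every heavy edge is oriented, the set M of unoriented edges is a matching in G, and π^G is privately envy-free between the two endvertices of every unoriented edge. Then there exists an extension π of π^G that orients all edges of M and is an EFX orientation of G. -/
/-- A vertex is an endvertex of an edge. -/
def incid {V E : Type*} (ends : E → V × V) (i : V) (e : E) : Prop :=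
  (ends e).1 = i ∨ (ends e).2 = i

set_option linter.unusedSectionVars false

section Aux

variable {V E : Type*} [Fintype E] [DecidableEq V] [DecidableEq E]

lemma util_mono (ends : E → V × V) (w : E → ℝ) (hwn : ∀ e, 0 ≤ w e) (i : V)
    {S T : Finset E} (hST : S ⊆ T) : util ends w i S ≤ util ends w i T := by
  apply Finset.sum_le_sum_of_subset_of_nonneg hST
  intro e _ _
  split
  · exact hwn e
  · exact le_rfl

lemma util_union (ends : E → V × V) (w : E → ℝ) (i : V)
    {S T : Finset E} (h : Disjoint S T) :
    util ends w i (S ∪ T) = util ends w i S + util ends w i T :=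
  Finset.sum_union h

lemma util_zero (ends : E → V × V) (w : E → ℝ) (i : V)
    {S : Finset E} (h : ∀ e ∈ S, ¬ ((ends e).1 = i ∨ (ends e).2 = i)) :
    util ends w i S = 0 :=
  Finset.sum_eq_zero fun e he => if_neg (h e he)

lemma util_sdiff_singleton (ends : E → V × V) (w : E → ℝ) (i : V)
    {S : Finset E} {e : E} (he : e ∈ S) :
    util ends w i (S \ {e}) =
      util ends w i S - (if (ends e).1 = i ∨ (ends e).2 = i then w e else 0) := by
  rw [util, Finset.sum_sdiff_eq_sub (Finset.singleton_subset_iff.mpr he)]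
  simp [util]

lemma edgesBetween_comm (ends : E → V × V) (i j : V) :
    edgesBetween ends i j = edgesBetween ends j i := by
  unfold edgesBetween
  ext e
  simp [or_comm]

lemma util_restrict (ends : E → V × V) (w : E → ℝ) {i j : V} (hij : i ≠ j)
    {S : Finset E} (hS : ∀ e ∈ S, (ends e).1 = j ∨ (ends e).2 = j) :
    util ends w i S = util ends w i (S ∩ edgesBetween ends i j) := by
  have h0 : ∑ e ∈ S \ edgesBetween ends i j,
      (if (ends e).1 = i ∨ (ends e).2 = i then w e else 0) = 0 := by
    apply Finset.sum_eq_zero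
    intro e he
    rw [Finset.mem_sdiff] at he
    apply if_neg
    intro hinc
    apply he.2
    simp only [edgesBetween, Finset.mem_filter, Finset.mem_univ, true_and]
    have hj := hS e he.1
    rcases hinc with h1 | h2
    · rcases hj with h1' | h2'
      · exact absurd (h1.symm.trans h1') hij
      · left
        rw [← h1, ← h2']
    · rcases hj with h1' | h2'
      · right
        rw [← h1', ← h2]
      · exact absurd (h2.symm.trans h2') hij
  have := Finset.sum_inter_add_sum_sdiff S (edgesBetween ends i j)
      (fun e => if (ends e).1 = i ∨ (ends e).2 = i then w e else 0)
  unfold util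
  linarith

end Aux

/-- let `πG` be a partial envy-free orientation of a bi-valued
symmetric multigraph in which all heavy edges are oriented, the unoriented
edges form a matching, and `πG` is privately envy-free between the endvertices
of every unoriented edge. Then `πG` extends to a (complete) EFX orientation. -/
theorem stmt11 {V E : Type*} [Fintype E] [DecidableEq V] [DecidableEq E]
    (ends : E → V × V) (heavy : E → Bool) (α β : ℝ) (hβ : 0 ≤ β) (hαβ : β < α)
    (w : E → ℝ) (hw : ∀ e, w e = if heavy e then α else β)
    (πG : E → Option V)
    (horient : ∀ e v, πG e = some v → v = (ends e).1 ∨ v = (ends e).2)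
    (hEF : ∀ i j : V, util ends w i (bundleP πG j) ≤ util ends w i (bundleP πG i))
    -- every heavy edge is oriented:
    (hheavy : ∀ e, heavy e = true → πG e ≠ none)
    -- the unoriented edges form a matching (no loops, pairwise disjoint):
    (hM1 : ∀ e, πG e = none → (ends e).1 ≠ (ends e).2)
    (hM2 : ∀ e e', πG e = none → πG e' = none → e ≠ e' →
        ∀ i : V, incid ends i e → ¬ incid ends i e')
    -- πG is PEF between the endvertices of every unoriented edge:
    (hPEF : ∀ e, πG e = none →
        (util ends w (ends e).1 (bundleP πG (ends e).1 ∩ edgesBetween ends (ends e).1 (ends e).2)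
          = util ends w (ends e).1 (bundleP πG (ends e).2 ∩ edgesBetween ends (ends e).1 (ends e).2)) ∧
        (util ends w (ends e).2 (bundleP πG (ends e).1 ∩ edgesBetween ends (ends e).1 (ends e).2)
          = util ends w (ends e).2 (bundleP πG (ends e).2 ∩ edgesBetween ends (ends e).1 (ends e).2))) :
    ∃ π : E → V,
      -- π is a complete orientation extending πG:
      (∀ e, π e = (ends e).1 ∨ π e = (ends e).2) ∧
      (∀ e v, πG e = some v → π e = v) ∧
      -- π is EFX: no vertex strongly envies another:
      (∀ i j : V, i ≠ j →
        ¬ ∃ e ∈ bundleT π j, util ends w i (bundleT π i) < util ends w i (bundleT π j \ {e})) := by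
  classical
  have hwn : ∀ e, 0 ≤ w e := by
    intro e
    rw [hw]
    split <;> linarith
  set π : E → V := fun e =>
    (πG e).getD
      (if bundleP πG (ends e).1 ⊆ edgesBetween ends (ends e).1 (ends e).2 ∨
          ¬ bundleP πG (ends e).2 ⊆ edgesBetween ends (ends e).1 (ends e).2
        then (ends e).1 else (ends e).2) with hπ
  have hext : ∀ e v, πG e = some v → π e = v := by
    intro e v h
    simp [hπ, h]
  have hcomp : ∀ e, π e = (ends e).1 ∨ π e = (ends e).2 := by
    intro e
    cases h : πG e with
    | none =>
        simp only [hπ, h, Option.getD_none]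
        split_ifs
        · exact Or.inl rfl
        · exact Or.inr rfl
    | some v =>
        rw [hext e v h]
        exact horient e v h
  refine ⟨π, hcomp, hext, ?_⟩
  intro i j hij
  rintro ⟨e0, he0, hlt⟩
  set N : V → Finset E := fun x => Finset.univ.filter (fun e => πG e = none ∧ π e = x) with hN
  have hmemN : ∀ x e, e ∈ N x ↔ (πG e = none ∧ π e = x) := by
    intro x e
    simp [hN]
  have hsplit : ∀ x, bundleT π x = bundleP πG x ∪ N x := by
    intro x
    ext e
    simp only [bundleT, bundleP, hN, Finset.mem_union, Finset.mem_filter, Finset.mem_univ,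
      true_and]
    constructor
    · intro h
      cases ho : πG e with
      | none => exact Or.inr ⟨rfl, h⟩
      | some v =>
          left
          exact congrArg some ((hext e v ho).symm.trans h)
    · rintro (h | ⟨_, h⟩)
      · exact hext e x h
      · exact h
  have hdisj : ∀ x, Disjoint (bundleP πG x) (N x) := by
    intro x
    rw [Finset.disjoint_left]
    intro e he hne
    rw [hmemN] at hne
    simp only [bundleP, Finset.mem_filter, Finset.mem_univ, true_and] at he
    rw [he] at hne
    exact Option.some_ne_none x hne.1
  have hNincid : ∀ x e, e ∈ N x → ((ends e).1 = x ∨ (ends e).2 = x) := by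
    intro x e he
    have h := (hmemN x e).1 he
    rcases hcomp e with h1 | h1
    · exact Or.inl (h1.symm.trans h.2)
    · exact Or.inr (h1.symm.trans h.2)
  have hutilT : ∀ x, util ends w i (bundleT π x)
      = util ends w i (bundleP πG x) + util ends w i (N x) := by
    intro x
    rw [hsplit x, util_union ends w i (hdisj x)]
  have hBsub : ∀ x, bundleP πG x ⊆ bundleT π x := by
    intro x
    rw [hsplit x]
    exact Finset.subset_union_left
  have hEFi : util ends w i (bundleP πG j) ≤ util ends w i (bundleT π i) :=
    le_trans (hEF i j) (util_mono ends w hwn i (hBsub i))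
  by_cases hA : ∀ m ∈ N j, ¬((ends m).1 = i ∨ (ends m).2 = i)
  · have h1 : util ends w i (bundleT π j \ {e0}) ≤ util ends w i (bundleT π j) :=
      util_mono ends w hwn i (Finset.sdiff_subset)
    have h2 : util ends w i (N j) = 0 := util_zero ends w i hA
    have h3 := hutilT j
    linarith
  · push_neg at hA
    obtain ⟨m, hmN, hminc⟩ := hA
    have hm := (hmemN j m).1 hmN
    have hmj : (ends m).1 = j ∨ (ends m).2 = j := hNincid j m hmN
    have hfs : (ends m).1 ≠ (ends m).2 := hM1 m hm.1
    have hij' : ((ends m).1 = i ∧ (ends m).2 = j) ∨ ((ends m).1 = j ∧ (ends m).2 = i) := by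
      rcases hminc with h1 | h1 <;> rcases hmj with h2 | h2
      · exact absurd (h1.symm.trans h2) hij
      · exact Or.inl ⟨h1, h2⟩
      · exact Or.inr ⟨h2, h1⟩
      · exact absurd (h1.symm.trans h2) hij
    have hNi : N i = ∅ := by
      ext e'
      simp only [Finset.notMem_empty, iff_false]
      intro he'
      have h' := (hmemN i e').1 he'
      by_cases hem : e' = m
      · rw [hem] at h'
        exact hij (hm.2.symm.trans h'.2).symm
      · exact hM2 e' m h'.1 hm.1 hem i (hNincid i e' he') hminc
    have hNj : N j = {m} := by
      ext e'
      simp only [Finset.mem_singleton]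
      constructor
      · intro he'
        by_contra hem
        have h' := (hmemN j e').1 he'
        exact hM2 e' m h'.1 hm.1 hem j (hNincid j e' he') hmj
      · intro h
        rw [h]
        exact hmN
    have hwm : w m = β := by
      rw [hw]
      cases hhe : heavy m with
      | false => simp
      | true => exact absurd hm.1 (hheavy m hhe)
    have hNjutil : util ends w i (N j) = w m := by
      rw [hNj]
      simp [util, if_pos hminc]
    have hBjinc : ∀ e ∈ bundleP πG j, (ends e).1 = j ∨ (ends e).2 = j := by
      intro e he
      simp only [bundleP, Finset.mem_filter, Finset.mem_univ, true_and] at he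
      rcases horient e j he with h | h
      · exact Or.inl h.symm
      · exact Or.inr h.symm
    have hBj1 : util ends w i (bundleP πG j)
        = util ends w i (bundleP πG j ∩ edgesBetween ends i j) :=
      util_restrict ends w hij hBjinc
    have hPEFm := hPEF m hm.1
    have hBj2 : util ends w i (bundleP πG j ∩ edgesBetween ends i j)
        = util ends w i (bundleP πG i ∩ edgesBetween ends i j) := by
      rcases hij' with ⟨h1, h2⟩ | ⟨h1, h2⟩
      · rw [h1, h2] at hPEFm
        exact hPEFm.1.symm
      · rw [h1, h2] at hPEFm
        rw [edgesBetween_comm ends i j]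
        exact hPEFm.2
    have hBj3 : util ends w i (bundleP πG j) ≤ util ends w i (bundleP πG i) := by
      rw [hBj1, hBj2]
      exact util_mono ends w hwn i Finset.inter_subset_left
    have hπm : π m = if (bundleP πG (ends m).1 ⊆ edgesBetween ends (ends m).1 (ends m).2 ∨
        ¬ bundleP πG (ends m).2 ⊆ edgesBetween ends (ends m).1 (ends m).2)
        then (ends m).1 else (ends m).2 := by
      simp [hπ, hm.1]
    have hOK : (bundleP πG j ⊆ edgesBetween ends i j) ∨
        (∃ e'' , e'' ∈ bundleP πG i ∧ e'' ∉ edgesBetween ends i j) := by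
      rcases hij' with ⟨h1, h2⟩ | ⟨h1, h2⟩
      · rw [h1, h2] at hπm
        by_cases hc : (bundleP πG i ⊆ edgesBetween ends i j ∨
            ¬ bundleP πG j ⊆ edgesBetween ends i j)
        · rw [if_pos hc] at hπm
          exact absurd (hm.2.symm.trans hπm).symm hij
        · rw [not_or, not_not] at hc
          exact Or.inl hc.2
      · rw [h1, h2] at hπm
        by_cases hc : (bundleP πG j ⊆ edgesBetween ends j i ∨
            ¬ bundleP πG i ⊆ edgesBetween ends j i)
        · rcases hc with hc | hc
          · left
            rw [edgesBetween_comm ends i j]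
            exact hc
          · right
            rw [edgesBetween_comm ends i j]
            exact Finset.not_subset.mp hc
        · rw [if_neg hc] at hπm
          exact absurd (hm.2.symm.trans hπm) (Ne.symm hij)
    have hTi : util ends w i (bundleT π i) = util ends w i (bundleP πG i) := by
      rw [hutilT i, hNi]
      simp [util]
    have hsd := util_sdiff_singleton ends w i he0
    have hTj : util ends w i (bundleT π j) = util ends w i (bundleP πG j) + β := by
      rw [hutilT j, hNjutil, hwm]
    set t0 := (if (ends e0).1 = i ∨ (ends e0).2 = i then w e0 else 0) with ht0
    have ht0n : 0 ≤ t0 := by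
      rw [ht0]
      split
      · exact hwn e0
      · exact le_rfl
    -- hlt now  : util i (B i) < util i (B j) + β - t0
    by_cases he0m : e0 = m
    · have ht0' : t0 = w m := by
        rw [ht0, he0m, if_pos hminc]
      rw [hwm] at ht0'
      linarith
    · have he0Bj : e0 ∈ bundleP πG j := by
        have : e0 ∈ bundleP πG j ∪ N j := by
          rw [← hsplit j]
          exact he0
        rcases Finset.mem_union.mp this with h | h
        · exact h
        · rw [hNj, Finset.mem_singleton] at h
          exact absurd h he0m
      rcases hOK with hOK | ⟨e'', he''B, he''E⟩
      · have he0E : e0 ∈ edgesBetween ends i j := hOK he0Bj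
        simp only [edgesBetween, Finset.mem_filter, Finset.mem_univ, true_and] at he0E
        have hinc0 : (ends e0).1 = i ∨ (ends e0).2 = i := by
          rcases he0E with h | h
          · left; rw [h]
          · right; rw [h]
        have ht0' : t0 = w e0 := by rw [ht0, if_pos hinc0]
        have hwe0 : β ≤ w e0 := by
          rw [hw]
          split <;> linarith
        linarith
      · have hi'' : (ends e'').1 = i ∨ (ends e'').2 = i := by
          simp only [bundleP, Finset.mem_filter, Finset.mem_univ, true_and] at he''B
          rcases horient e'' i he''B with h | h
          · exact Or.inl h.symm
          · exact Or.inr h.symm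
        have hmemd : e'' ∈ bundleP πG i \ edgesBetween ends i j :=
          Finset.mem_sdiff.mpr ⟨he''B, he''E⟩
        have hsingle : (if (ends e'').1 = i ∨ (ends e'').2 = i then w e'' else 0)
            ≤ ∑ e ∈ bundleP πG i \ edgesBetween ends i j,
              (if (ends e).1 = i ∨ (ends e).2 = i then w e else 0) := by
          apply Finset.single_le_sum (f := fun e =>
            (if (ends e).1 = i ∨ (ends e).2 = i then w e else 0)) _ hmemd
          intro e _
          split
          · exact hwn e
          · exact le_rfl
        rw [if_pos hi''] at hsingle
        have hwe'' : β ≤ w e'' := by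
          rw [hw]
          split <;> linarith
        have hdecomp := Finset.sum_inter_add_sum_sdiff (bundleP πG i) (edgesBetween ends i j)
          (fun e => if (ends e).1 = i ∨ (ends e).2 = i then w e else 0)
        have hBi : util ends w i (bundleP πG i)
            = util ends w i (bundleP πG i ∩ edgesBetween ends i j)
              + ∑ e ∈ bundleP πG i \ edgesBetween ends i j,
                (if (ends e).1 = i ∨ (ends e).2 = i then w e else 0) := by
          unfold util
          linarith
        rw [hBj1, hBj2] at hTj
        linarith
end

section
/- Let G be a connected bi-valued symmetric multigraph (weights α > β ≥ 0) that contains at least one non-trivial heavy component and no heavy component whose heavy edges induce a non-trivial odd multitree. Then there exists a partial envy-free orientation π^G of G such that all heavy edges are oriented, the unoriented edges form a matching in G, and π^G is privately envy-free between the endvertices of every unoriented edge. -/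
/-- Reachability by paths of edges. -/
def reach {V E : Type*} (ends : E → V × V) (sel : E → Bool) : V → V → Prop :=
  Relation.ReflTransGen (fun a b => ∃ e, sel e = true ∧ (ends e = (a, b) ∨ ends e = (b, a)))

/-- The heavy component of a vertex `v` has heavy edges inducing a non-trivial
odd multitree: it has at least two vertices, contains no heavy self-loop, its
condensed heavy graph is acyclic, and every adjacent pair of its vertices is
joined by an odd number of heavy edges. -/
def oddMultitreeAt {V E : Type*} [Fintype E] [DecidableEq V] [DecidableEq E]
    (ends : E → V × V) (heavy : E → Bool) (v : V) : Prop :=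
  (∃ b, b ≠ v ∧ reach ends heavy v b) ∧
  (∀ e u, heavy e = true → ends e = (u, u) → ¬ reach ends heavy v u) ∧
  (∀ u, reach ends heavy v u → ∀ p : (heavyGraph ends heavy).Walk u u, ¬ p.IsCycle) ∧
  (∀ a b, reach ends heavy v a → (heavyGraph ends heavy).Adj a b →
    Odd (((edgesBetween ends a b).filter (fun e => heavy e = true)).card))


set_option linter.unusedSectionVars false
open Finset
noncomputable section

namespace S12

variable {E : Type*} [LinearOrder E]

/-- rank of `e` inside `S`. -/
def eidx (S : Finset E) (e : E) : ℕ := (S.filter (fun a => a < e)).card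

lemma eidx_lt_card {S : Finset E} {e : E} (he : e ∈ S) : eidx S e < S.card := by
  refine card_lt_card ⟨filter_subset _ _, fun h => ?_⟩
  have := h he; simp at this

lemma eidx_strictMono {S : Finset E} {e f : E} (he : e ∈ S) (hef : e < f) :
    eidx S e < eidx S f := by
  have h1 : insert e (S.filter (fun a => a < e)) ⊆ S.filter (fun a => a < f) := by
    intro a ha; rcases mem_insert.1 ha with rfl | ha
    · exact mem_filter.2 ⟨he, hef⟩
    · rcases mem_filter.1 ha with ⟨h1, h2⟩; exact mem_filter.2 ⟨h1, h2.trans hef⟩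
  have h2 : e ∉ S.filter (fun a => a < e) := by simp
  have h3 := card_le_card h1
  rw [card_insert_of_notMem h2] at h3
  exact h3

lemma eidx_injOn {S : Finset E} {a b : E} (ha : a ∈ S) (hb : b ∈ S)
    (h : eidx S a = eidx S b) : a = b := by
  rcases lt_trichotomy a b with hl | rfl | hl
  · exact absurd h (ne_of_lt (eidx_strictMono ha hl))
  · rfl
  · exact absurd h.symm (ne_of_lt (eidx_strictMono hb hl))

lemma eidx_image (S : Finset E) [DecidableEq E] : S.image (eidx S) = range S.card := by
  apply eq_of_subset_of_card_le
  · intro k hk; rcases mem_image.1 hk with ⟨e, he, rfl⟩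
    exact mem_range.2 (eidx_lt_card he)
  · rw [card_range, card_image_of_injOn (fun a ha b hb => eidx_injOn ha hb)]

lemma exists_eidx {S : Finset E} {k : ℕ} (hk : k < S.card) : ∃ e ∈ S, eidx S e = k := by
  classical
  have : k ∈ S.image (eidx S) := by rw [eidx_image]; exact mem_range.2 hk
  rcases mem_image.1 this with ⟨e, he, h⟩; exact ⟨e, he, h⟩

/-- membership-characterized counting transport. -/
lemma card_eidx_transport (S : Finset E) (p : ℕ → Prop) (T : Finset E) (U : Finset ℕ)
    (hT : ∀ e, e ∈ T ↔ e ∈ S ∧ p (eidx S e)) (hU : ∀ k, k ∈ U ↔ k < S.card ∧ p k) :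
    T.card = U.card := by
  apply card_bij (fun e _ => eidx S e)
  · intro e he; rcases (hT e).1 he with ⟨h1, h2⟩
    exact (hU _).2 ⟨eidx_lt_card h1, h2⟩
  · intro a ha b hb h
    exact eidx_injOn ((hT a).1 ha).1 ((hT b).1 hb).1 h
  · intro k hk; rcases (hU k).1 hk with ⟨h1, h2⟩
    rcases exists_eidx h1 with ⟨e, he, rfl⟩
    exact ⟨e, (hT e).2 ⟨he, h2⟩, rfl⟩

lemma card_even_range (n : ℕ) : ((range n).filter (fun k => k % 2 = 0)).card = (n+1)/2 := by
  induction n with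
  | zero => simp
  | succ n ih =>
    rw [range_add_one, filter_insert]
    by_cases h : n % 2 = 0
    · rw [if_pos h, card_insert_of_notMem (by simp), ih]; omega
    · rw [if_neg h, ih]; omega

lemma card_odd_range (n : ℕ) : ((range n).filter (fun k => k % 2 = 1)).card = n/2 := by
  have h1 : ((range n).filter (fun k => k % 2 = 1)) = range n \ ((range n).filter (fun k => k % 2 = 0)) := by
    ext k; simp only [mem_filter, mem_sdiff, mem_range]; omega
  rw [h1, card_sdiff_of_subset (filter_subset _ _), card_even_range, card_range]; omega

lemma card_balA (S : Finset E) :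
    (S.filter (fun e => eidx S e % 2 = 0 ∧ ¬(S.card % 2 = 1 ∧ eidx S e = S.card - 1))).card
      = S.card / 2 := by
  by_cases h : S.card % 2 = 1
  · rw [card_eidx_transport S (fun k => k % 2 = 0 ∧ ¬(S.card % 2 = 1 ∧ k = S.card - 1)) _
      ((range (S.card - 1)).filter (fun k => k % 2 = 0))
      (fun e => mem_filter) (fun k => by simp only [mem_filter, mem_range]; omega),
      card_even_range]
    omega
  · rw [card_eidx_transport S (fun k => k % 2 = 0 ∧ ¬(S.card % 2 = 1 ∧ k = S.card - 1)) _
      ((range S.card).filter (fun k => k % 2 = 0))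
      (fun e => mem_filter) (fun k => by simp only [mem_filter, mem_range]; omega),
      card_even_range]
    omega

lemma card_balB (S : Finset E) :
    (S.filter (fun e => eidx S e % 2 = 1 ∧ ¬(S.card % 2 = 1 ∧ eidx S e = S.card - 1))).card
      = S.card / 2 := by
  rw [card_eidx_transport S (fun k => k % 2 = 1 ∧ ¬(S.card % 2 = 1 ∧ k = S.card - 1)) _
      ((range S.card).filter (fun k => k % 2 = 1))
      (fun e => mem_filter) (fun k => by simp only [mem_filter, mem_range]; omega),
      card_odd_range]

lemma card_leftover (S : Finset E) (h : S.card % 2 = 1) :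
    (S.filter (fun e => S.card % 2 = 1 ∧ eidx S e = S.card - 1)).card = 1 := by
  have hU : ∀ k, k ∈ ({S.card - 1} : Finset ℕ) ↔ k < S.card ∧ (S.card % 2 = 1 ∧ k = S.card - 1) := by
    intro k
    simp only [mem_singleton]
    constructor
    · rintro rfl
      exact ⟨by omega, h, rfl⟩
    · rintro ⟨-, -, rfl⟩
      rfl
  rw [card_eidx_transport S (fun k => S.card % 2 = 1 ∧ k = S.card - 1) _
      ({S.card - 1} : Finset ℕ) (fun e => mem_filter) hU, card_singleton]

lemma exists_leftover (S : Finset E) (h : S.card % 2 = 1) :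
    ∃ e ∈ S, eidx S e = S.card - 1 := by
  have h1 : 0 < S.card := by omega
  rcases exists_eidx (S := S) (k := S.card - 1) (by omega) with ⟨e, he, h2⟩
  exact ⟨e, he, h2⟩


attribute [local instance] Classical.propDecidable

section Rank
variable {V : Type*}

/-- `ball R A n v`: `v` is within `n` `R`-steps of the seed set `A`. -/
def ball (R : V → V → Prop) (A : V → Prop) : ℕ → V → Prop
  | 0 => A
  | (n+1) => fun v => A v ∨ ∃ u, R u v ∧ ball R A n u

lemma ball_succ {R : V → V → Prop} {A : V → Prop} {n : ℕ} {v : V}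
    (hv : ball R A n v) : ball R A (n+1) v := by
  induction n generalizing v with
  | zero => exact Or.inl hv
  | succ n ih =>
    rcases hv with h | ⟨u, h1, h2⟩
    · exact Or.inl h
    · exact Or.inr ⟨u, h1, ih h2⟩

lemma ball_step {R : V → V → Prop} {A : V → Prop} {n : ℕ} {u v : V}
    (h : R u v) (hu : ball R A n u) : ball R A (n+1) v :=
  Or.inr ⟨u, h, hu⟩

lemma ball_of_reflTransGen {R : V → V → Prop} {A : V → Prop} {a v : V}
    (ha : A a) (h : Relation.ReflTransGen R a v) : ∃ n, ball R A n v := by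
  induction h with
  | refl => exact ⟨0, ha⟩
  | tail _ hstep ih => rcases ih with ⟨n, hn⟩; exact ⟨n+1, ball_step hstep hn⟩

/-- rank: distance to the seed set. -/
noncomputable def rnk (R : V → V → Prop) (A : V → Prop) (v : V) : ℕ :=
  if h : ∃ n, ball R A n v then Nat.find h else 0

lemma ball_rnk {R : V → V → Prop} {A : V → Prop} {v : V} (h : ∃ n, ball R A n v) :
    ball R A (rnk R A v) v := by
  rw [rnk, dif_pos h]; exact Nat.find_spec h

lemma rnk_le {R : V → V → Prop} {A : V → Prop} {v : V} {n : ℕ} (hn : ball R A n v) :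
    rnk R A v ≤ n := by
  rw [rnk, dif_pos ⟨n, hn⟩]; exact Nat.find_le hn

lemma rnk_of_A {R : V → V → Prop} {A : V → Prop} {v : V} (hA : A v) : rnk R A v = 0 :=
  Nat.le_zero.1 (rnk_le (show ball R A 0 v from hA))

lemma A_of_rnk_zero {R : V → V → Prop} {A : V → Prop} {v : V} (h : ∃ n, ball R A n v)
    (h0 : rnk R A v = 0) : A v := by
  have := ball_rnk h; rw [h0] at this; exact this

lemma exists_parent {R : V → V → Prop} {A : V → Prop} {v : V} (h : ∃ n, ball R A n v)
    (h0 : ¬ A v) : ∃ u, R u v ∧ (∃ n, ball R A n u) ∧ rnk R A v = rnk R A u + 1 := by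
  have hb := ball_rnk h
  rcases hn : rnk R A v with _ | m
  · rw [hn] at hb; exact absurd hb h0
  · rw [hn] at hb
    rcases hb with hA | ⟨u, h1, h2⟩
    · exact absurd hA h0
    · refine ⟨u, h1, ⟨m, h2⟩, ?_⟩
      have hle : rnk R A u ≤ m := rnk_le h2
      have : rnk R A v ≤ rnk R A u + 1 := rnk_le (ball_step h1 (ball_rnk ⟨m, h2⟩))
      omega

/-- the parent of a non-seed vertex. -/
noncomputable def par (R : V → V → Prop) (A : V → Prop) (v : V) : V :=
  if h : (∃ n, ball R A n v) ∧ ¬ A v then Classical.choose (exists_parent h.1 h.2) else v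

lemma par_spec {R : V → V → Prop} {A : V → Prop} {v : V} (h : ∃ n, ball R A n v)
    (h0 : ¬ A v) : R (par R A v) v ∧ (∃ n, ball R A n (par R A v)) ∧
      rnk R A v = rnk R A (par R A v) + 1 := by
  rw [par, dif_pos (⟨h, h0⟩ : (∃ n, ball R A n v) ∧ ¬ A v)]
  exact Classical.choose_spec (exists_parent h h0)

end Rank
section Graph
variable {V E : Type*} [Fintype E] [DecidableEq V] [DecidableEq E] [LinearOrder E]
variable (ends : E → V × V) (heavy : E → Bool)

/-- the unordered pair of endpoints of an edge. -/
def cls (e : E) : Sym2 V := s((ends e).1, (ends e).2)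

/-- all edges in a given parallel class. -/
def Acl (q : Sym2 V) : Finset E := Finset.univ.filter (fun e => cls ends e = q)

/-- the edges of a parallel class of a given weight kind. -/
def Ecls (q : Sym2 V) (b : Bool) : Finset E :=
  Finset.univ.filter (fun e => cls ends e = q ∧ heavy e = b)

def hcard (q : Sym2 V) : ℕ := (Ecls ends heavy q true).card
def lcard (q : Sym2 V) : ℕ := (Ecls ends heavy q false).card

lemma mem_Ecls {q b e} : e ∈ Ecls ends heavy q b ↔ cls ends e = q ∧ heavy e = b := by
  simp [Ecls]

lemma cls_eq_iff {e : E} {i j : V} :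
    cls ends e = s(i,j) ↔ ends e = (i, j) ∨ ends e = (j, i) := by
  rw [cls, Sym2.eq_iff]
  constructor
  · rintro (⟨h1, h2⟩ | ⟨h1, h2⟩)
    · left; exact Prod.ext h1 h2
    · right; exact Prod.ext h1 h2
  · rintro (h | h) <;> rw [h] <;> simp

lemma edgesBetween_eq (i j : V) : edgesBetween ends i j = Acl ends s(i,j) := by
  ext e; simp only [edgesBetween, Acl, Finset.mem_filter, Finset.mem_univ, true_and]
  rw [cls_eq_iff]

lemma Acl_eq_union (q : Sym2 V) :
    Acl ends q = Ecls ends heavy q true ∪ Ecls ends heavy q false := by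
  ext e
  simp only [Acl, Ecls, Finset.mem_filter, Finset.mem_univ, true_and, Finset.mem_union]
  by_cases h : heavy e = true
  · tauto
  · simp only [Bool.not_eq_true] at h; tauto

lemma incid_of_cls {e : E} {i j : V} (h : cls ends e = s(i,j)) : incid ends i e := by
  rw [cls_eq_iff] at h
  rcases h with h | h <;> rw [incid, h]
  · exact Or.inl rfl
  · exact Or.inr rfl

lemma cls_isDiag_iff {e : E} : (cls ends e).IsDiag ↔ (ends e).1 = (ends e).2 := by
  rw [cls]; exact Sym2.mk_isDiag_iff

/-- the heavy condensed adjacency. -/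
def Rh : V → V → Prop := fun a b => a ≠ b ∧ ∃ e, heavy e = true ∧ cls ends e = s(a,b)

/-- heavy condensed adjacency avoiding one forbidden class. -/
def RhX (X : Option (Sym2 V)) : V → V → Prop :=
  fun a b => Rh ends heavy a b ∧ ∀ q, X = some q → s(a,b) ≠ q

/-- the full condensed adjacency. -/
def Rg : V → V → Prop := fun a b => a ≠ b ∧ ∃ e, cls ends e = s(a,b)

lemma Rh_symm {a b} (h : Rh ends heavy a b) : Rh ends heavy b a := by
  obtain ⟨h1, e, h2, h3⟩ := h
  exact ⟨h1.symm, e, h2, by rwa [Sym2.eq_swap]⟩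

lemma RhX_symm {X a b} (h : RhX ends heavy X a b) : RhX ends heavy X b a := by
  obtain ⟨h1, h2⟩ := h
  exact ⟨Rh_symm ends heavy h1, fun q hq => by rw [Sym2.eq_swap]; exact h2 q hq⟩

lemma Rg_symm {a b} (h : Rg ends a b) : Rg ends b a := by
  obtain ⟨h1, e, h2⟩ := h
  exact ⟨h1.symm, e, by rwa [Sym2.eq_swap]⟩

lemma reach_symm {sel : E → Bool} {a b : V} (h : reach ends sel a b) : reach ends sel b a := by
  refine (@Relation.ReflTransGen.symmetric _ _ ⟨?_⟩).symm _ _ h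
  rintro x y ⟨e, h1, h2⟩
  exact ⟨e, h1, h2.symm⟩

lemma reach_step_iff {sel : E → Bool} {a b : V} :
    (∃ e, sel e = true ∧ (ends e = (a, b) ∨ ends e = (b, a))) ↔
      ∃ e, sel e = true ∧ cls ends e = s(a,b) := by
  constructor
  · rintro ⟨e, h1, h2⟩; exact ⟨e, h1, (cls_eq_iff ends).2 h2⟩
  · rintro ⟨e, h1, h2⟩; exact ⟨e, h1, (cls_eq_iff ends).1 h2⟩

/-- turn a heavy reach into a loop-free condensed path. -/
lemma reach_to_Rh {a b : V} (h : reach ends heavy a b) :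
    Relation.ReflTransGen (Rh ends heavy) a b := by
  induction h with
  | refl => exact Relation.ReflTransGen.refl
  | tail _ hstep ih =>
    rename_i x y _
    rcases hstep with ⟨e, h1, h2⟩
    by_cases hxy : x = y
    · rwa [hxy] at ih
    · exact ih.tail ⟨hxy, e, h1, (cls_eq_iff ends).2 h2⟩

lemma Rh_to_reach {a b : V} (h : Relation.ReflTransGen (Rh ends heavy) a b) :
    reach ends heavy a b := by
  induction h with
  | refl => exact Relation.ReflTransGen.refl
  | tail _ hstep ih =>
    rcases hstep with ⟨_, e, h1, h2⟩
    exact ih.tail ((reach_step_iff ends).2 ⟨e, h1, h2⟩)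

/-- vertices of non-trivial heavy components. -/
def Bv : V → Prop := fun v => ∃ u, u ≠ v ∧ reach ends heavy v u

lemma Bv_of_Rh {a b : V} (h : Rh ends heavy a b) : Bv ends heavy a := by
  rcases h with ⟨h1, e, h2, h3⟩
  exact ⟨b, fun hb => h1 hb.symm,
    Relation.ReflTransGen.single ((reach_step_iff ends).2 ⟨e, h2, h3⟩)⟩

lemma Bv_invariant {a b : V} (h : reach ends heavy a b) (hB : Bv ends heavy a) :
    Bv ends heavy b := by
  rcases hB with ⟨u, hu, hru⟩
  by_cases hub : u = b
  · subst hub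
    exact ⟨a, fun hab => hu (by rw [hab]), reach_symm ends h⟩
  · exact ⟨u, hub, (reach_symm ends h).trans hru⟩

/-! ### Gadgets for heavy components -/

/-- coverage specification of a seed vertex. -/
def CovSpec (D : Option (Sym2 V × V)) (a : V) : Prop :=
  (∃ e, heavy e = true ∧ ends e = (a, a)) ∨
  (∃ q : Sym2 V, a ∈ q ∧ ¬ q.IsDiag ∧ 1 ≤ hcard ends heavy q ∧ hcard ends heavy q % 2 = 0) ∨
  (∃ q c₀, D = some (q, c₀) ∧ a = c₀)

/-- gadget specification for the heavy component of `v`. -/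
def GSpec (v : V) (A : Finset V) (D : Option (Sym2 V × V)) : Prop :=
  A.Nonempty ∧ (∀ a ∈ A, reach ends heavy v a) ∧
  (∀ u, reach ends heavy v u →
    ∃ a ∈ A, Relation.ReflTransGen (RhX ends heavy (D.map Prod.fst)) u a) ∧
  (∀ a ∈ A, CovSpec ends heavy D a) ∧
  (∀ q c₀, D = some (q, c₀) →
    c₀ ∈ A ∧ c₀ ∈ q ∧ ¬ q.IsDiag ∧ 1 ≤ hcard ends heavy q ∧ hcard ends heavy q % 2 = 1)

lemma GSpec_congr {v v' : V} (h : reach ends heavy v v') (A : Finset V)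
    (D : Option (Sym2 V × V)) : GSpec ends heavy v A D ↔ GSpec ends heavy v' A D := by
  have key : ∀ u, reach ends heavy v u ↔ reach ends heavy v' u :=
    fun u => ⟨fun hu => (reach_symm ends h).trans hu, fun hu => h.trans hu⟩
  unfold GSpec
  constructor
  · rintro ⟨h1, h2, h3, h4, h5⟩
    exact ⟨h1, fun a ha => (key a).1 (h2 a ha), fun u hu => h3 u ((key u).2 hu), h4, h5⟩
  · rintro ⟨h1, h2, h3, h4, h5⟩
    exact ⟨h1, fun a ha => (key a).2 (h2 a ha), fun u hu => h3 u ((key u).1 hu), h4, h5⟩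

lemma hAdj_to_Rh {a b : V} (h : (heavyGraph ends heavy).Adj a b) : Rh ends heavy a b := by
  rcases h with ⟨h1, e, h2, h3⟩
  exact ⟨h1, e, h2, (cls_eq_iff ends).2 h3⟩

lemma hcard_pos_of_Rh {a b : V} (h : Rh ends heavy a b) :
    1 ≤ hcard ends heavy s(a,b) := by
  rcases h with ⟨h1, e, h2, h3⟩
  refine Finset.card_pos.2 ⟨e, (mem_Ecls ends heavy).2 ⟨h3, h2⟩⟩

lemma RhX_none_of_Rh {a b : V} (h : Rh ends heavy a b) : RhX ends heavy none a b :=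
  ⟨h, fun q hq => by cases hq⟩

lemma rtg_RhX_none {a b : V} (h : Relation.ReflTransGen (Rh ends heavy) a b) :
    Relation.ReflTransGen (RhX ends heavy none) a b :=
  Relation.ReflTransGen.mono (fun _ _ hr => RhX_none_of_Rh ends heavy hr) _ _ h

/-- a walk in the heavy graph avoiding a class gives restricted reachability. -/
lemma walk_avoid {x u : V} {qc : Sym2 V} (p : (heavyGraph ends heavy).Walk x u) :
    qc ∉ p.edges → Relation.ReflTransGen (RhX ends heavy (some qc)) x u := by
  induction p with
  | nil => exact fun _ => Relation.ReflTransGen.refl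
  | @cons a b c h' q ih =>
    intro hp
    rw [SimpleGraph.Walk.edges_cons, List.mem_cons] at hp
    push_neg at hp
    refine Relation.ReflTransGen.head ⟨hAdj_to_Rh ends heavy h', ?_⟩ (ih hp.2)
    rintro q' hq'
    injection hq' with hq'
    subst hq'
    exact fun hh => hp.1 hh.symm

/-- rewiring: if `x` (the neighbour of `u` across `qc = s(u,x)`) can reach `u`
avoiding `qc`, then anything that heavy-reaches `u` can reach `u` avoiding `qc`. -/
lemma rewire {u x : V} (hux : u ≠ x)
    (hx : Relation.ReflTransGen (RhX ends heavy (some s(u,x))) x u) :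
    ∀ w, Relation.ReflTransGen (Rh ends heavy) w u →
      Relation.ReflTransGen (RhX ends heavy (some s(u,x))) w u := by
  intro w hw
  induction hw using Relation.ReflTransGen.head_induction_on with
  | refl => exact Relation.ReflTransGen.refl
  | head hstep _ ih =>
    rename_i a b _
    by_cases hq : s(a,b) = s(u,x)
    · rw [Sym2.eq_iff] at hq
      rcases hq with ⟨rfl, rfl⟩ | ⟨rfl, rfl⟩
      · exact Relation.ReflTransGen.refl
      · exact hx
    · exact Relation.ReflTransGen.head ⟨hstep, fun q' hq' => by injection hq' with h'; rw [← h']; exact hq⟩ ih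

lemma gadget_exists (v : V) (hv : Bv ends heavy v)
    (hno : ¬ oddMultitreeAt ends heavy v) :
    ∃ A D, GSpec ends heavy v A D := by
  have conn : ∀ (t : V), reach ends heavy v t →
      ∀ u, reach ends heavy v u → Relation.ReflTransGen (Rh ends heavy) u t := by
    intro t ht u hu
    exact reach_to_Rh ends heavy ((reach_symm ends hu).trans ht)
  by_cases h2 : (∀ e u, heavy e = true → ends e = (u, u) → ¬ reach ends heavy v u)
  · by_cases h4 : (∀ a b, reach ends heavy v a → (heavyGraph ends heavy).Adj a b →
        Odd (((edgesBetween ends a b).filter (fun e => heavy e = true)).card))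
    · by_cases h3 : (∀ u, reach ends heavy v u →
          ∀ p : (heavyGraph ends heavy).Walk u u, ¬ p.IsCycle)
      · exact absurd ⟨hv, h2, h3, h4⟩ hno
      · -- cycle case
        push_neg at h3
        obtain ⟨u, hu, p, hp⟩ := h3
        cases p with
        | nil => exact absurd hp (by simp [SimpleGraph.Walk.isCycle_def])
        | @cons _ x _ h' q =>
          have hRh : Rh ends heavy u x := hAdj_to_Rh ends heavy h'
          have hux : u ≠ x := hRh.1
          have hxu : Relation.ReflTransGen (RhX ends heavy (some s(u,x))) x u := by
            apply walk_avoid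
            have hnd := hp.edges_nodup
            rw [SimpleGraph.Walk.edges_cons] at hnd
            have := List.nodup_cons.1 hnd
            intro hmem
            exact this.1 (by simpa using hmem)
          have hcpos : 1 ≤ hcard ends heavy s(u,x) := hcard_pos_of_Rh ends heavy hRh
          by_cases hpar : hcard ends heavy s(u,x) % 2 = 0
          · refine ⟨{u}, none, Finset.singleton_nonempty u, ?_, ?_, ?_, by simp⟩
            · intro a ha; rw [Finset.mem_singleton] at ha; rw [ha]; exact hu
            · intro w hw
              exact ⟨u, Finset.mem_singleton_self u,
                rtg_RhX_none ends heavy (conn u hu w hw)⟩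
            · intro a ha; rw [Finset.mem_singleton] at ha; rw [ha]
              exact Or.inr (Or.inl ⟨s(u,x), Sym2.mem_mk_left u x,
                fun hd => hux (Sym2.mk_isDiag_iff.1 hd), hcpos, hpar⟩)
          · refine ⟨{u}, some (s(u,x), u), Finset.singleton_nonempty u, ?_, ?_, ?_, ?_⟩
            · intro a ha; rw [Finset.mem_singleton] at ha; rw [ha]; exact hu
            · intro w hw
              exact ⟨u, Finset.mem_singleton_self u,
                rewire ends heavy hux hxu w (conn u hu w hw)⟩
            · intro a ha; rw [Finset.mem_singleton] at ha; rw [ha]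
              exact Or.inr (Or.inr ⟨s(u,x), u, rfl, rfl⟩)
            · rintro q' c₀ hq'
              injection hq' with hq'
              simp only [Prod.mk.injEq] at hq'
              obtain ⟨h1e, h2e⟩ := hq'
              subst h1e; subst h2e
              exact ⟨Finset.mem_singleton_self u, Sym2.mem_mk_left u x,
                fun hd => hux (Sym2.mk_isDiag_iff.1 hd), hcpos, by omega⟩
    · -- even class case
      push_neg at h4
      obtain ⟨a, b, ha, hadj, hodd⟩ := h4
      have hRh : Rh ends heavy a b := hAdj_to_Rh ends heavy hadj
      have hab : a ≠ b := hRh.1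
      have hhb : reach ends heavy v b := by
        refine ha.tail ?_
        rcases hRh with ⟨-, e, he1, he2⟩
        exact (reach_step_iff ends).2 ⟨e, he1, he2⟩
      have hcpos : 1 ≤ hcard ends heavy s(a,b) := hcard_pos_of_Rh ends heavy hRh
      have heven : hcard ends heavy s(a,b) % 2 = 0 := by
        have : ((edgesBetween ends a b).filter (fun e => heavy e = true)).card
            = hcard ends heavy s(a,b) := by
          congr 1
          rw [edgesBetween_eq]
          ext e
          simp only [Finset.mem_filter, Acl, Ecls, Finset.mem_univ, true_and, mem_Ecls]
        rw [this] at hodd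
        rcases Nat.even_or_odd (hcard ends heavy s(a,b)) with h | h
        · exact Nat.even_iff.1 h
        · exact absurd h hodd
      refine ⟨{a, b}, none, ⟨a, by simp⟩, ?_, ?_, ?_, by simp⟩
      · intro c hc
        rcases Finset.mem_insert.1 hc with h | hc
        · rw [h]; exact ha
        · rw [Finset.mem_singleton] at hc; rw [hc]; exact hhb
      · intro w hw
        exact ⟨a, by simp, rtg_RhX_none ends heavy (conn a ha w hw)⟩
      · intro c hc
        have hq : ¬ (s(a,b) : Sym2 V).IsDiag := fun hd => hab (Sym2.mk_isDiag_iff.1 hd)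
        rcases Finset.mem_insert.1 hc with h | hc
        · rw [h]; exact Or.inr (Or.inl ⟨s(a,b), Sym2.mem_mk_left a b, hq, hcpos, heven⟩)
        · rw [Finset.mem_singleton] at hc; rw [hc]
          exact Or.inr (Or.inl ⟨s(a,b), Sym2.mem_mk_right a b, hq, hcpos, heven⟩)
  · -- loop case
    push_neg at h2
    obtain ⟨e, u, he, hee, hu⟩ := h2
    refine ⟨{u}, none, Finset.singleton_nonempty u, ?_, ?_, ?_, by simp⟩
    · intro a ha; rw [Finset.mem_singleton] at ha; rw [ha]; exact hu
    · intro w hw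
      exact ⟨u, Finset.mem_singleton_self u, rtg_RhX_none ends heavy (conn u hu w hw)⟩
    · intro a ha; rw [Finset.mem_singleton] at ha; rw [ha]
      exact Or.inl ⟨e, he, hee⟩

/-- chosen gadget for (the component of) each vertex. -/
def gadP (v : V) : Finset V × Option (Sym2 V × V) :=
  Classical.epsilon (fun p : Finset V × Option (Sym2 V × V) => GSpec ends heavy v p.1 p.2)

def gadA (v : V) : Finset V := (gadP ends heavy v).1
def gadD (v : V) : Option (Sym2 V × V) := (gadP ends heavy v).2

lemma gadP_congr {v v' : V} (h : reach ends heavy v v') :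
    gadP ends heavy v = gadP ends heavy v' := by
  unfold gadP
  congr 1
  funext p
  exact propext (GSpec_congr ends heavy h p.1 p.2)

lemma gadP_spec (hno : ∀ t : V, ¬ oddMultitreeAt ends heavy t) {v : V}
    (hv : Bv ends heavy v) :
    GSpec ends heavy v (gadA ends heavy v) (gadD ends heavy v) := by
  obtain ⟨A, D, hAD⟩ := gadget_exists ends heavy v hv (hno v)
  exact Classical.epsilon_spec (p := fun p : Finset V × Option (Sym2 V × V) =>
    GSpec ends heavy v p.1 p.2) ⟨(A, D), hAD⟩

/-! ### Heavy ranks and directions -/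

/-- heavy-phase rank of a vertex relative to the gadget of its component. -/
def rnkH (v : V) : ℕ :=
  rnk (RhX ends heavy ((gadD ends heavy v).map Prod.fst))
    (fun a => a ∈ gadA ends heavy v) v

/-- heavy-phase parent. -/
def parH (v : V) : V :=
  par (RhX ends heavy ((gadD ends heavy v).map Prod.fst))
    (fun a => a ∈ gadA ends heavy v) v

lemma out_pair {q : Sym2 V} {a b : V} (h : q = s(a,b)) :
    q.out = (a, b) ∨ q.out = (b, a) := by
  have h2 : s(q.out.1, q.out.2) = s(a,b) := by rw [← h]; exact q.out_eq
  rw [Sym2.eq_iff] at h2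
  rcases h2 with ⟨h3, h4⟩ | ⟨h3, h4⟩
  · left; exact Prod.ext h3 h4
  · right; exact Prod.ext h3 h4

lemma mem_out {q : Sym2 V} {v : V} (h : v ∈ q) : v = q.out.1 ∨ v = q.out.2 := by
  rw [← q.out_eq] at h
  exact Sym2.mem_iff.1 h

lemma out_nd {q : Sym2 V} (hd : ¬ q.IsDiag) : q.out.1 ≠ q.out.2 := by
  intro he; exact hd (by rw [← q.out_eq]; exact Sym2.mk_isDiag_iff.2 he)

lemma gad_eq_of_reach {u v : V} (h : reach ends heavy u v) :
    gadA ends heavy u = gadA ends heavy v ∧ gadD ends heavy u = gadD ends heavy v := by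
  rw [gadA, gadA, gadD, gadD, gadP_congr ends heavy h]
  exact ⟨rfl, rfl⟩

lemma reach_of_Rh {a b : V} (h : Rh ends heavy a b) : reach ends heavy a b := by
  rcases h with ⟨-, e, h1, h2⟩
  exact Relation.ReflTransGen.single ((reach_step_iff ends).2 ⟨e, h1, h2⟩)

lemma ballH_exists (hno : ∀ t : V, ¬ oddMultitreeAt ends heavy t) {v : V}
    (hv : Bv ends heavy v) :
    ∃ n, ball (RhX ends heavy ((gadD ends heavy v).map Prod.fst))
      (fun a => a ∈ gadA ends heavy v) n v := by
  obtain ⟨hA, h2, h3, h4, h5⟩ := gadP_spec ends heavy hno hv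
  obtain ⟨a, ha, hrtg⟩ := h3 v Relation.ReflTransGen.refl
  have hrev : Relation.ReflTransGen
      (RhX ends heavy ((gadD ends heavy v).map Prod.fst)) a v :=
    (@Relation.ReflTransGen.symmetric _ _ ⟨fun _ _ hr => RhX_symm ends heavy hr⟩).symm _ _ hrtg
  exact ball_of_reflTransGen ha hrev

lemma parH_spec (hno : ∀ t : V, ¬ oddMultitreeAt ends heavy t) {v : V}
    (hv : Bv ends heavy v) (hA : v ∉ gadA ends heavy v) :
    RhX ends heavy ((gadD ends heavy v).map Prod.fst) (parH ends heavy v) v ∧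
    Bv ends heavy (parH ends heavy v) ∧
    gadA ends heavy (parH ends heavy v) = gadA ends heavy v ∧
    gadD ends heavy (parH ends heavy v) = gadD ends heavy v ∧
    rnkH ends heavy v = rnkH ends heavy (parH ends heavy v) + 1 := by
  obtain ⟨hstep, hball, hrnk⟩ := par_spec (ballH_exists ends heavy hno hv) hA
  have hBp : Bv ends heavy (parH ends heavy v) := Bv_of_Rh ends heavy hstep.1
  have hre : reach ends heavy (parH ends heavy v) v := reach_of_Rh ends heavy hstep.1
  obtain ⟨hgA, hgD⟩ := gad_eq_of_reach ends heavy hre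
  refine ⟨hstep, hBp, hgA, hgD, ?_⟩
  rw [rnkH, rnkH, hgA, hgD]
  exact hrnk

/-- direction of the heavy leftover of a class. -/
def dirH (q : Sym2 V) : V :=
  if h : ∃ c₀, gadD ends heavy q.out.1 = some (q, c₀) then h.choose
  else if rnkH ends heavy q.out.2 < rnkH ends heavy q.out.1 then q.out.1 else q.out.2

/-- the opposite endpoint to the heavy leftover direction. -/
def oppH (q : Sym2 V) : V :=
  if dirH ends heavy q = q.out.1 then q.out.2 else q.out.1

lemma oppH_mem_out (q : Sym2 V) :
    oppH ends heavy q = q.out.1 ∨ oppH ends heavy q = q.out.2 := by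
  rw [oppH]; split_ifs
  · exact Or.inr rfl
  · exact Or.inl rfl

lemma oppH_ne (q : Sym2 V) (hd : ¬ q.IsDiag) :
    oppH ends heavy q ≠ dirH ends heavy q := by
  have hxy := out_nd (q := q) hd
  rw [oppH]
  split_ifs with h
  · rw [h]; exact Ne.symm hxy
  · intro hc; exact h hc.symm

/-- if the parent class is the class `q`, its heavy leftover goes to the child. -/
lemma dirH_PH (hno : ∀ t : V, ¬ oddMultitreeAt ends heavy t) {v : V}
    (hv : Bv ends heavy v) (hA : v ∉ gadA ends heavy v) :
    dirH ends heavy s(parH ends heavy v, v) = v := by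
  obtain ⟨hstep, hBp, hgA, hgD, hrnk⟩ := parH_spec ends heavy hno hv hA
  set p := parH ends heavy v with hp
  set q : Sym2 V := s(p, v) with hq
  have hout : q.out = (p, v) ∨ q.out = (v, p) := out_pair hq
  have hg1 : gadD ends heavy q.out.1 = gadD ends heavy v := by
    rcases hout with h | h <;> rw [h]
    exact hgD
  have hov : ¬ ∃ c₀, gadD ends heavy q.out.1 = some (q, c₀) := by
    rintro ⟨c₀, hc⟩
    rw [hg1] at hc
    exact hstep.2 q (by rw [hc]; rfl) rfl
  rw [dirH, dif_neg hov]
  rcases hout with h | h <;> rw [h] <;> dsimp only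
  · rw [if_neg (by omega)]
  · rw [if_pos (by omega)]

/-- the designated override class sends its heavy leftover to the seed. -/
lemma dirH_override (hno : ∀ t : V, ¬ oddMultitreeAt ends heavy t) {v : V}
    {q : Sym2 V} {c₀ : V} (hv : Bv ends heavy v)
    (hD : gadD ends heavy v = some (q, c₀)) : dirH ends heavy q = c₀ := by
  have spec := gadP_spec ends heavy hno hv
  obtain ⟨hc₀A, hc₀q, hnd, hpos, hodd⟩ := spec.2.2.2.2 q c₀ hD
  obtain ⟨d, hd⟩ := Sym2.mem_iff_exists.1 hc₀q
  have hc₀d : c₀ ≠ d := fun he => hnd (by rw [hd]; exact Sym2.mk_isDiag_iff.2 he)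
  have hreach_c₀ : reach ends heavy v c₀ := spec.2.1 c₀ hc₀A
  have hRcd : Rh ends heavy c₀ d := by
    obtain ⟨e, he⟩ := Finset.card_pos.1 (show 0 < (Ecls ends heavy q true).card from hpos)
    obtain ⟨he1, he2⟩ := (mem_Ecls ends heavy).1 he
    exact ⟨hc₀d, e, he2, by rw [he1, hd]⟩
  have hro : reach ends heavy v q.out.1 := by
    rcases out_pair hd with h | h <;> rw [h]
    · exact hreach_c₀
    · exact hreach_c₀.trans (reach_of_Rh ends heavy hRcd)
  have hg1 : gadD ends heavy q.out.1 = gadD ends heavy v :=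
    (gad_eq_of_reach ends heavy (reach_symm ends hro)).2
  have hex : ∃ c₁, gadD ends heavy q.out.1 = some (q, c₁) := ⟨c₀, by rw [hg1, hD]⟩
  rw [dirH, dif_pos hex]
  have h2 : (some (q, hex.choose) : Option (Sym2 V × V)) = some (q, c₀) := by
    rw [← hex.choose_spec, hg1, hD]
  injection h2 with h2
  rw [Prod.mk.injEq] at h2
  exact h2.2

/-! ### Global (light-phase) structures -/

def rnkG (v : V) : ℕ := rnk (Rg ends) (Bv ends heavy) v
def parG (v : V) : V := par (Rg ends) (Bv ends heavy) v
def PG (v : V) : Sym2 V := s(parG ends heavy v, v)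

lemma reach_all_to_Rg {a b : V} (h : reach ends (fun _ => true) a b) :
    Relation.ReflTransGen (Rg ends) a b := by
  induction h with
  | refl => exact Relation.ReflTransGen.refl
  | tail _ hstep ih =>
    rename_i x y _
    rcases hstep with ⟨e, -, h2⟩
    by_cases hxy : x = y
    · rwa [hxy] at ih
    · exact ih.tail ⟨hxy, e, (cls_eq_iff ends).2 h2⟩

lemma ballG_exists (hcon : ∀ a b : V, reach ends (fun _ => true) a b)
    (hnt : ∃ a b : V, a ≠ b ∧ reach ends heavy a b) (v : V) :
    ∃ n, ball (Rg ends) (Bv ends heavy) n v := by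
  obtain ⟨a, b, hab, hr⟩ := hnt
  have hBa : Bv ends heavy a := ⟨b, Ne.symm hab, hr⟩
  exact ball_of_reflTransGen hBa (reach_all_to_Rg ends (hcon a v))

lemma parG_spec (hcon : ∀ a b : V, reach ends (fun _ => true) a b)
    (hnt : ∃ a b : V, a ≠ b ∧ reach ends heavy a b) {v : V} (hv : ¬ Bv ends heavy v) :
    Rg ends (parG ends heavy v) v ∧
    rnkG ends heavy v = rnkG ends heavy (parG ends heavy v) + 1 := by
  obtain ⟨h1, h2, h3⟩ := par_spec (ballG_exists ends heavy hcon hnt v) hv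
  exact ⟨h1, h3⟩

lemma Bv_of_rnkG_zero (hcon : ∀ a b : V, reach ends (fun _ => true) a b)
    (hnt : ∃ a b : V, a ≠ b ∧ reach ends heavy a b) {v : V}
    (h : rnkG ends heavy v = 0) : Bv ends heavy v :=
  A_of_rnk_zero (ballG_exists ends heavy hcon hnt v) h

/-- static receipt of a class by a vertex. -/
def recv0 (v : V) (q : Sym2 V) : Prop :=
  (∃ e, cls ends e = q ∧ ends e = (v, v)) ∨
  (v ∈ q ∧ ¬ q.IsDiag ∧ 2 ≤ lcard ends heavy q) ∨
  (v ∈ q ∧ ¬ q.IsDiag ∧ 1 ≤ hcard ends heavy q ∧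
    (hcard ends heavy q % 2 = 0 ∨ 3 ≤ hcard ends heavy q ∨ dirH ends heavy q = v)) ∨
  (v ∈ q ∧ ¬ q.IsDiag ∧ hcard ends heavy q % 2 = 1 ∧ lcard ends heavy q % 2 = 1 ∧
    oppH ends heavy q = v)

/-- fuelled version of "receives from the parent class". -/
def rfpF : ℕ → V → Prop
  | 0, _ => False
  | (n+1), v => recv0 ends heavy v (PG ends heavy v) ∨
      (hcard ends heavy (PG ends heavy v) = 0 ∧
       lcard ends heavy (PG ends heavy v) % 2 = 1 ∧
        ((∃ C, C ≠ PG ends heavy v ∧ recv0 ends heavy (parG ends heavy v) C) ∨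
         (¬ Bv ends heavy (parG ends heavy v) ∧
           PG ends heavy (parG ends heavy v) ≠ PG ends heavy v ∧
           rfpF n (parG ends heavy v))))

/-- `v` receives from its parent class. -/
def rfp (v : V) : Prop := rfpF ends heavy (rnkG ends heavy v) v

/-- `w` is secured relative to the class `X`. -/
def secured (w : V) (X : Sym2 V) : Prop :=
  (∃ C, C ≠ X ∧ recv0 ends heavy w C) ∨
  (¬ Bv ends heavy w ∧ PG ends heavy w ≠ X ∧ rfp ends heavy w)

/-- the target of the light leftover of a heavy-even class (possibly none). -/
def dirL (q : Sym2 V) : Option V :=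
  if secured ends heavy q.out.1 q then
    (if secured ends heavy q.out.2 q then
      some (if rnkG ends heavy q.out.2 < rnkG ends heavy q.out.1 then q.out.1 else q.out.2)
     else some q.out.2)
  else (if secured ends heavy q.out.2 q then some q.out.1 else none)

lemma rfp_unfold (hcon : ∀ a b : V, reach ends (fun _ => true) a b)
    (hnt : ∃ a b : V, a ≠ b ∧ reach ends heavy a b) {v : V} (hv : ¬ Bv ends heavy v) :
    rfp ends heavy v ↔ (recv0 ends heavy v (PG ends heavy v) ∨
      (hcard ends heavy (PG ends heavy v) = 0 ∧
       lcard ends heavy (PG ends heavy v) % 2 = 1 ∧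
        ((∃ C, C ≠ PG ends heavy v ∧ recv0 ends heavy (parG ends heavy v) C) ∨
         (¬ Bv ends heavy (parG ends heavy v) ∧
           PG ends heavy (parG ends heavy v) ≠ PG ends heavy v ∧
           rfp ends heavy (parG ends heavy v))))) := by
  have h2 := (parG_spec ends heavy hcon hnt hv).2
  rw [rfp, h2]
  rw [show rfpF ends heavy (rnkG ends heavy (parG ends heavy v) + 1) v = _ from rfl]
  rfl

lemma PG_ne_parent (hcon : ∀ a b : V, reach ends (fun _ => true) a b)
    (hnt : ∃ a b : V, a ≠ b ∧ reach ends heavy a b) {v : V} (hv : ¬ Bv ends heavy v)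
    (hp : ¬ Bv ends heavy (parG ends heavy v)) :
    PG ends heavy (parG ends heavy v) ≠ PG ends heavy v := by
  have h1 := (parG_spec ends heavy hcon hnt hv).2
  have h2 := (parG_spec ends heavy hcon hnt hp).2
  intro he
  rw [PG, PG, Sym2.eq_iff] at he
  rcases he with ⟨he1, he2⟩ | ⟨he1, he2⟩
  · rw [he2] at h1; omega
  · rw [he1] at h2; omega

lemma dirL_cases (q : Sym2 V) :
    dirL ends heavy q = none ∨ dirL ends heavy q = some q.out.1 ∨
      dirL ends heavy q = some q.out.2 := by
  rw [dirL]
  split_ifs <;> simp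

lemma dirL_none (q : Sym2 V) (h : dirL ends heavy q = none) :
    ¬ secured ends heavy q.out.1 q ∧ ¬ secured ends heavy q.out.2 q := by
  rw [dirL] at h
  split_ifs at h <;> simp_all

lemma dirL_loser1 (q : Sym2 V) (hd : ¬ q.IsDiag)
    (h : dirL ends heavy q = some q.out.1) : secured ends heavy q.out.2 q := by
  have hxy := out_nd (q := q) hd
  by_cases h1 : secured ends heavy q.out.1 q <;>
    by_cases h2 : secured ends heavy q.out.2 q
  · exact h2
  · rw [dirL, if_pos h1, if_neg h2] at h
    simp only [Option.some.injEq] at h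
    exact absurd h.symm hxy
  · exact h2
  · rw [dirL, if_neg h1, if_neg h2] at h
    cases h

lemma dirL_loser2 (q : Sym2 V) (hd : ¬ q.IsDiag)
    (h : dirL ends heavy q = some q.out.2) : secured ends heavy q.out.1 q := by
  have hxy := out_nd (q := q) hd
  by_cases h1 : secured ends heavy q.out.1 q <;>
    by_cases h2 : secured ends heavy q.out.2 q
  · exact h1
  · exact h1
  · rw [dirL, if_neg h1, if_pos h2] at h
    simp only [Option.some.injEq] at h
    exact absurd h hxy
  · rw [dirL, if_neg h1, if_neg h2] at h
    cases h

/-- when the parent class's light leftover exists and the parent is secured,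
the leftover goes to the child. -/
lemma dirL_child (hcon : ∀ a b : V, reach ends (fun _ => true) a b)
    (hnt : ∃ a b : V, a ≠ b ∧ reach ends heavy a b) {v : V} (hv : ¬ Bv ends heavy v)
    (hsec : secured ends heavy (parG ends heavy v) (PG ends heavy v)) :
    dirL ends heavy (PG ends heavy v) = some v := by
  have h2 := (parG_spec ends heavy hcon hnt hv).2
  have hout : (PG ends heavy v).out = (parG ends heavy v, v) ∨
      (PG ends heavy v).out = (v, parG ends heavy v) := out_pair rfl
  rw [dirL]
  rcases hout with h | h <;> rw [h] <;> dsimp only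
  · rw [if_pos hsec]
    by_cases hsv : secured ends heavy v (PG ends heavy v)
    · rw [if_pos hsv, if_neg (by omega)]
    · rw [if_neg hsv]
  · by_cases hsv : secured ends heavy v (PG ends heavy v)
    · rw [if_pos hsv, if_pos hsec, if_pos (by omega)]
    · rw [if_neg hsv, if_pos hsec]

/-! ### The orientation -/

/-- the leftover target of the class `q` for kind `b`. -/
def ltgt (q : Sym2 V) (b : Bool) : Option V :=
  if b then some (dirH ends heavy q)
  else if hcard ends heavy q % 2 = 1 then some (oppH ends heavy q)
  else dirL ends heavy q

/-- the partial orientation. -/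
def assign (e : E) : Option V :=
  if (ends e).1 = (ends e).2 then some (ends e).1
  else
    if eidx (Ecls ends heavy (cls ends e) (heavy e)) e % 2 = 0 ∧
        ¬((Ecls ends heavy (cls ends e) (heavy e)).card % 2 = 1 ∧
          eidx (Ecls ends heavy (cls ends e) (heavy e)) e =
            (Ecls ends heavy (cls ends e) (heavy e)).card - 1) then
      some (cls ends e).out.1
    else if eidx (Ecls ends heavy (cls ends e) (heavy e)) e % 2 = 1 ∧
        ¬((Ecls ends heavy (cls ends e) (heavy e)).card % 2 = 1 ∧
          eidx (Ecls ends heavy (cls ends e) (heavy e)) e =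
            (Ecls ends heavy (cls ends e) (heavy e)).card - 1) then
      some (cls ends e).out.2
    else ltgt ends heavy (cls ends e) (heavy e)

lemma assign_loop {e : E} (h : (ends e).1 = (ends e).2) :
    assign ends heavy e = some (ends e).1 := by rw [assign, if_pos h]

lemma assign_on_mem {q : Sym2 V} (hd : ¬ q.IsDiag) {b : Bool} {e : E}
    (he : e ∈ Ecls ends heavy q b) :
    assign ends heavy e =
      if eidx (Ecls ends heavy q b) e % 2 = 0 ∧
          ¬((Ecls ends heavy q b).card % 2 = 1 ∧
            eidx (Ecls ends heavy q b) e = (Ecls ends heavy q b).card - 1) then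
        some q.out.1
      else if eidx (Ecls ends heavy q b) e % 2 = 1 ∧
          ¬((Ecls ends heavy q b).card % 2 = 1 ∧
            eidx (Ecls ends heavy q b) e = (Ecls ends heavy q b).card - 1) then
        some q.out.2
      else ltgt ends heavy q b := by
  obtain ⟨h1, h2⟩ := (mem_Ecls ends heavy).1 he
  have hnl : ¬ (ends e).1 = (ends e).2 := fun hl => hd (h1 ▸ (cls_isDiag_iff ends).1 hl)
  rw [assign, if_neg hnl, h1, h2]

lemma cnt_out1 (q : Sym2 V) (hd : ¬ q.IsDiag) (b : Bool) :
    ((Ecls ends heavy q b).filter (fun e => assign ends heavy e = some q.out.1)).card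
      = (Ecls ends heavy q b).card / 2 +
        (if (Ecls ends heavy q b).card % 2 = 1 ∧ ltgt ends heavy q b = some q.out.1
          then 1 else 0) := by
  set S := Ecls ends heavy q b with hS
  have hxy : q.out.1 ≠ q.out.2 := out_nd hd
  have key : ∀ e ∈ S, (assign ends heavy e = some q.out.1 ↔
      ((eidx S e % 2 = 0 ∧ ¬(S.card % 2 = 1 ∧ eidx S e = S.card - 1)) ∨
      ((S.card % 2 = 1 ∧ eidx S e = S.card - 1) ∧
        ltgt ends heavy q b = some q.out.1))) := by
    intro e he
    rw [assign_on_mem ends heavy hd he]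
    by_cases hPA : (eidx S e % 2 = 0 ∧ ¬(S.card % 2 = 1 ∧ eidx S e = S.card - 1))
    · rw [if_pos hPA]
      constructor
      · intro _; exact Or.inl hPA
      · intro _; rfl
    · rw [if_neg hPA]
      by_cases hPB : (eidx S e % 2 = 1 ∧ ¬(S.card % 2 = 1 ∧ eidx S e = S.card - 1))
      · rw [if_pos hPB]
        constructor
        · intro h; exact absurd (Option.some.inj h) hxy.symm
        · rintro (h | ⟨h1, -⟩)
          · exact absurd h hPA
          · exact absurd h1 hPB.2
      · have hPL : S.card % 2 = 1 ∧ eidx S e = S.card - 1 := by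
          rcases Nat.mod_two_eq_zero_or_one (eidx S e) with h0 | h0
          · by_contra hc; exact hPA ⟨h0, hc⟩
          · by_contra hc; exact hPB ⟨h0, hc⟩
        rw [if_neg hPB]
        constructor
        · intro h; exact Or.inr ⟨hPL, h⟩
        · rintro (h | ⟨-, h⟩)
          · exact absurd h hPA
          · exact h
  rw [filter_congr key, filter_or,
    card_union_of_disjoint (by
      rw [Finset.disjoint_filter]
      rintro e - ⟨-, h2⟩ ⟨h3, -⟩
      exact h2 h3), card_balA]
  congr 1
  by_cases hlt : ltgt ends heavy q b = some q.out.1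
  · by_cases hodd : S.card % 2 = 1
    · rw [if_pos ⟨hodd, hlt⟩]
      have hcg2 : S.filter (fun e => (S.card % 2 = 1 ∧ eidx S e = S.card - 1) ∧
            ltgt ends heavy q b = some q.out.1)
          = S.filter (fun e => S.card % 2 = 1 ∧ eidx S e = S.card - 1) := by
        apply filter_congr; intro e he
        constructor
        · rintro ⟨h1, -⟩; exact h1
        · intro h1; exact ⟨h1, hlt⟩
      rw [hcg2]
      exact card_leftover S hodd
    · rw [if_neg (fun hc => hodd hc.1)]
      rw [Finset.card_eq_zero]
      apply Finset.filter_eq_empty_iff.2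
      rintro e - ⟨⟨h1, -⟩, -⟩
      exact hodd h1
  · rw [if_neg (fun hc => hlt hc.2)]
    rw [Finset.card_eq_zero]
    apply Finset.filter_eq_empty_iff.2
    rintro e - ⟨-, h2⟩
    exact hlt h2

lemma cnt_out2 (q : Sym2 V) (hd : ¬ q.IsDiag) (b : Bool) :
    ((Ecls ends heavy q b).filter (fun e => assign ends heavy e = some q.out.2)).card
      = (Ecls ends heavy q b).card / 2 +
        (if (Ecls ends heavy q b).card % 2 = 1 ∧ ltgt ends heavy q b = some q.out.2
          then 1 else 0) := by
  set S := Ecls ends heavy q b with hS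
  have hxy : q.out.1 ≠ q.out.2 := out_nd hd
  have key : ∀ e ∈ S, (assign ends heavy e = some q.out.2 ↔
      ((eidx S e % 2 = 1 ∧ ¬(S.card % 2 = 1 ∧ eidx S e = S.card - 1)) ∨
      ((S.card % 2 = 1 ∧ eidx S e = S.card - 1) ∧
        ltgt ends heavy q b = some q.out.2))) := by
    intro e he
    rw [assign_on_mem ends heavy hd he]
    by_cases hPA : (eidx S e % 2 = 0 ∧ ¬(S.card % 2 = 1 ∧ eidx S e = S.card - 1))
    · rw [if_pos hPA]
      constructor
      · intro h; exact absurd (Option.some.inj h) hxy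
      · rintro (⟨h1, -⟩ | ⟨h1, -⟩)
        · omega
        · exact absurd h1 hPA.2
    · rw [if_neg hPA]
      by_cases hPB : (eidx S e % 2 = 1 ∧ ¬(S.card % 2 = 1 ∧ eidx S e = S.card - 1))
      · rw [if_pos hPB]
        constructor
        · intro _; exact Or.inl hPB
        · intro _; rfl
      · have hPL : S.card % 2 = 1 ∧ eidx S e = S.card - 1 := by
          rcases Nat.mod_two_eq_zero_or_one (eidx S e) with h0 | h0
          · by_contra hc; exact hPA ⟨h0, hc⟩
          · by_contra hc; exact hPB ⟨h0, hc⟩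
        rw [if_neg hPB]
        constructor
        · intro h; exact Or.inr ⟨hPL, h⟩
        · rintro (h | ⟨-, h⟩)
          · exact absurd hPL h.2
          · exact h
  rw [filter_congr key, filter_or,
    card_union_of_disjoint (by
      rw [Finset.disjoint_filter]
      rintro e - ⟨-, h2⟩ ⟨h3, -⟩
      exact h2 h3), card_balB]
  congr 1
  by_cases hlt : ltgt ends heavy q b = some q.out.2
  · by_cases hodd : S.card % 2 = 1
    · rw [if_pos ⟨hodd, hlt⟩]
      have hcg2 : S.filter (fun e => (S.card % 2 = 1 ∧ eidx S e = S.card - 1) ∧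
            ltgt ends heavy q b = some q.out.2)
          = S.filter (fun e => S.card % 2 = 1 ∧ eidx S e = S.card - 1) := by
        apply filter_congr; intro e he
        constructor
        · rintro ⟨h1, -⟩; exact h1
        · intro h1; exact ⟨h1, hlt⟩
      rw [hcg2]
      exact card_leftover S hodd
    · rw [if_neg (fun hc => hodd hc.1)]
      rw [Finset.card_eq_zero]
      apply Finset.filter_eq_empty_iff.2
      rintro e - ⟨⟨h1, -⟩, -⟩
      exact hodd h1
  · rw [if_neg (fun hc => hlt hc.2)]
    rw [Finset.card_eq_zero]
    apply Finset.filter_eq_empty_iff.2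
    rintro e - ⟨-, h2⟩
    exact hlt h2

lemma cnt_none (q : Sym2 V) (hd : ¬ q.IsDiag) (b : Bool) :
    ((Ecls ends heavy q b).filter (fun e => assign ends heavy e = none)).card
      = (if (Ecls ends heavy q b).card % 2 = 1 ∧ ltgt ends heavy q b = none
          then 1 else 0) := by
  set S := Ecls ends heavy q b with hS
  have key : ∀ e ∈ S, (assign ends heavy e = none ↔
      ((S.card % 2 = 1 ∧ eidx S e = S.card - 1) ∧ ltgt ends heavy q b = none)) := by
    intro e he
    rw [assign_on_mem ends heavy hd he]
    by_cases hPA : (eidx S e % 2 = 0 ∧ ¬(S.card % 2 = 1 ∧ eidx S e = S.card - 1))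
    · rw [if_pos hPA]
      constructor
      · intro h; cases h
      · rintro ⟨h1, -⟩; exact absurd h1 hPA.2
    · rw [if_neg hPA]
      by_cases hPB : (eidx S e % 2 = 1 ∧ ¬(S.card % 2 = 1 ∧ eidx S e = S.card - 1))
      · rw [if_pos hPB]
        constructor
        · intro h; cases h
        · rintro ⟨h1, -⟩; exact absurd h1 hPB.2
      · have hPL : S.card % 2 = 1 ∧ eidx S e = S.card - 1 := by
          rcases Nat.mod_two_eq_zero_or_one (eidx S e) with h0 | h0
          · by_contra hc; exact hPA ⟨h0, hc⟩
          · by_contra hc; exact hPB ⟨h0, hc⟩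
        rw [if_neg hPB]
        constructor
        · intro h; exact ⟨hPL, h⟩
        · rintro ⟨-, h⟩; exact h
  rw [filter_congr key]
  by_cases hlt : ltgt ends heavy q b = none
  · by_cases hodd : S.card % 2 = 1
    · rw [if_pos ⟨hodd, hlt⟩]
      have hcg2 : S.filter (fun e => (S.card % 2 = 1 ∧ eidx S e = S.card - 1) ∧
            ltgt ends heavy q b = none)
          = S.filter (fun e => S.card % 2 = 1 ∧ eidx S e = S.card - 1) := by
        apply filter_congr; intro e he
        constructor
        · rintro ⟨h1, -⟩; exact h1
        · intro h1; exact ⟨h1, hlt⟩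
      rw [hcg2]
      exact card_leftover S hodd
    · rw [if_neg (fun hc => hodd hc.1)]
      rw [Finset.card_eq_zero]
      apply Finset.filter_eq_empty_iff.2
      rintro e - ⟨⟨h1, -⟩, -⟩
      exact hodd h1
  · rw [if_neg (fun hc => hlt hc.2)]
    rw [Finset.card_eq_zero]
    apply Finset.filter_eq_empty_iff.2
    rintro e - ⟨-, h2⟩
    exact hlt h2

/-! ### Receipt soundness -/

lemma Bv_of_hcard {q : Sym2 V} (hd : ¬ q.IsDiag) (h : 1 ≤ hcard ends heavy q) {v : V}
    (hv : v ∈ q) : Bv ends heavy v := by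
  obtain ⟨d, hdq⟩ := Sym2.mem_iff_exists.1 hv
  obtain ⟨e, he⟩ := Finset.card_pos.1 (show 0 < (Ecls ends heavy q true).card from h)
  obtain ⟨he1, he2⟩ := (mem_Ecls ends heavy).1 he
  have hvd : v ≠ d := fun hc => hd (by rw [hdq]; exact Sym2.mk_isDiag_iff.2 hc)
  exact Bv_of_Rh ends heavy ⟨hvd, e, he2, by rw [he1, hdq]⟩

lemma exists_recv_of_cnt {q : Sym2 V} (hd : ¬ q.IsDiag) {b : Bool} {v : V}
    (hv : v = q.out.1 ∨ v = q.out.2)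
    (hc : 1 ≤ (Ecls ends heavy q b).card / 2 +
      (if (Ecls ends heavy q b).card % 2 = 1 ∧ ltgt ends heavy q b = some v
        then 1 else 0)) :
    ∃ e, cls ends e = q ∧ heavy e = b ∧ assign ends heavy e = some v := by
  have : 1 ≤ ((Ecls ends heavy q b).filter
      (fun e => assign ends heavy e = some v)).card := by
    rcases hv with hv | hv
    · rw [hv] at hc ⊢; rw [cnt_out1 ends heavy q hd b]; exact hc
    · rw [hv] at hc ⊢; rw [cnt_out2 ends heavy q hd b]; exact hc
  obtain ⟨e, he⟩ := Finset.card_pos.1 this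
  obtain ⟨he1, he2⟩ := Finset.mem_filter.1 he
  obtain ⟨h1, h2⟩ := (mem_Ecls ends heavy).1 he1
  exact ⟨e, h1, h2, he2⟩

lemma ltgt_heavy (q : Sym2 V) : ltgt ends heavy q true = some (dirH ends heavy q) := rfl

lemma ltgt_light_odd {q : Sym2 V} (h : hcard ends heavy q % 2 = 1) :
    ltgt ends heavy q false = some (oppH ends heavy q) := by
  rw [ltgt, if_neg (by simp), if_pos h]

lemma ltgt_light_even {q : Sym2 V} (h : hcard ends heavy q % 2 = 0) :
    ltgt ends heavy q false = dirL ends heavy q := by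
  rw [ltgt, if_neg (by simp), if_neg (by omega)]

lemma recv0_sound {v : V} {q : Sym2 V} (h : recv0 ends heavy v q) :
    ∃ e, cls ends e = q ∧ assign ends heavy e = some v := by
  rcases h with ⟨e, h1, h2⟩ | ⟨h1, h2, h3⟩ | ⟨h1, h2, h3, h4⟩ | ⟨h1, h2, h3, h4, h5⟩
  · refine ⟨e, h1, ?_⟩
    rw [assign_loop ends heavy (by rw [h2]), h2]
  · -- light balanced
    obtain ⟨e, he1, he2, he3⟩ := exists_recv_of_cnt ends heavy h2 (mem_out h1) (b := false)
      (by have h3' : 2 ≤ (Ecls ends heavy q false).card := h3; omega)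
    exact ⟨e, he1, he3⟩
  · -- heavy receipts
    have hcnt : 1 ≤ hcard ends heavy q / 2 +
        (if hcard ends heavy q % 2 = 1 ∧ ltgt ends heavy q true = some v
          then 1 else 0) := by
      rcases h4 with h4 | h4 | h4
      · omega
      · omega
      · rcases Nat.mod_two_eq_zero_or_one (hcard ends heavy q) with hp | hp
        · omega
        · rw [if_pos ⟨hp, by rw [ltgt_heavy, h4]⟩]; omega
    obtain ⟨e, he1, he2, he3⟩ := exists_recv_of_cnt ends heavy h2 (mem_out h1) (b := true)
      hcnt
    exact ⟨e, he1, he3⟩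
  · -- opposite light leftover
    obtain ⟨e, he1, he2, he3⟩ := exists_recv_of_cnt ends heavy h2 (mem_out h1) (b := false)
      (by rw [if_pos ⟨h4, by rw [ltgt_light_odd ends heavy h3, h5]⟩]; omega)
    exact ⟨e, he1, he3⟩

/-- heavy coverage: a vertex of a non-trivial heavy component receives a heavy
edge outside any given odd class whose leftover it does not get. -/
lemma covH (hno : ∀ t : V, ¬ oddMultitreeAt ends heavy t) {v : V} (hv : Bv ends heavy v)
    {C : Sym2 V} (hCnd : ¬ C.IsDiag) (hCodd : hcard ends heavy C % 2 = 1)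
    (hCdir : dirH ends heavy C ≠ v) :
    ∃ e, cls ends e ≠ C ∧ heavy e = true ∧ assign ends heavy e = some v := by
  have spec := gadP_spec ends heavy hno hv
  by_cases hA : v ∈ gadA ends heavy v
  · rcases spec.2.2.2.1 v hA with ⟨e, he1, he2⟩ | ⟨q, hq1, hq2, hq3, hq4⟩ | ⟨q, c₀, hq1, hq2⟩
    · refine ⟨e, ?_, he1, ?_⟩
      · intro hc
        exact hCnd (hc ▸ (by rw [cls, he2]; exact Sym2.mk_isDiag_iff.2 rfl))
      · rw [assign_loop ends heavy (by rw [he2]), he2]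
    · obtain ⟨e, he1, he2, he3⟩ := exists_recv_of_cnt ends heavy hq2 (mem_out hq1)
        (b := true) (by
          have h1' : 1 ≤ (Ecls ends heavy q true).card := hq3
          have h2' : (Ecls ends heavy q true).card % 2 = 0 := hq4
          omega)
      exact ⟨e, by rw [he1]; intro hc; rw [hc] at hq4; omega, he2, he3⟩
    · subst hq2
      obtain ⟨hc₀A, hc₀q, hnd, hpos, hodd⟩ := spec.2.2.2.2 q v hq1
      have hdir : dirH ends heavy q = v := dirH_override ends heavy hno hv hq1
      have hqC : q ≠ C := fun hc => hCdir (by rw [← hc]; exact hdir)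
      obtain ⟨e, he1, he2, he3⟩ := exists_recv_of_cnt ends heavy hnd (mem_out hc₀q)
        (b := true) (by rw [if_pos ⟨hodd, by rw [ltgt_heavy, hdir]⟩]; omega)
      exact ⟨e, by rw [he1]; exact hqC, he2, he3⟩
  · obtain ⟨hstep, hBp, hgA, hgD, hrnk⟩ := parH_spec ends heavy hno hv hA
    set q : Sym2 V := s(parH ends heavy v, v) with hq
    have hnd : ¬ q.IsDiag := fun hc => hstep.1.1 (Sym2.mk_isDiag_iff.1 hc)
    have hpos : 1 ≤ hcard ends heavy q := hcard_pos_of_Rh ends heavy hstep.1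
    have hvq : v ∈ q := Sym2.mem_mk_right _ _
    rcases Nat.mod_two_eq_zero_or_one (hcard ends heavy q) with hp | hp
    · obtain ⟨e, he1, he2, he3⟩ := exists_recv_of_cnt ends heavy hnd (mem_out hvq)
        (b := true) (by
          have h1' : 1 ≤ (Ecls ends heavy q true).card := hpos
          have h2' : (Ecls ends heavy q true).card % 2 = 0 := hp
          omega)
      exact ⟨e, by rw [he1]; intro hc; rw [hc] at hp; omega, he2, he3⟩
    · have hdir : dirH ends heavy q = v := dirH_PH ends heavy hno hv hA
      have hqC : q ≠ C := fun hc => hCdir (by rw [← hc]; exact hdir)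
      obtain ⟨e, he1, he2, he3⟩ := exists_recv_of_cnt ends heavy hnd (mem_out hvq)
        (b := true) (by rw [if_pos ⟨hp, by rw [ltgt_heavy, hdir]⟩]; omega)
      exact ⟨e, by rw [he1]; exact hqC, he2, he3⟩

/-- every vertex of a non-trivial heavy component has a static heavy receipt. -/
lemma BvRecv (hno : ∀ t : V, ¬ oddMultitreeAt ends heavy t) {v : V}
    (hv : Bv ends heavy v) :
    ∃ q, recv0 ends heavy v q ∧ 1 ≤ hcard ends heavy q := by
  have spec := gadP_spec ends heavy hno hv
  by_cases hA : v ∈ gadA ends heavy v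
  · rcases spec.2.2.2.1 v hA with ⟨e, he1, he2⟩ | ⟨q, hq1, hq2, hq3, hq4⟩ | ⟨q, c₀, hq1, hq2⟩
    · refine ⟨cls ends e, Or.inl ⟨e, rfl, he2⟩, ?_⟩
      refine Finset.card_pos.2 ⟨e, (mem_Ecls ends heavy).2 ⟨rfl, he1⟩⟩
    · exact ⟨q, Or.inr (Or.inr (Or.inl ⟨hq1, hq2, hq3, Or.inl hq4⟩)), hq3⟩
    · subst hq2
      obtain ⟨hc₀A, hc₀q, hnd, hpos, hodd⟩ := spec.2.2.2.2 q v hq1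
      have hdir : dirH ends heavy q = v := dirH_override ends heavy hno hv hq1
      exact ⟨q, Or.inr (Or.inr (Or.inl ⟨hc₀q, hnd, hpos, Or.inr (Or.inr hdir)⟩)), hpos⟩
  · obtain ⟨hstep, hBp, hgA, hgD, hrnk⟩ := parH_spec ends heavy hno hv hA
    set q : Sym2 V := s(parH ends heavy v, v) with hq
    have hnd : ¬ q.IsDiag := fun hc => hstep.1.1 (Sym2.mk_isDiag_iff.1 hc)
    have hpos : 1 ≤ hcard ends heavy q := hcard_pos_of_Rh ends heavy hstep.1
    have hvq : v ∈ q := Sym2.mem_mk_right _ _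
    rcases Nat.mod_two_eq_zero_or_one (hcard ends heavy q) with hp | hp
    · exact ⟨q, Or.inr (Or.inr (Or.inl ⟨hvq, hnd, hpos, Or.inl hp⟩)), hpos⟩
    · exact ⟨q, Or.inr (Or.inr (Or.inl ⟨hvq, hnd, hpos,
        Or.inr (Or.inr (dirH_PH ends heavy hno hv hA))⟩)), hpos⟩

lemma rfp_sound (hcon : ∀ a b : V, reach ends (fun _ => true) a b)
    (hnt : ∃ a b : V, a ≠ b ∧ reach ends heavy a b) {v : V} (hv : ¬ Bv ends heavy v)
    (h : rfp ends heavy v) :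
    ∃ e, cls ends e = PG ends heavy v ∧ assign ends heavy e = some v := by
  rw [rfp_unfold ends heavy hcon hnt hv] at h
  rcases h with h | ⟨h1, h2, h3⟩
  · exact recv0_sound ends heavy h
  · have hsec : secured ends heavy (parG ends heavy v) (PG ends heavy v) := h3
    have hdl : dirL ends heavy (PG ends heavy v) = some v :=
      dirL_child ends heavy hcon hnt hv hsec
    have hRg := (parG_spec ends heavy hcon hnt hv).1
    have hnd : ¬ (PG ends heavy v).IsDiag :=
      fun hc => hRg.1 (Sym2.mk_isDiag_iff.1 hc)
    have hvq : v ∈ PG ends heavy v := Sym2.mem_mk_right _ _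
    obtain ⟨e, he1, he2, he3⟩ := exists_recv_of_cnt ends heavy hnd (mem_out hvq)
      (b := false)
      (by rw [if_pos ⟨h2, by rw [ltgt_light_even ends heavy (by omega), hdl]⟩]; omega)
    exact ⟨e, he1, he3⟩

lemma secured_sound (hcon : ∀ a b : V, reach ends (fun _ => true) a b)
    (hnt : ∃ a b : V, a ≠ b ∧ reach ends heavy a b) {v : V} {X : Sym2 V}
    (h : secured ends heavy v X) :
    ∃ e, cls ends e ≠ X ∧ assign ends heavy e = some v := by
  rcases h with ⟨C, hC1, hC2⟩ | ⟨h1, h2, h3⟩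
  · obtain ⟨e, he1, he2⟩ := recv0_sound ends heavy hC2
    exact ⟨e, by rw [he1]; exact hC1, he2⟩
  · obtain ⟨e, he1, he2⟩ := rfp_sound ends heavy hcon hnt h1 h3
    exact ⟨e, by rw [he1]; exact h2, he2⟩

/-- the orientation only assigns edges to their endpoints. -/
lemma assign_endpoint (hno : ∀ t : V, ¬ oddMultitreeAt ends heavy t) (e : E) (v : V)
    (h : assign ends heavy e = some v) : v = (ends e).1 ∨ v = (ends e).2 := by
  set q : Sym2 V := cls ends e with hq
  have hqe : q = s((ends e).1, (ends e).2) := rfl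
  have hmem : ∀ z : V, z ∈ q → z = (ends e).1 ∨ z = (ends e).2 := by
    intro z hz
    rw [hqe] at hz
    exact Sym2.mem_iff.1 hz
  have hout1 : q.out.1 ∈ q := Sym2.out_fst_mem q
  have hout2 : q.out.2 ∈ q := Sym2.out_snd_mem q
  by_cases hl : (ends e).1 = (ends e).2
  · rw [assign_loop ends heavy hl] at h
    exact Or.inl (Option.some.inj h).symm
  · rw [assign, if_neg hl] at h
    split_ifs at h with h1 h2
    · exact hmem v ((Option.some.inj h) ▸ hout1)
    · exact hmem v ((Option.some.inj h) ▸ hout2)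
    · -- leftover
      by_cases hh : heavy e = true
      · rw [hh] at h
        rw [show ltgt ends heavy (cls ends e) true
            = some (dirH ends heavy (cls ends e)) from rfl] at h
        have hv : v = dirH ends heavy q := (Option.some.inj h).symm
        have hBe : Bv ends heavy (ends e).1 := by
          refine Bv_of_Rh ends heavy ⟨hl, e, hh, rfl⟩
        rw [dirH] at hv
        split_ifs at hv with hov hrk
        · -- override: use spec at q.out.1
          have hBo : Bv ends heavy q.out.1 := by
            rcases hmem _ hout1 with h' | h'
            · rwa [h']
            · rw [h']
              exact Bv_of_Rh ends heavy (Rh_symm ends heavy ⟨hl, e, hh, rfl⟩)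
          have spec := gadP_spec ends heavy hno hBo
          obtain ⟨-, hcq, -, -, -⟩ := spec.2.2.2.2 _ _ hov.choose_spec
          rw [hv]
          exact hmem _ hcq
        · rw [hv]; exact hmem _ hout1
        · rw [hv]; exact hmem _ hout2
      · rw [Bool.not_eq_true] at hh
        rw [hh] at h
        by_cases hp : hcard ends heavy (cls ends e) % 2 = 1
        · rw [ltgt_light_odd ends heavy hp] at h
          have hv : v = oppH ends heavy q := (Option.some.inj h).symm
          rcases oppH_mem_out ends heavy q with ho | ho
          · rw [hv, ho]; exact hmem _ hout1
          · rw [hv, ho]; exact hmem _ hout2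
        · rw [ltgt_light_even ends heavy (by omega)] at h
          rcases dirL_cases ends heavy q with hd | hd | hd
          · rw [hd] at h; cases h
          · rw [hd] at h
            exact hmem v ((Option.some.inj h) ▸ hout1)
          · rw [hd] at h
            exact hmem v ((Option.some.inj h) ▸ hout2)

/-! ### Utilities -/

section Util
variable {α β : ℝ} {w : E → ℝ}

lemma w_nonneg (hw : ∀ e, w e = if heavy e then α else β) (hβ : 0 ≤ β) (hαβ : β < α)
    (e : E) : 0 ≤ w e := by
  rw [hw e]; split_ifs
  · linarith
  · exact hβ

lemma w_ge_beta (hw : ∀ e, w e = if heavy e then α else β) (hαβ : β < α) (e : E) :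
    β ≤ w e := by
  rw [hw e]; split_ifs
  · linarith
  · exact le_refl β

lemma sum_w_split (hw : ∀ e, w e = if heavy e then α else β) (T : Finset E) :
    ∑ e ∈ T, w e = α * (T.filter (fun e => heavy e = true)).card
      + β * (T.filter (fun e => heavy e = false)).card := by
  rw [← Finset.sum_filter_add_sum_filter_not T (fun e => heavy e = true)]
  congr 1
  · rw [Finset.sum_congr rfl (g := fun _ => α)
      (fun e he => by rw [hw e, if_pos (Finset.mem_filter.1 he).2]),
      Finset.sum_const, nsmul_eq_mul, mul_comm]
  · have : T.filter (fun e => ¬ heavy e = true) = T.filter (fun e => heavy e = false) := by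
      apply filter_congr; intro e he; simp
    rw [this, Finset.sum_congr rfl (g := fun _ => β)
      (fun e he => by
        rw [hw e]
        have := (Finset.mem_filter.1 he).2
        simp [this]),
      Finset.sum_const, nsmul_eq_mul, mul_comm]

lemma util_pair (hw : ∀ e, w e = if heavy e then α else β) {i j : V} (hij : i ≠ j)
    (z : V) :
    util ends w i (bundleP (assign ends heavy) z ∩ edgesBetween ends i j)
      = α * ((Ecls ends heavy s(i,j) true).filter
          (fun e => assign ends heavy e = some z)).card
      + β * ((Ecls ends heavy s(i,j) false).filter
          (fun e => assign ends heavy e = some z)).card := by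
  set T := bundleP (assign ends heavy) z ∩ edgesBetween ends i j with hT
  have hTmem : ∀ e ∈ T, cls ends e = s(i,j) ∧ assign ends heavy e = some z := by
    intro e he
    obtain ⟨h1, h2⟩ := Finset.mem_inter.1 he
    refine ⟨?_, (Finset.mem_filter.1 h1).2⟩
    have h3 := Finset.mem_filter.1 ((edgesBetween_eq ends i j) ▸ h2)
    exact h3.2
  have hstep1 : util ends w i T = ∑ e ∈ T, w e := by
    rw [util]
    apply Finset.sum_congr rfl
    intro e he
    rw [if_pos]
    rcases (cls_eq_iff ends).1 (hTmem e he).1 with h | h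
    · exact Or.inl (by rw [h])
    · exact Or.inr (by rw [h])
  rw [hstep1, sum_w_split (hw := hw) (T := T)]
  have hs1 : T.filter (fun e => heavy e = true)
      = (Ecls ends heavy s(i,j) true).filter
          (fun e => assign ends heavy e = some z) := by
    ext e
    simp only [Finset.mem_filter, hT, Finset.mem_inter, bundleP, Finset.mem_univ,
      true_and, mem_Ecls, edgesBetween_eq, Acl]
    constructor
    · rintro ⟨⟨h1, h2⟩, h3⟩; exact ⟨⟨h2, h3⟩, h1⟩
    · rintro ⟨⟨h1, h2⟩, h3⟩; exact ⟨⟨h3, h1⟩, h2⟩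
  have hs2 : T.filter (fun e => heavy e = false)
      = (Ecls ends heavy s(i,j) false).filter
          (fun e => assign ends heavy e = some z) := by
    ext e
    simp only [Finset.mem_filter, hT, Finset.mem_inter, bundleP, Finset.mem_univ,
      true_and, mem_Ecls, edgesBetween_eq, Acl]
    constructor
    · rintro ⟨⟨h1, h2⟩, h3⟩; exact ⟨⟨h2, h3⟩, h1⟩
    · rintro ⟨⟨h1, h2⟩, h3⟩; exact ⟨⟨h3, h1⟩, h2⟩
  rw [hs1, hs2]

lemma util_bundle_restrict (hno : ∀ t : V, ¬ oddMultitreeAt ends heavy t)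
    {i j : V} (hij : i ≠ j) :
    util ends w i (bundleP (assign ends heavy) j)
      = util ends w i (bundleP (assign ends heavy) j ∩ edgesBetween ends i j) := by
  rw [util, util]
  refine (Finset.sum_subset Finset.inter_subset_left ?_).symm
  intro e he hne
  rw [if_neg]
  intro hinc
  apply hne
  refine Finset.mem_inter.2 ⟨he, ?_⟩
  have hj := assign_endpoint ends heavy hno e j (Finset.mem_filter.1 he).2
  rw [edgesBetween]
  refine Finset.mem_filter.2 ⟨Finset.mem_univ e, ?_⟩
  rcases hinc with h1 | h1 <;> rcases hj with h2 | h2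
  · exact absurd (h2.trans h1) (Ne.symm hij)
  · left; exact Prod.ext h1 h2.symm
  · right; exact Prod.ext h2.symm h1
  · exact absurd (h2.trans h1) (Ne.symm hij)

lemma util_mono (hw : ∀ e, w e = if heavy e then α else β) (hβ : 0 ≤ β) (hαβ : β < α)
    (i : V) {S T : Finset E} (hST : S ⊆ T) :
    util ends w i S ≤ util ends w i T := by
  apply Finset.sum_le_sum_of_subset_of_nonneg hST
  intro e _ _
  split_ifs
  · exact w_nonneg (hw := hw) (hβ := hβ) (hαβ := hαβ) (e := e)
  · exact le_refl 0

/-- own utility dominates the pair utility plus possibly a bonus edge. -/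
lemma util_own_bonus (hno : ∀ t : V, ¬ oddMultitreeAt ends heavy t)
    (hw : ∀ e, w e = if heavy e then α else β) (hβ : 0 ≤ β) (hαβ : β < α)
    {i j : V} (hij : i ≠ j) {e' : E}
    (h1 : cls ends e' ≠ s(i,j)) (h2 : assign ends heavy e' = some i) :
    α * ((Ecls ends heavy s(i,j) true).filter
        (fun e => assign ends heavy e = some i)).card
      + β * ((Ecls ends heavy s(i,j) false).filter
          (fun e => assign ends heavy e = some i)).card
      + w e'
      ≤ util ends w i (bundleP (assign ends heavy) i) := by
  have hsub : (bundleP (assign ends heavy) i ∩ edgesBetween ends i j) ∪ {e'}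
      ⊆ bundleP (assign ends heavy) i := by
    intro e he
    rcases Finset.mem_union.1 he with h | h
    · exact (Finset.mem_inter.1 h).1
    · rw [Finset.mem_singleton] at h; subst h
      exact Finset.mem_filter.2 ⟨Finset.mem_univ _, h2⟩
  have hdisj : Disjoint (bundleP (assign ends heavy) i ∩ edgesBetween ends i j)
      ({e'} : Finset E) := by
    rw [Finset.disjoint_singleton_right]
    intro hc
    have := Finset.mem_filter.1 ((edgesBetween_eq ends i j) ▸ (Finset.mem_inter.1 hc).2)
    exact h1 this.2
  have hincid : ((ends e').1 = i ∨ (ends e').2 = i) := by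
    rcases assign_endpoint ends heavy hno e' i h2 with h | h
    · exact Or.inl h.symm
    · exact Or.inr h.symm
  calc α * _ + β * _ + w e'
      = util ends w i (bundleP (assign ends heavy) i ∩ edgesBetween ends i j)
        + util ends w i ({e'} : Finset E) := by
        rw [util_pair ends heavy hw hij i]
        congr 1
        rw [util, Finset.sum_singleton, if_pos hincid]
    _ = util ends w i ((bundleP (assign ends heavy) i ∩ edgesBetween ends i j) ∪ {e'}) := by
        rw [util, util, util, ← Finset.sum_union hdisj]
    _ ≤ _ := util_mono ends heavy hw hβ hαβ i hsub

lemma util_own_base (hno : ∀ t : V, ¬ oddMultitreeAt ends heavy t)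
    (hw : ∀ e, w e = if heavy e then α else β) (hβ : 0 ≤ β) (hαβ : β < α)
    {i j : V} (hij : i ≠ j) :
    α * ((Ecls ends heavy s(i,j) true).filter
        (fun e => assign ends heavy e = some i)).card
      + β * ((Ecls ends heavy s(i,j) false).filter
          (fun e => assign ends heavy e = some i)).card
      ≤ util ends w i (bundleP (assign ends heavy) i) := by
  rw [← util_pair ends heavy hw hij i]
  exact util_mono ends heavy hw hβ hαβ i Finset.inter_subset_left

lemma cnt_v {q : Sym2 V} (hd : ¬ q.IsDiag) (b : Bool) {v : V} (hv : v ∈ q) :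
    ((Ecls ends heavy q b).filter (fun e => assign ends heavy e = some v)).card
      = (Ecls ends heavy q b).card / 2 +
        (if (Ecls ends heavy q b).card % 2 = 1 ∧ ltgt ends heavy q b = some v
          then 1 else 0) := by
  rcases mem_out hv with h | h
  · rw [h]; exact cnt_out1 ends heavy q hd b
  · rw [h]; exact cnt_out2 ends heavy q hd b

lemma mem_pair_of_out {q : Sym2 V} {i j z : V} (hq : q = s(i,j))
    (hz : z = q.out.1 ∨ z = q.out.2) : z = i ∨ z = j := by
  have : z ∈ q := by
    rcases hz with hz | hz
    · rw [hz]; exact Sym2.out_fst_mem q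
    · rw [hz]; exact Sym2.out_snd_mem q
  rw [hq] at this
  exact Sym2.mem_iff.1 this

lemma dirH_mem_pair (hno : ∀ t : V, ¬ oddMultitreeAt ends heavy t) {i j : V}
    (hij : i ≠ j) (hpos : 1 ≤ hcard ends heavy s(i,j)) :
    dirH ends heavy s(i,j) = i ∨ dirH ends heavy s(i,j) = j := by
  set q : Sym2 V := s(i,j) with hq
  have hd : ¬ q.IsDiag := fun h => hij (Sym2.mk_isDiag_iff.1 h)
  have hB1 : Bv ends heavy q.out.1 :=
    Bv_of_hcard ends heavy hd hpos (Sym2.out_fst_mem q)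
  rw [dirH]
  split_ifs with hov hrk
  · have spec := gadP_spec ends heavy hno hB1
    obtain ⟨-, hcq, -, -, -⟩ := spec.2.2.2.2 _ _ hov.choose_spec
    exact Sym2.mem_iff.1 hcq
  · exact mem_pair_of_out hq (Or.inl rfl)
  · exact mem_pair_of_out hq (Or.inr rfl)


lemma no_envy (hno : ∀ t : V, ¬ oddMultitreeAt ends heavy t)
    (hcon : ∀ a b : V, reach ends (fun _ => true) a b)
    (hnt : ∃ a b : V, a ≠ b ∧ reach ends heavy a b)
    (hw : ∀ e, w e = if heavy e then α else β) (hβ : 0 ≤ β) (hαβ : β < α) (i j : V) :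
    util ends w i (bundleP (assign ends heavy) j)
      ≤ util ends w i (bundleP (assign ends heavy) i) := by
  by_cases hij : i = j
  · subst hij; exact le_refl _
  set q : Sym2 V := s(i,j) with hq
  have hd : ¬ q.IsDiag := fun h => hij (Sym2.mk_isDiag_iff.1 h)
  have hiq : i ∈ q := Sym2.mem_mk_left _ _
  have hjq : j ∈ q := Sym2.mem_mk_right _ _
  have hkey : ∀ z, dirL ends heavy q = some z →
      ((z = i ∧ secured ends heavy j q) ∨ (z = j ∧ secured ends heavy i q)) := by
    intro z hz
    rcases dirL_cases ends heavy q with h0 | h0 | h0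
    · rw [h0] at hz; cases hz
    · rw [h0] at hz
      have hz1 : q.out.1 = z := Option.some.inj hz
      have hs := dirL_loser1 ends heavy q hd h0
      rcases out_pair hq with ho | ho
      · have e1 : q.out.1 = i := congrArg Prod.fst ho
        have e2 : q.out.2 = j := congrArg Prod.snd ho
        exact Or.inl ⟨by rw [← hz1, e1], by rwa [e2] at hs⟩
      · have e1 : q.out.1 = j := congrArg Prod.fst ho
        have e2 : q.out.2 = i := congrArg Prod.snd ho
        exact Or.inr ⟨by rw [← hz1, e1], by rwa [e2] at hs⟩
    · rw [h0] at hz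
      have hz1 : q.out.2 = z := Option.some.inj hz
      have hs := dirL_loser2 ends heavy q hd h0
      rcases out_pair hq with ho | ho
      · have e1 : q.out.1 = i := congrArg Prod.fst ho
        have e2 : q.out.2 = j := congrArg Prod.snd ho
        exact Or.inr ⟨by rw [← hz1, e2], by rwa [e1] at hs⟩
      · have e1 : q.out.1 = j := congrArg Prod.fst ho
        have e2 : q.out.2 = i := congrArg Prod.snd ho
        exact Or.inl ⟨by rw [← hz1, e2], by rwa [e1] at hs⟩
  rw [util_bundle_restrict ends heavy hno hij, util_pair ends heavy hw hij j]
  have hcjT := cnt_v ends heavy hd true hjq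
  have hcjF := cnt_v ends heavy hd false hjq
  have hciT := cnt_v ends heavy hd true hiq
  have hciF := cnt_v ends heavy hd false hiq
  set HT := (Ecls ends heavy q true).card with hHT
  set LT := (Ecls ends heavy q false).card with hLT
  have hbase := util_own_base ends heavy hno hw hβ hαβ hij (i := i) (j := j)
  rw [hciT, hciF] at hbase
  rw [hcjT, hcjF]
  rcases Nat.mod_two_eq_zero_or_one HT with hpT | hpT
  · -- heavy part even
    rw [if_neg (by rintro ⟨h1, -⟩; omega)] at hbase ⊢
    rcases Nat.mod_two_eq_zero_or_one LT with hpL | hpL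
    · rw [if_neg (by rintro ⟨h1, -⟩; omega)] at hbase ⊢
      push_cast at hbase ⊢
      linarith
    · have hlt : ltgt ends heavy q false = dirL ends heavy q :=
        ltgt_light_even ends heavy hpT
      cases hdl : dirL ends heavy q with
      | none =>
        rw [if_neg (by rintro ⟨-, hc⟩; rw [hlt, hdl] at hc; cases hc)] at hbase ⊢
        push_cast at hbase ⊢
        linarith
      | some z =>
        rcases hkey z hdl with ⟨hzi, hsj⟩ | ⟨hzj, hsi⟩
        · -- light leftover to i
          rw [hzi] at hdl
          rw [if_neg (by
            rintro ⟨-, hc⟩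
            rw [hlt, hdl] at hc
            exact hij (Option.some.inj hc))]
          rw [if_pos ⟨hpL, by rw [hlt, hdl]⟩] at hbase
          push_cast at hbase ⊢
          linarith
        · -- light leftover to j
          rw [hzj] at hdl
          obtain ⟨e', he1, he2⟩ := secured_sound ends heavy hcon hnt hsi
          have hbonus := util_own_bonus ends heavy hno hw hβ hαβ hij
            (show cls ends e' ≠ s(i,j) from hq ▸ he1) he2
          rw [hciT, hciF] at hbonus
          rw [if_neg (by rintro ⟨h1, -⟩; omega),
            if_neg (by
              rintro ⟨-, hc⟩
              rw [hlt, hdl] at hc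
              exact hij (Option.some.inj hc).symm)] at hbonus
          rw [if_pos ⟨hpL, by rw [hlt, hdl]⟩]
          have hwb := w_ge_beta (hw := hw) (hαβ := hαβ) (e := e')
          push_cast at hbonus ⊢
          linarith
  · -- heavy part odd
    have hpos : 1 ≤ hcard ends heavy q := by
      show 1 ≤ HT
      omega
    have hoddh : hcard ends heavy q % 2 = 1 := hpT
    rcases dirH_mem_pair ends heavy hno hij (show 1 ≤ hcard ends heavy s(i,j) from hpos)
      with hdir | hdir
    · -- heavy leftover to i
      have hdir' : dirH ends heavy q = i := hdir
      rw [if_neg (by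
          rintro ⟨-, hc⟩
          rw [ltgt_heavy, hdir'] at hc
          exact hij (Option.some.inj hc))]
      rw [if_pos ⟨hpT, by rw [ltgt_heavy, hdir']⟩] at hbase
      rcases Nat.mod_two_eq_zero_or_one LT with hpL | hpL
      · rw [if_neg (by rintro ⟨h1, -⟩; omega)] at hbase ⊢
        push_cast at hbase ⊢
        nlinarith
      · have hlo : ltgt ends heavy q false = some (oppH ends heavy q) :=
          ltgt_light_odd ends heavy hoddh
        have hoppij : oppH ends heavy q = i ∨ oppH ends heavy q = j :=
          mem_pair_of_out hq (oppH_mem_out ends heavy q)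
        have hoppne : oppH ends heavy q ≠ dirH ends heavy q := oppH_ne ends heavy q hd
        have hopp : oppH ends heavy q = j := by
          rcases hoppij with h | h
          · exact absurd (h.trans hdir'.symm) hoppne
          · exact h
        rw [if_pos ⟨hpL, by rw [hlo, hopp]⟩]
        rw [if_neg (by
          rintro ⟨-, hc⟩
          rw [hlo, hopp] at hc
          exact hij (Option.some.inj hc).symm)] at hbase
        push_cast at hbase ⊢
        nlinarith
    · -- heavy leftover to j
      have hdir' : dirH ends heavy q = j := hdir
      have hBi : Bv ends heavy i := Bv_of_hcard ends heavy hd hpos hiq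
      obtain ⟨e', he1, he2, he3⟩ := covH ends heavy hno hBi hd hoddh
        (by rw [hdir']; exact Ne.symm hij)
      have hbonus := util_own_bonus ends heavy hno hw hβ hαβ hij
        (show cls ends e' ≠ s(i,j) from hq ▸ he1) he3
      rw [hciT, hciF] at hbonus
      have hwa : w e' = α := by rw [hw e', he2, if_pos rfl]
      rw [if_pos ⟨hpT, by rw [ltgt_heavy, hdir']⟩]
      rw [if_neg (by
          rintro ⟨-, hc⟩
          rw [ltgt_heavy, hdir'] at hc
          exact hij (Option.some.inj hc).symm)] at hbonus
      rcases Nat.mod_two_eq_zero_or_one LT with hpL | hpL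
      · rw [if_neg (by rintro ⟨h1, -⟩; omega)] at hbonus ⊢
        push_cast at hbonus ⊢
        nlinarith
      · have hlo : ltgt ends heavy q false = some (oppH ends heavy q) :=
          ltgt_light_odd ends heavy hoddh
        have hoppij : oppH ends heavy q = i ∨ oppH ends heavy q = j :=
          mem_pair_of_out hq (oppH_mem_out ends heavy q)
        have hoppne : oppH ends heavy q ≠ dirH ends heavy q := oppH_ne ends heavy q hd
        have hopp : oppH ends heavy q = i := by
          rcases hoppij with h | h
          · exact h
          · exact absurd (h.trans hdir'.symm) hoppne
        rw [if_neg (by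
          rintro ⟨-, hc⟩
          rw [hlo, hopp] at hc
          exact hij (Option.some.inj hc))]
        rw [if_pos ⟨hpL, by rw [hlo, hopp]⟩] at hbonus
        push_cast at hbonus ⊢
        nlinarith

end Util

/-! ### Unoriented edges -/

lemma assign_none_char {e : E} (h : assign ends heavy e = none) :
    (ends e).1 ≠ (ends e).2 ∧ heavy e = false ∧
    hcard ends heavy (cls ends e) % 2 = 0 ∧
    lcard ends heavy (cls ends e) % 2 = 1 ∧
    dirL ends heavy (cls ends e) = none ∧
    eidx (Ecls ends heavy (cls ends e) false) e
      = (Ecls ends heavy (cls ends e) false).card - 1 := by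
  by_cases hl : (ends e).1 = (ends e).2
  · rw [assign_loop ends heavy hl] at h; cases h
  rw [assign, if_neg hl] at h
  by_cases h1 : (eidx (Ecls ends heavy (cls ends e) (heavy e)) e % 2 = 0 ∧
      ¬((Ecls ends heavy (cls ends e) (heavy e)).card % 2 = 1 ∧
        eidx (Ecls ends heavy (cls ends e) (heavy e)) e =
          (Ecls ends heavy (cls ends e) (heavy e)).card - 1))
  · rw [if_pos h1] at h; cases h
  rw [if_neg h1] at h
  by_cases h2 : (eidx (Ecls ends heavy (cls ends e) (heavy e)) e % 2 = 1 ∧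
      ¬((Ecls ends heavy (cls ends e) (heavy e)).card % 2 = 1 ∧
        eidx (Ecls ends heavy (cls ends e) (heavy e)) e =
          (Ecls ends heavy (cls ends e) (heavy e)).card - 1))
  · rw [if_pos h2] at h; cases h
  rw [if_neg h2] at h
  have hPL : (Ecls ends heavy (cls ends e) (heavy e)).card % 2 = 1 ∧
      eidx (Ecls ends heavy (cls ends e) (heavy e)) e
        = (Ecls ends heavy (cls ends e) (heavy e)).card - 1 := by
    rcases Nat.mod_two_eq_zero_or_one (eidx (Ecls ends heavy (cls ends e) (heavy e)) e)
      with h0 | h0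
    · by_contra hc; exact h1 ⟨h0, hc⟩
    · by_contra hc; exact h2 ⟨h0, hc⟩
  by_cases hh : heavy e = true
  · rw [hh] at h
    rw [ltgt_heavy] at h
    cases h
  · rw [Bool.not_eq_true] at hh
    rw [hh] at h hPL
    by_cases hp : hcard ends heavy (cls ends e) % 2 = 1
    · rw [ltgt_light_odd ends heavy hp] at h; cases h
    · rw [ltgt_light_even ends heavy (by omega)] at h
      exact ⟨hl, hh, by omega, hPL.1, h, hPL.2⟩

lemma mem_cls_of_incid {e : E} {i : V} (hi : incid ends i e) : i ∈ cls ends e := by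
  rcases hi with h | h
  · rw [cls, ← h]; exact Sym2.mem_mk_left _ _
  · rw [cls, ← h]; exact Sym2.mem_mk_right _ _

/-- the climbing contradiction: an unreceiving, unsecured chain cannot reach
the seeds. -/
lemma climb (hno : ∀ t : V, ¬ oddMultitreeAt ends heavy t)
    (hcon : ∀ a b : V, reach ends (fun _ => true) a b)
    (hnt : ∃ a b : V, a ≠ b ∧ reach ends heavy a b) :
    ∀ n v (Y : Sym2 V), rnkG ends heavy v = n → ¬ Bv ends heavy v →
      ¬ rfp ends heavy v → Y ≠ PG ends heavy v →
      (∀ C, recv0 ends heavy v C → C = Y) → False := by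
  intro n
  induction n using Nat.strong_induction_on with
  | _ n ih =>
    intro v Y hrk hv hrfp hY hrecv
    obtain ⟨hRg, hrnk⟩ := parG_spec ends heavy hcon hnt hv
    have hnd : ¬ (PG ends heavy v).IsDiag :=
      fun hdg => hRg.1 (Sym2.mk_isDiag_iff.1 hdg)
    have hvP : v ∈ PG ends heavy v := Sym2.mem_mk_right _ _
    have hh0 : hcard ends heavy (PG ends heavy v) = 0 := by
      by_contra hc
      exact hv (Bv_of_hcard ends heavy hnd (Nat.pos_of_ne_zero hc) hvP)
    have hl1 : 1 ≤ lcard ends heavy (PG ends heavy v) := by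
      obtain ⟨hne, e, hecls⟩ := hRg
      by_cases hh : heavy e = true
      · exfalso
        have : 1 ≤ hcard ends heavy (PG ends heavy v) :=
          Finset.card_pos.2 ⟨e, (mem_Ecls ends heavy).2 ⟨hecls, hh⟩⟩
        omega
      · rw [Bool.not_eq_true] at hh
        exact Finset.card_pos.2 ⟨e, (mem_Ecls ends heavy).2 ⟨hecls, hh⟩⟩
    have hrecvP : ¬ recv0 ends heavy v (PG ends heavy v) := by
      intro hr
      exact hY (hrecv _ hr).symm
    have hlodd : lcard ends heavy (PG ends heavy v) % 2 = 1 := by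
      by_contra hc
      exact hrecvP (Or.inr (Or.inl ⟨hvP, hnd, by omega⟩))
    rw [rfp_unfold ends heavy hcon hnt hv] at hrfp
    push_neg at hrfp
    obtain ⟨-, hrfp2⟩ := hrfp
    obtain ⟨hns1, hns2⟩ := hrfp2 hh0 hlodd
    have hpB : ¬ Bv ends heavy (parG ends heavy v) := by
      intro hB
      obtain ⟨qq, hq1, hq2⟩ := BvRecv ends heavy hno hB
      have hqq : qq = PG ends heavy v := by
        by_contra hne
        exact hns1 qq hne hq1
      rw [hqq] at hq2; omega
    have hPGne := PG_ne_parent ends heavy hcon hnt hv hpB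
    have hnrfp : ¬ rfp ends heavy (parG ends heavy v) := by
      intro hr
      exact hns2 hpB hPGne hr
    have hrecvp : ∀ C, recv0 ends heavy (parG ends heavy v) C → C = PG ends heavy v := by
      intro C hC
      by_contra hne
      exact hns1 C hne hC
    exact ih (rnkG ends heavy (parG ends heavy v)) (by omega)
      (parG ends heavy v) (PG ends heavy v) rfl hpB hnrfp (Ne.symm hPGne) hrecvp

lemma unoriented_matching (hno : ∀ t : V, ¬ oddMultitreeAt ends heavy t)
    (hcon : ∀ a b : V, reach ends (fun _ => true) a b)
    (hnt : ∃ a b : V, a ≠ b ∧ reach ends heavy a b) {e e' : E}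
    (h : assign ends heavy e = none) (h' : assign ends heavy e' = none)
    (hne : e ≠ e') (i : V) (hi : incid ends i e) (hi' : incid ends i e') : False := by
  obtain ⟨hl, hh, hpH, hpL, hdl, hidx⟩ := assign_none_char ends heavy h
  obtain ⟨hl', hh', hpH', hpL', hdl', hidx'⟩ := assign_none_char ends heavy h'
  by_cases hqq : cls ends e = cls ends e'
  · -- same class: two leftovers impossible
    have he1 : e ∈ Ecls ends heavy (cls ends e) false :=
      (mem_Ecls ends heavy).2 ⟨rfl, hh⟩
    have he2 : e' ∈ Ecls ends heavy (cls ends e) false :=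
      (mem_Ecls ends heavy).2 ⟨hqq.symm, hh'⟩
    apply hne
    apply eidx_injOn he1 he2
    have hidx'2 : eidx (Ecls ends heavy (cls ends e) false) e'
        = (Ecls ends heavy (cls ends e) false).card - 1 := by
      rw [hqq]; exact hidx'
    rw [hidx, hidx'2]
  · -- different classes at i
    have hiq : i ∈ cls ends e := mem_cls_of_incid ends hi
    have hiq' : i ∈ cls ends e' := mem_cls_of_incid ends hi'
    have hnsec : ¬ secured ends heavy i (cls ends e) := by
      obtain ⟨hs1, hs2⟩ := dirL_none ends heavy _ hdl
      rcases mem_out hiq with hio | hio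
      · rw [hio]; exact hs1
      · rw [hio]; exact hs2
    have hnsec' : ¬ secured ends heavy i (cls ends e') := by
      obtain ⟨hs1, hs2⟩ := dirL_none ends heavy _ hdl'
      rcases mem_out hiq' with hio | hio
      · rw [hio]; exact hs1
      · rw [hio]; exact hs2
    rw [secured] at hnsec hnsec'
    push_neg at hnsec hnsec'
    obtain ⟨hn1, hn2⟩ := hnsec
    obtain ⟨hn1', hn2'⟩ := hnsec'
    have hnorecv : ∀ C, ¬ recv0 ends heavy i C := by
      intro C hC
      have h1 : C = cls ends e := by
        by_contra hc; exact hn1 C hc hC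
      have h2 : C = cls ends e' := by
        by_contra hc; exact hn1' C hc hC
      exact hqq (h1 ▸ h2)
    have hBi : ¬ Bv ends heavy i := by
      intro hB
      obtain ⟨qq, hq1, -⟩ := BvRecv ends heavy hno hB
      exact hnorecv qq hq1
    have hnrfp : ¬ rfp ends heavy i := by
      intro hr
      have hc1 := hn2 hBi
      have hc2 := hn2' hBi
      by_cases hP1 : PG ends heavy i = cls ends e
      · by_cases hP2 : PG ends heavy i = cls ends e'
        · exact hqq (hP1.symm.trans hP2)
        · exact hc2 hP2 hr
      · exact hc1 hP1 hr
    by_cases hYq : cls ends e = PG ends heavy i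
    · refine climb ends heavy hno hcon hnt (rnkG ends heavy i) i (cls ends e') rfl hBi
        hnrfp ?_ (fun C hC => absurd hC (hnorecv C))
      intro hc
      exact hqq (hYq.trans hc.symm)
    · exact climb ends heavy hno hcon hnt (rnkG ends heavy i) i (cls ends e) rfl hBi
        hnrfp hYq (fun C hC => absurd hC (hnorecv C))

lemma edgesBetween_comm (i j : V) : edgesBetween ends i j = edgesBetween ends j i := by
  ext e; simp only [edgesBetween, Finset.mem_filter, Finset.mem_univ, true_and]; tauto

section PEF
variable {α β : ℝ} {w : E → ℝ}

lemma pef (hno : ∀ t : V, ¬ oddMultitreeAt ends heavy t)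
    (hw : ∀ e, w e = if heavy e then α else β) {e : E}
    (h : assign ends heavy e = none) :
    (util ends w (ends e).1 (bundleP (assign ends heavy) (ends e).1
        ∩ edgesBetween ends (ends e).1 (ends e).2)
      = util ends w (ends e).1 (bundleP (assign ends heavy) (ends e).2
        ∩ edgesBetween ends (ends e).1 (ends e).2)) ∧
    (util ends w (ends e).2 (bundleP (assign ends heavy) (ends e).1
        ∩ edgesBetween ends (ends e).1 (ends e).2)
      = util ends w (ends e).2 (bundleP (assign ends heavy) (ends e).2
        ∩ edgesBetween ends (ends e).1 (ends e).2)) := by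
  obtain ⟨hl, hh, hpH, hpL, hdl, -⟩ := assign_none_char ends heavy h
  set i := (ends e).1 with hi
  set j := (ends e).2 with hj
  have hij : i ≠ j := hl
  have hq : cls ends e = s(i,j) := rfl
  have hd : ¬ (s(i,j) : Sym2 V).IsDiag := fun hdg => hij (Sym2.mk_isDiag_iff.1 hdg)
  have hcnt : ∀ z, z ∈ (s(i,j) : Sym2 V) →
      ((Ecls ends heavy s(i,j) true).filter
        (fun e' => assign ends heavy e' = some z)).card
        = (Ecls ends heavy s(i,j) true).card / 2 ∧
      ((Ecls ends heavy s(i,j) false).filter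
        (fun e' => assign ends heavy e' = some z)).card
        = (Ecls ends heavy s(i,j) false).card / 2 := by
    intro z hz
    have hpH' : (Ecls ends heavy s(i,j) true).card % 2 = 0 := hpH
    have hdl' : dirL ends heavy s(i,j) = none := hdl
    constructor
    · rw [cnt_v ends heavy hd true hz, if_neg (by rintro ⟨h1, -⟩; omega)]
      omega
    · rw [cnt_v ends heavy hd false hz,
        if_neg (by
          rintro ⟨-, hc⟩
          rw [ltgt_light_even ends heavy (q := s(i,j)) hpH, hdl'] at hc
          cases hc)]
      omega
  have hizm : i ∈ (s(i,j) : Sym2 V) := Sym2.mem_mk_left _ _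
  have hjzm : j ∈ (s(i,j) : Sym2 V) := Sym2.mem_mk_right _ _
  constructor
  · rw [util_pair ends heavy hw hij i, util_pair ends heavy hw hij j,
      (hcnt i hizm).1, (hcnt i hizm).2, (hcnt j hjzm).1, (hcnt j hjzm).2]
  · have hswap : (s(j,i) : Sym2 V) = s(i,j) := Sym2.eq_swap
    have h1 := util_pair ends heavy hw (Ne.symm hij) (i := j) (j := i) i
    have h2 := util_pair ends heavy hw (Ne.symm hij) (i := j) (j := i) j
    rw [edgesBetween_comm ends j i, hswap] at h1 h2
    rw [h1, h2, (hcnt i hizm).1, (hcnt i hizm).2, (hcnt j hjzm).1, (hcnt j hjzm).2]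

end PEF
end Graph
end S12


/-- let `G` be a connected bi-valued symmetric multigraph with at
least one non-trivial heavy component and no heavy component whose heavy edges
induce a non-trivial odd multitree. Then there is a partial envy-free
orientation of `G` orienting all heavy edges, whose unoriented edges form a
matching, and which is privately envy-free between the endvertices of every
unoriented edge. -/
theorem stmt12 {V E : Type*} [Fintype E] [DecidableEq V] [DecidableEq E]
    (ends : E → V × V) (heavy : E → Bool) (α β : ℝ) (hβ : 0 ≤ β) (hαβ : β < α)
    (w : E → ℝ) (hw : ∀ e, w e = if heavy e then α else β)
    -- G is connected:
    (hGconn : ∀ a b : V, reach ends (fun _ => true) a b)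
    -- G contains a non-trivial heavy component:
    (hnontriv : ∃ a b : V, a ≠ b ∧ reach ends heavy a b)
    -- no heavy component of G induces a non-trivial odd multitree:
    (hnotree : ∀ v : V, ¬ oddMultitreeAt ends heavy v) :
    ∃ πG : E → Option V,
      -- πG is a partial orientation:
      (∀ e v, πG e = some v → v = (ends e).1 ∨ v = (ends e).2) ∧
      -- πG is envy-free:
      (∀ i j : V, util ends w i (bundleP πG j) ≤ util ends w i (bundleP πG i)) ∧
      -- all heavy edges are oriented:
      (∀ e, heavy e = true → πG e ≠ none) ∧
      -- the unoriented edges form a matching: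
      (∀ e, πG e = none → (ends e).1 ≠ (ends e).2) ∧
      (∀ e e', πG e = none → πG e' = none → e ≠ e' →
        ∀ i : V, incid ends i e → ¬ incid ends i e') ∧
      -- πG is PEF between the endvertices of every unoriented edge:
      (∀ e, πG e = none →
        (util ends w (ends e).1 (bundleP πG (ends e).1 ∩ edgesBetween ends (ends e).1 (ends e).2)
          = util ends w (ends e).1 (bundleP πG (ends e).2 ∩ edgesBetween ends (ends e).1 (ends e).2)) ∧
        (util ends w (ends e).2 (bundleP πG (ends e).1 ∩ edgesBetween ends (ends e).1 (ends e).2)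
          = util ends w (ends e).2 (bundleP πG (ends e).2 ∩ edgesBetween ends (ends e).1 (ends e).2))) := by
  letI : LinearOrder E := LinearOrder.lift' (Fintype.equivFin E) (Fintype.equivFin E).injective
  refine ⟨S12.assign ends heavy, ?_, ?_, ?_, ?_, ?_, ?_⟩
  · exact fun e v h => S12.assign_endpoint ends heavy hnotree e v h
  · exact fun i j => S12.no_envy ends heavy hnotree hGconn hnontriv hw hβ hαβ i j
  · intro e hh hc
    have := (S12.assign_none_char ends heavy hc).2.1
    rw [hh] at this
    cases this
  · intro e hc
    exact (S12.assign_none_char ends heavy hc).1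
  · intro e e' hc hc' hne i hi hi'
    exact S12.unoriented_matching ends heavy hnotree hGconn hnontriv hc hc' hne i hi hi'
  · intro e hc
    exact S12.pef ends heavy hnotree hw hc
end
end

section
/- Let K be a multigraph that is connected via heavy edges, has at least two vertices, and whose heavy edges contain a spanning tree T. If T is rooted at a vertex v and every tree edge is oriented away from the root, and additionally one extra heavy edge (a heavy self-loop at v, or a heavy non-tree edge oriented toward v) is oriented toward v, then every vertex of K receives exactly one heavy edge under this partial orientation, and the partial orientation is envy-free with respect to the oriented edges. -/
/-- The simple graph whose adjacency is given by a set `T` of edges. -/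
def edgeSetGraph {V E : Type*} (ends : E → V × V) (T : Finset E) : SimpleGraph V where
  Adj a b := a ≠ b ∧ ∃ e ∈ T, ends e = (a, b) ∨ ends e = (b, a)
  symm := by
    constructor
    rintro a b ⟨hab, e, he, h⟩
    exact ⟨hab.symm, e, he, h.symm⟩
  loopless := by constructor; rintro a ⟨ha, -⟩; exact ha rfl

/-- let `K` be a multigraph on at least two vertices, connected
via heavy edges, whose heavy edges contain a spanning tree `T`. If every tree
edge is oriented away from a root `v` (i.e. toward the endpoint farther from
`v` in the tree), and one extra heavy edge (a heavy self-loop at `v` or a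
heavy non-tree edge) is oriented toward `v`, then every vertex receives
exactly one heavy edge, and the partial orientation is envy-free. -/
theorem stmt17 {V E : Type*} [Fintype E] [Fintype V] [Nontrivial V]
    [DecidableEq V] [DecidableEq E]
    (ends : E → V × V) (heavy : E → Bool) (α : ℝ) (hα : 0 < α)
    (w : E → ℝ) (hwh : ∀ e, heavy e = true → w e = α) (hwnn : ∀ e, 0 ≤ w e)
    -- K is connected via heavy edges:
    (hconn : ∀ a b : V, heavyReach ends heavy a b)
    -- T is a spanning tree of heavy edges:
    (T : Finset E) (hTheavy : ∀ e ∈ T, heavy e = true)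
    (hTtree : (edgeSetGraph ends T).IsTree)
    (hTsimple : ∀ e ∈ T, ∀ e' ∈ T, samePair ends e e' → e = e')
    (hTnoloop : ∀ e ∈ T, (ends e).1 ≠ (ends e).2)
    -- the root and the partial orientation:
    (v : V) (π : E → Option V)
    -- every tree edge is oriented away from the root:
    (htree : ∀ e ∈ T,
      (π e = some (ends e).2 ∧
        (edgeSetGraph ends T).dist v (ends e).2 = (edgeSetGraph ends T).dist v (ends e).1 + 1) ∨
      (π e = some (ends e).1 ∧
        (edgeSetGraph ends T).dist v (ends e).1 = (edgeSetGraph ends T).dist v (ends e).2 + 1))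
    -- one extra heavy edge incident with the root (a self-loop at `v` or a
    -- non-tree edge) is oriented toward the root:
    (e₀ : E) (he₀ : heavy e₀ = true) (he₀T : e₀ ∉ T)
    (he₀v : (ends e₀).1 = v ∨ (ends e₀).2 = v) (he₀π : π e₀ = some v)
    -- no other edge is oriented:
    (hother : ∀ e, e ∉ T → e ≠ e₀ → π e = none) :
    (∀ u : V,
      (Finset.univ.filter (fun e => π e = some u ∧ heavy e = true)).card = 1) ∧
    (∀ i j : V, util ends w i (bundleP π j) ≤ util ends w i (bundleP π i)) := by
  classical
  set G := edgeSetGraph ends T with hGdef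
  have hconnG : G.Connected := hTtree.isConnected
  -- every tree edge is oriented to an endpoint ≠ v
  have hTarget : ∀ e ∈ T, ∃ t, π e = some t ∧ t ≠ v ∧
      ((ends e).1 = t ∨ (ends e).2 = t) := by
    intro e he
    rcases htree e he with ⟨hπ, hd⟩ | ⟨hπ, hd⟩
    · refine ⟨(ends e).2, hπ, ?_, Or.inr rfl⟩
      intro hv; rw [hv, SimpleGraph.dist_self] at hd; omega
    · refine ⟨(ends e).1, hπ, ?_, Or.inl rfl⟩
      intro hv; rw [hv, SimpleGraph.dist_self] at hd; omega
  -- any oriented edge is heavy and incident with its receiver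
  have hkey : ∀ e (u : V), π e = some u → heavy e = true ∧
      ((ends e).1 = u ∨ (ends e).2 = u) := by
    intro e u hπ
    by_cases he : e ∈ T
    · obtain ⟨t, hπ', -, hend⟩ := hTarget e he
      rw [hπ] at hπ'
      exact ⟨hTheavy e he, (Option.some_injective _ hπ') ▸ hend⟩
    · by_cases he0 : e = e₀
      · subst he0
        rw [he₀π] at hπ
        exact ⟨he₀, (Option.some_injective _ hπ) ▸ he₀v⟩
      · rw [hother e he he0] at hπ; exact absurd hπ (by simp)
  -- existence: every u ≠ v receives a tree edge
  have hexists : ∀ u : V, u ≠ v → ∃ e ∈ T, π e = some u := by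
    intro u hu
    obtain ⟨p, hp⟩ := (hconnG u v).exists_walk_length_eq_dist
    have hdpos : 0 < G.dist u v :=
      (hconnG u v).pos_dist_of_ne hu
    cases p with
    | nil => simp at hp; rw [SimpleGraph.dist_self] at hdpos; omega
    | cons h q =>
      rename_i x
      -- h : G.Adj u x, q : G.Walk x v
      have hq : q.length + 1 = G.dist u v := by
        simpa [Nat.add_comm] using hp
      have hdx : G.dist v x ≤ q.length := by
        have := G.dist_le q.reverse
        simpa [SimpleGraph.Walk.length_reverse] using this
      obtain ⟨r, hr⟩ := (hconnG v x).exists_walk_length_eq_dist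
      have hdu : G.dist v u ≤ G.dist v x + 1 := by
        have := G.dist_le (r.concat h.symm)
        simpa [SimpleGraph.Walk.length_concat, hr] using this
      have hvu : G.dist v u = G.dist u v := SimpleGraph.dist_comm
      have hxu : G.dist v u = G.dist v x + 1 := by omega
      obtain ⟨-, e, he, hends⟩ := h
      refine ⟨e, he, ?_⟩
      rcases htree e he with ⟨hπ, hd⟩ | ⟨hπ, hd⟩ <;>
        rcases hends with h1 | h1 <;> rw [h1] at hπ hd <;> simp at hπ hd ⊢ <;>
        first
          | exact hπ
          | (exfalso; omega)
  -- |T| = |V| - 1 via the bijection with the edge set of G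
  have hfin : Fintype G.edgeSet := Fintype.ofFinite _
  have hcardE : G.edgeFinset.card + 1 = Fintype.card V := hTtree.card_edgeFinset
  have hcardT : T.card = G.edgeFinset.card := by
    refine Finset.card_bij (fun e _ => Sym2.mk (ends e).1 (ends e).2) ?_ ?_ ?_
    · intro e he
      rw [SimpleGraph.mem_edgeFinset]
      have : G.Adj (ends e).1 (ends e).2 :=
        ⟨hTnoloop e he, e, he, Or.inl (Prod.ext rfl rfl)⟩
      simpa using this
    · intro e he e' he' hmk
      exact hTsimple e he e' he' (Sym2.mk_eq_mk_iff.mp hmk)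
    · intro b hb
      rw [SimpleGraph.mem_edgeFinset] at hb
      induction b with
      | _ a c =>
        obtain ⟨-, e, he, hends⟩ := hb
        refine ⟨e, he, ?_⟩
        show Sym2.mk (ends e).1 (ends e).2 = s(a, c)
        rcases hends with h1 | h1 <;> rw [h1]
        exact Sym2.eq_swap
  -- fiberwise counting
  have hfiber : ∀ e ∈ T, (π e).getD v ∈ Finset.univ.erase v := by
    intro e he
    obtain ⟨t, hπ, ht, -⟩ := hTarget e he
    rw [hπ]
    simpa using ht
  have hsum : ∑ u ∈ Finset.univ.erase v,
      (T.filter (fun e => (π e).getD v = u)).card = T.card :=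
    (Finset.card_eq_sum_card_fiberwise hfiber).symm
  have hcard_erase : (Finset.univ.erase v).card = Fintype.card V - 1 := by
    rw [Finset.card_erase_of_mem (Finset.mem_univ v), Finset.card_univ]
  have hone : ∀ u ∈ Finset.univ.erase v,
      (T.filter (fun e => (π e).getD v = u)).card = 1 := by
    have hle : ∀ u ∈ Finset.univ.erase v,
        1 ≤ (T.filter (fun e => (π e).getD v = u)).card := by
      intro u hu
      rw [Finset.mem_erase] at hu
      obtain ⟨e, he, hπ⟩ := hexists u hu.1
      rw [Nat.one_le_iff_ne_zero, ← Nat.pos_iff_ne_zero, Finset.card_pos]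
      exact ⟨e, Finset.mem_filter.mpr ⟨he, by rw [hπ]; rfl⟩⟩
    have hsum' : ∑ u ∈ Finset.univ.erase v,
        (T.filter (fun e => (π e).getD v = u)).card
        = ∑ u ∈ Finset.univ.erase v, 1 := by
      rw [hsum, Finset.sum_const, smul_eq_mul, mul_one, hcard_erase, hcardT]
      omega
    intro u hu
    exact ((Finset.sum_eq_sum_iff_of_le hle).mp hsum'.symm u hu).symm
  -- identify bundles
  have hbundle_eq : ∀ u : V,
      Finset.univ.filter (fun e => π e = some u ∧ heavy e = true)
        = bundleP π u := by
    intro u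
    ext e
    simp only [Finset.mem_filter, Finset.mem_univ, true_and, bundleP]
    exact ⟨fun h => h.1, fun h => ⟨h, (hkey e u h).1⟩⟩
  have hbundle_v : bundleP π v = {e₀} := by
    ext e
    simp only [bundleP, Finset.mem_filter, Finset.mem_univ, true_and,
      Finset.mem_singleton]
    constructor
    · intro hπ
      by_cases he : e ∈ T
      · obtain ⟨t, hπ', ht, -⟩ := hTarget e he
        rw [hπ] at hπ'
        exact absurd (Option.some_injective _ hπ').symm ht
      · by_contra he0
        rw [hother e he he0] at hπ; exact absurd hπ (by simp)
    · rintro rfl; exact he₀π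
  have hbundle_ne : ∀ u : V, u ≠ v →
      bundleP π u = T.filter (fun e => (π e).getD v = u) := by
    intro u hu
    ext e
    simp only [bundleP, Finset.mem_filter, Finset.mem_univ, true_and]
    constructor
    · intro hπ
      by_cases he : e ∈ T
      · exact ⟨he, by rw [hπ]; rfl⟩
      · by_cases he0 : e = e₀
        · subst he0; rw [he₀π] at hπ
          exact absurd (Option.some_injective _ hπ).symm hu
        · rw [hother e he he0] at hπ; exact absurd hπ (by simp)
    · rintro ⟨he, hg⟩
      obtain ⟨t, hπ, -, -⟩ := hTarget e he
      rw [hπ] at hg ⊢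
      simp at hg
      rw [hg]
  have hcard1 : ∀ u : V, (bundleP π u).card = 1 := by
    intro u
    by_cases hu : u = v
    · rw [hu, hbundle_v]; simp
    · rw [hbundle_ne u hu]
      exact hone u (by simpa using hu)
  refine ⟨fun u => by rw [hbundle_eq]; exact hcard1 u, ?_⟩
  -- envy-freeness
  have hutil_own : ∀ i : V, util ends w i (bundleP π i) = α := by
    intro i
    obtain ⟨f, hf⟩ := Finset.card_eq_one.mp (hcard1 i)
    have hfmem : f ∈ bundleP π i := hf ▸ Finset.mem_singleton_self f
    simp only [bundleP, Finset.mem_filter] at hfmem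
    obtain ⟨hheavy, hinc⟩ := hkey f i hfmem.2
    rw [hf]
    simp [util, hinc, hwh f hheavy]
  intro i j
  rw [hutil_own i]
  obtain ⟨f, hf⟩ := Finset.card_eq_one.mp (hcard1 j)
  have hfmem : f ∈ bundleP π j := hf ▸ Finset.mem_singleton_self f
  simp only [bundleP, Finset.mem_filter] at hfmem
  have hheavy := (hkey f j hfmem.2).1
  rw [hf]
  simp only [util, Finset.sum_singleton]
  split
  · rw [hwh f hheavy]
  · exact le_of_lt hα
end
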